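/- arXiv:2208.01601 — 10 statements merged into one kernel-verified Lean document; each statement's English description precedes it below -/
import Mathlib

section
/- Let q be a prime power, r a positive integer, and A(X) ∈ F_{q²}[X]. Then the polynomial f(X) = X^r · A(X^{q-1}) permutes F_{q²} if and only if gcd(r, q-1) = 1 and the function g(x) = x^r · A(x)^{q-1} permutes the group μ_{q+1} of (q+1)-th roots of unity in F_{q²}. -/
section Aux

variable {F : Type} [Field F] [Fintype F]

omit [Fintype F] in
private lemma aux_rth_root {m r : ℕ} (hgcd : Nat.gcd r m = 1) (hr : 0 < r)
    {u : F} (hu : u ^ m = 1) : ∃ v : F, v ^ m = 1 ∧ v ^ r = u := by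
  rcases Nat.lt_or_ge m 2 with hm | hm
  · interval_cases m
    · refine ⟨u, by simp, ?_⟩
      have : r = 1 := by simpa using hgcd
      simp [this]
    · refine ⟨1, by simp, by simpa using hu.symm⟩
  · obtain ⟨s, -, hs⟩ := Nat.exists_mul_mod_eq_one_of_coprime hgcd hm
    refine ⟨u ^ s, ?_, ?_⟩
    · rw [← pow_mul, mul_comm, pow_mul, hu, one_pow]
    · have hdiv : r * s = m * (r * s / m) + 1 := by
        conv_lhs => rw [← Nat.div_add_mod (r * s) m, hs]
      rw [← pow_mul, mul_comm s r, hdiv, pow_add, pow_mul, hu, one_pow, one_mul, pow_one]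

omit [Fintype F] in
private lemma aux_eq_one {m r : ℕ} (hgcd : Nat.gcd r m = 1)
    {u : F} (h1 : u ^ m = 1) (h2 : u ^ r = 1) : u = 1 := by
  have d1 : orderOf u ∣ r := orderOf_dvd_of_pow_eq_one h2
  have d2 : orderOf u ∣ m := orderOf_dvd_of_pow_eq_one h1
  have := Nat.dvd_gcd d1 d2
  rw [hgcd, Nat.dvd_one] at this
  exact orderOf_eq_one_iff.mp this

private lemma aux_mul (q : ℕ) (hq2 : 2 ≤ q) : (q - 1) * (q + 1) = q ^ 2 - 1 := by
  obtain ⟨k, rfl⟩ : ∃ k, q = 1 + k := ⟨q - 1, by omega⟩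
  have h1 : 1 + k - 1 = k := by omega
  have h2 : (1 + k) ^ 2 = k * (1 + k + 1) + 1 := by ring
  rw [h1, h2, Nat.add_sub_cancel]

private lemma aux_ord {q : ℕ} (hF : Fintype.card F = q ^ 2) {ζ : Fˣ}
    (hζ : ∀ x : Fˣ, x ∈ Subgroup.zpowers ζ) : orderOf ζ = q ^ 2 - 1 := by
  rw [orderOf_eq_card_of_forall_mem_zpowers hζ, Nat.card_units,
    Nat.card_eq_fintype_card, hF]

/-- Every `(q+1)`-th root of unity in a field of `q²` elements is a `(q-1)`-th power. -/
private lemma aux_exists_root {q : ℕ} (hq2 : 2 ≤ q) (hF : Fintype.card F = q ^ 2)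
    {x : F} (hx : x ^ (q + 1) = 1) : ∃ c : F, c ≠ 0 ∧ c ^ (q - 1) = x := by
  have hx0 : x ≠ 0 := by
    intro h; rw [h, zero_pow (Nat.succ_ne_zero q)] at hx; exact zero_ne_one hx
  obtain ⟨ζ, hζ⟩ := IsCyclic.exists_generator (α := Fˣ)
  have hord : orderOf ζ = q ^ 2 - 1 := aux_ord hF hζ
  have hmul := aux_mul q hq2
  set u : Fˣ := Units.mk0 x hx0 with hu
  obtain ⟨m, hm⟩ := mem_powers_iff_mem_zpowers.mpr (hζ u)
  have hm' : ζ ^ m = u := hm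
  have hu1 : ζ ^ (m * (q + 1)) = 1 := by
    rw [pow_mul, hm']
    ext
    push_cast
    exact hx
  have hdvd : (q - 1) * (q + 1) ∣ m * (q + 1) := by
    rw [hmul, ← hord]
    exact orderOf_dvd_of_pow_eq_one hu1
  have hdvd' : (q - 1) ∣ m :=
    (Nat.mul_dvd_mul_iff_right (Nat.succ_pos q)).mp hdvd
  refine ⟨((ζ ^ (m / (q - 1)) : Fˣ) : F), Units.ne_zero _, ?_⟩
  have h3 : ((ζ ^ (m / (q - 1)) : Fˣ) : F) ^ (q - 1)
      = ((ζ ^ (m / (q - 1) * (q - 1)) : Fˣ) : F) := by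
    push_cast [pow_mul]
    ring
  rw [h3, Nat.div_mul_cancel hdvd', hm']
  rfl

/-- Existence of a nontrivial root of unity of order dividing both `d` and `q-1`,
when `d ∣ q - 1` and `d > 1`. -/
private lemma aux_bad_elem {q d : ℕ} (hq2 : 2 ≤ q) (hF : Fintype.card F = q ^ 2)
    (hd1 : 1 < d) (hdq : d ∣ q - 1) : ∃ u : F, u ≠ 1 ∧ u ^ d = 1 ∧ u ^ (q - 1) = 1 := by
  obtain ⟨ζ, hζ⟩ := IsCyclic.exists_generator (α := Fˣ)
  have hord : orderOf ζ = q ^ 2 - 1 := aux_ord hF hζ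
  have hmul := aux_mul q hq2
  have hdq2 : d ∣ q ^ 2 - 1 := by rw [← hmul]; exact Dvd.dvd.mul_right hdq _
  have hN1 : 1 < q ^ 2 - 1 := by
    have h4 : 4 ≤ q ^ 2 := by nlinarith
    omega
  have hd0 : 0 < d := lt_trans one_pos hd1
  set k := (q ^ 2 - 1) / d with hk
  have hkd : k * d = q ^ 2 - 1 := Nat.div_mul_cancel hdq2
  have hk0 : 0 < k := Nat.div_pos (Nat.le_of_dvd (lt_trans one_pos hN1) hdq2) hd0
  have hklt : k < q ^ 2 - 1 := by
    rw [← hkd]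
    exact (Nat.lt_mul_iff_one_lt_right hk0).mpr hd1
  have hud : (ζ ^ k) ^ d = 1 := by
    rw [← pow_mul, hkd, ← hord, pow_orderOf_eq_one]
  refine ⟨((ζ ^ k : Fˣ) : F), ?_, ?_, ?_⟩
  · intro h
    have hz : ζ ^ k = 1 := Units.ext (by rw [Units.val_pow_eq_pow_val, Units.val_one]; exact h)
    have hdd := orderOf_dvd_of_pow_eq_one hz
    rw [hord] at hdd
    exact absurd (Nat.le_of_dvd hk0 hdd) (not_le.mpr hklt)
  · rw [← Units.val_pow_eq_pow_val, hud, Units.val_one]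
  · obtain ⟨e, he⟩ := hdq
    have : (ζ ^ k) ^ (q - 1) = 1 := by
      rw [← pow_mul, he, ← mul_assoc, hkd, pow_mul, ← hord, pow_orderOf_eq_one, one_pow]
    rw [← Units.val_pow_eq_pow_val, this, Units.val_one]

end Aux

/-- Lemma 1 (special case of Zieve's Lemma 1.2): `X^r A(X^{q-1})` permutes `F_{q²}`
iff `gcd(r, q-1) = 1` and `x ↦ x^r A(x)^{q-1}` permutes `μ_{q+1}`. -/
theorem stmt_0 (q : ℕ) (hq : ∃ p n : ℕ, p.Prime ∧ 0 < n ∧ q = p ^ n)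
    (F : Type) [Field F] [Fintype F] (hF : Fintype.card F = q ^ 2)
    (r : ℕ) (hr : 0 < r) (A : Polynomial F) :
    Function.Bijective (fun c : F => c ^ r * A.eval (c ^ (q - 1))) ↔
      Nat.gcd r (q - 1) = 1 ∧
        Set.BijOn (fun x : F => x ^ r * A.eval x ^ (q - 1))
          {x : F | x ^ (q + 1) = 1} {x : F | x ^ (q + 1) = 1} := by
  have hq2 : 2 ≤ q := by
    obtain ⟨p, n, hp, hn, rfl⟩ := hq
    exact le_trans hp.two_le (Nat.le_self_pow hn.ne' p)
  have hq1 : q - 1 ≠ 0 := by omega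
  have hmul := aux_mul q hq2
  set f : F → F := fun c => c ^ r * A.eval (c ^ (q - 1)) with hfdef
  set g : F → F := fun x => x ^ r * A.eval x ^ (q - 1) with hgdef
  have hpow : ∀ c : F, c ≠ 0 → c ^ (q ^ 2 - 1) = 1 := fun c hc => by
    rw [← hF]; exact FiniteField.pow_card_sub_one_eq_one c hc
  have hmu : ∀ c : F, c ≠ 0 → (c ^ (q - 1)) ^ (q + 1) = 1 := fun c hc => by
    rw [← pow_mul, hmul]; exact hpow c hc
  have key : ∀ c : F, (f c) ^ (q - 1) = g (c ^ (q - 1)) := by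
    intro c
    simp only [hfdef, hgdef, mul_pow]
    rw [← pow_mul, ← pow_mul, Nat.mul_comm r (q - 1), pow_mul]
  have hf0 : f 0 = 0 := by simp [hfdef, zero_pow hr.ne']
  constructor
  · -- forward direction
    intro hbij
    have hgcd : Nat.gcd r (q - 1) = 1 := by
      by_contra hg
      have hd1 : 1 < Nat.gcd r (q - 1) := by
        have := Nat.gcd_pos_of_pos_left (q - 1) hr
        omega
      obtain ⟨u, hu1, hud, huq⟩ := aux_bad_elem hq2 hF hd1 (Nat.gcd_dvd_right r (q - 1))
      have hur : u ^ r = 1 := by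
        obtain ⟨e, he⟩ := Nat.gcd_dvd_left r (q - 1)
        rw [he, pow_mul, hud, one_pow]
      have heq : f u = f 1 := by simp [hfdef, huq, hur]
      exact hu1 (hbij.injective heq)
    have hA : ∀ x : F, x ^ (q + 1) = 1 → A.eval x ≠ 0 := by
      intro x hx hA0
      obtain ⟨c, hc0, hcx⟩ := aux_exists_root hq2 hF hx
      have : f c = f 0 := by
        rw [hf0, hfdef]
        simp only
        rw [hcx, hA0, mul_zero]
      exact hc0 (hbij.injective this)
    have hmaps : Set.MapsTo g {x : F | x ^ (q + 1) = 1} {x : F | x ^ (q + 1) = 1} := by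
      intro x hx
      simp only [Set.mem_setOf_eq] at hx ⊢
      have hx0 : A.eval x ≠ 0 := hA x hx
      simp only [hgdef, mul_pow]
      rw [← pow_mul, Nat.mul_comm r (q + 1), pow_mul, hx, one_pow, one_mul,
        ← pow_mul, hmul, hpow _ hx0]
    have hinj : Set.InjOn g {x : F | x ^ (q + 1) = 1} := by
      intro x hx y hy hxy
      simp only [Set.mem_setOf_eq] at hx hy
      obtain ⟨c, hc0, hcx⟩ := aux_exists_root hq2 hF hx
      obtain ⟨d, hd0, hdy⟩ := aux_exists_root hq2 hF hy
      have hfd0 : f d ≠ 0 := by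
        simp only [hfdef]
        rw [hdy]
        exact mul_ne_zero (pow_ne_zero _ hd0) (hA y hy)
      have hpq : (f c) ^ (q - 1) = (f d) ^ (q - 1) := by
        rw [key, key, hcx, hdy, hxy]
      set u : F := f c * (f d)⁻¹ with hu
      have huq : u ^ (q - 1) = 1 := by
        rw [hu, mul_pow, inv_pow, hpq, mul_inv_cancel₀ (pow_ne_zero _ hfd0)]
      obtain ⟨v, hv1, hvr⟩ := aux_rth_root hgcd hr huq
      have hfvd : f (v * d) = f c := by
        have e1 : f (v * d) = (v * d) ^ r * A.eval ((v * d) ^ (q - 1)) := rfl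
        have e2 : f d = d ^ r * A.eval (d ^ (q - 1)) := rfl
        have h1 : f (v * d) = u * f d := by
          rw [e1, e2, mul_pow, mul_pow, hv1, one_mul, hvr, mul_assoc]
        rw [h1, hu, mul_assoc, inv_mul_cancel₀ hfd0, mul_one]
      have hcvd : c = v * d := (hbij.injective hfvd).symm
      rw [← hcx, ← hdy, hcvd, mul_pow, hv1, one_mul]
    refine ⟨hgcd, (Set.Finite.injOn_iff_bijOn_of_mapsTo (Set.toFinite _) hmaps).mp hinj⟩
  · -- backward direction
    rintro ⟨hgcd, hbijon⟩
    have hA : ∀ x : F, x ^ (q + 1) = 1 → A.eval x ≠ 0 := by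
      intro x hx hA0
      have hgx : g x ∈ {x : F | x ^ (q + 1) = 1} := hbijon.mapsTo hx
      simp only [hgdef, Set.mem_setOf_eq, hA0, zero_pow hq1, mul_zero,
        zero_pow (Nat.succ_ne_zero q)] at hgx
      exact zero_ne_one hgx
    have hfne : ∀ c : F, c ≠ 0 → f c ≠ 0 := by
      intro c hc
      simp only [hfdef]
      exact mul_ne_zero (pow_ne_zero _ hc) (hA _ (hmu c hc))
    have hinj : Function.Injective f := by
      intro c d hcd
      by_cases hc : c = 0
      · subst hc
        rw [hf0] at hcd
        by_contra hd
        exact hfne d (Ne.symm hd) hcd.symm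
      by_cases hd : d = 0
      · subst hd
        rw [hf0] at hcd
        exact absurd hcd (hfne c hc)
      have hxy : g (c ^ (q - 1)) = g (d ^ (q - 1)) := by
        rw [← key, ← key, hcd]
      have hcd' : c ^ (q - 1) = d ^ (q - 1) :=
        hbijon.injOn (hmu c hc) (hmu d hd) hxy
      set u : F := c * d⁻¹ with hu
      have huq : u ^ (q - 1) = 1 := by
        rw [hu, mul_pow, inv_pow, hcd', mul_inv_cancel₀ (pow_ne_zero _ hd)]
      have hcud : c = u * d := by
        rw [hu, mul_assoc, inv_mul_cancel₀ hd, mul_one]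
      have hfc : f c = u ^ r * f d := by
        have e1 : f c = c ^ r * A.eval (c ^ (q - 1)) := rfl
        have e2 : f d = d ^ r * A.eval (d ^ (q - 1)) := rfl
        have e3 : c ^ r = u ^ r * d ^ r := by rw [← mul_pow, ← hcud]
        rw [e1, e2, hcd', e3, mul_assoc]
      have hur : u ^ r = 1 := by
        have : u ^ r * f d = 1 * f d := by
          rw [one_mul, ← hfc, hcd]
        exact mul_right_cancel₀ (hfne d hd) this
      have : u = 1 := aux_eq_one hgcd huq hur
      rw [hcud, this, one_mul]
    exact (Finite.injective_iff_bijective).mp hinj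
end

section
/- Let q be a prime power, r an integer, and s, t positive integers with gcd(s+1, q) = 1 and gcd((q+1)/gcd(t, q+1), s+1) = 1. Let A(X) ∈ F_{q²}[X] and B(X) := A(X) · (1 + X^t + X^{2t} + ... + X^{st}). Then x ↦ x^r · B(x)^{q-1} permutes μ_{q+1} if and only if x ↦ x^{r - st} · A(x)^{q-1} permutes μ_{q+1}. -/
lemma key_nt (S1 T Q : ℕ) (hS1 : 0 < S1) (hT : 0 < T) (hQ : 0 < Q)
    (h2 : Nat.gcd (Q / Nat.gcd T Q) S1 = 1) : Nat.gcd (S1 * T) Q ∣ T := by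
  have hST : S1 * T ≠ 0 := by positivity
  have hg : Nat.gcd T Q ≠ 0 := Nat.gcd_ne_zero_left hT.ne'
  have hm : Q / Nat.gcd T Q ≠ 0 := by
    exact Nat.div_ne_zero_iff.mpr ⟨hg, Nat.le_of_dvd hQ (Nat.gcd_dvd_right T Q)⟩
  have hd : Nat.gcd (S1 * T) Q ≠ 0 := Nat.gcd_ne_zero_right hQ.ne'
  rw [← Nat.factorization_le_iff_dvd hd hT.ne']
  rw [Nat.factorization_gcd hST hQ.ne', Nat.factorization_mul hS1.ne' hT.ne']
  intro p
  simp only [Finsupp.inf_apply, Finsupp.coe_add, Pi.add_apply, inf_le_iff]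
  by_cases hle : Q.factorization p ≤ T.factorization p
  · right; exact hle
  · left
    push_neg at hle
    have hpS1 : S1.factorization p = 0 := by
      by_contra hne
      have hp : p.Prime := Nat.prime_of_mem_primeFactors
        (Nat.support_factorization (n := S1) ▸ Finsupp.mem_support_iff.mpr hne)
      have hpm : p ∣ Q / Nat.gcd T Q := by
        rw [hp.dvd_iff_one_le_factorization hm]
        have h1 : (Nat.gcd T Q).factorization p = T.factorization p := by
          rw [Nat.factorization_gcd hT.ne' hQ.ne']
          simp [min_eq_left hle.le]
        have hdvd : Nat.gcd T Q ∣ Q := Nat.gcd_dvd_right T Q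
        have := Nat.factorization_div hdvd
        rw [this]
        simp only [Finsupp.coe_tsub, Pi.sub_apply, h1]
        omega
      have hpS : p ∣ S1 := hp.dvd_iff_one_le_factorization hS1.ne' |>.mpr (by omega)
      have : p ∣ 1 := h2 ▸ Nat.dvd_gcd hpm hpS
      exact hp.one_lt.ne' (Nat.eq_one_of_dvd_one this)
    omega

/-- Lemma 2: with `B(X) = A(X)·(1 + X^t + ⋯ + X^{st})`, the map `x ↦ x^r B(x)^{q-1}`
permutes `μ_{q+1}` iff `x ↦ x^{r-st} A(x)^{q-1}` does. -/
theorem stmt_1 (q : ℕ) (hq : ∃ p n : ℕ, p.Prime ∧ 0 < n ∧ q = p ^ n)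
    (F : Type) [Field F] [Fintype F] (hF : Fintype.card F = q ^ 2)
    (r : ℤ) (s t : ℕ) (hs : 0 < s) (ht : 0 < t)
    (h1 : Nat.gcd (s + 1) q = 1)
    (h2 : Nat.gcd ((q + 1) / Nat.gcd t (q + 1)) (s + 1) = 1)
    (A B : Polynomial F)
    (hB : B = A * ∑ j ∈ Finset.range (s + 1), Polynomial.X ^ (j * t)) :
    Set.BijOn (fun x : F => x ^ r * B.eval x ^ (q - 1))
        {x : F | x ^ (q + 1) = 1} {x : F | x ^ (q + 1) = 1} ↔
      Set.BijOn (fun x : F => x ^ (r - (s * t : ℕ)) * A.eval x ^ (q - 1))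
        {x : F | x ^ (q + 1) = 1} {x : F | x ^ (q + 1) = 1} := by
  obtain ⟨p, n, hp, hn, hqpn⟩ := hq
  haveI := Fact.mk hp
  have hq1 : 1 ≤ q := by rw [hqpn]; exact Nat.one_le_pow _ _ hp.pos
  -- characteristic of F is p
  have hcard : Fintype.card F = p ^ (2 * n) := by
    rw [hF, hqpn, ← pow_mul, mul_comm]
  haveI hcp : CharP F (ringChar F) := ringChar.charP F
  have hcprime : (ringChar F).Prime := CharP.char_is_prime F (ringChar F)
  obtain ⟨m, -, hcm⟩ := FiniteField.card F (ringChar F)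
  have hpc : p = ringChar F := by
    have hdvd : p ∣ (ringChar F) ^ (m : ℕ) := by
      rw [← hcm, hcard]; exact dvd_pow_self p (by omega)
    exact (Nat.prime_dvd_prime_iff_eq hp hcprime).mp (hp.dvd_of_dvd_pow hdvd)
  haveI hFp : CharP F p := hpc ▸ hcp
  -- the q-power map is a ring hom
  let φ := iterateFrobenius F p n
  have hφ : ∀ a : F, φ a = a ^ q := fun a => by
    rw [iterateFrobenius_def, ← hqpn]
  -- the key identity
  have key : ∀ x : F, x ^ (q + 1) = 1 →
      x ^ (s * t) * (∑ j ∈ Finset.range (s + 1), x ^ (j * t)) ^ (q - 1) = 1 := by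
    intro x hx
    set Sx := ∑ j ∈ Finset.range (s + 1), x ^ (j * t) with hSx
    have hq' : Sx ^ q = ∑ j ∈ Finset.range (s + 1), (x ^ (j * t)) ^ q := by
      rw [← hφ, hSx, map_sum]
      exact Finset.sum_congr rfl fun j _ => hφ _
    have hstep : x ^ (s * t) * Sx ^ q = Sx := by
      rw [hq', Finset.mul_sum, hSx]
      conv_rhs => rw [← Finset.sum_range_reflect]
      refine Finset.sum_congr rfl fun j hj => ?_
      have hjs : j ≤ s := by simpa using Nat.lt_succ_iff.mp (Finset.mem_range.mp hj)
      have h1' : x ^ (j * t) * (x ^ (j * t)) ^ q = 1 := by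
        rw [← pow_succ', ← pow_mul, mul_comm (j * t), pow_mul, hx, one_pow]
      have h2' : x ^ (s * t) = x ^ ((s - j) * t) * x ^ (j * t) := by
        rw [← pow_add, ← Nat.add_mul, Nat.sub_add_cancel hjs]
      have : s + 1 - 1 - j = s - j := by omega
      rw [this, h2', mul_assoc, h1', mul_one]
    have hSne : Sx ≠ 0 := by
      by_cases hxt : x ^ t = 1
      · have hS1 : Sx = ((s + 1 : ℕ) : F) := by
          rw [hSx]
          have : ∀ j ∈ Finset.range (s + 1), x ^ (j * t) = 1 := fun j _ => by
            rw [mul_comm, pow_mul, hxt, one_pow]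
          rw [Finset.sum_congr rfl this, Finset.sum_const, Finset.card_range, nsmul_eq_mul,
            mul_one]
        rw [hS1]
        intro h0
        have hps : p ∣ s + 1 := (CharP.cast_eq_zero_iff F p (s + 1)).mp h0
        have hpq : p ∣ q := hqpn ▸ dvd_pow_self p hn.ne'
        have : p ∣ 1 := h1 ▸ Nat.dvd_gcd hps hpq
        exact hp.one_lt.ne' (Nat.eq_one_of_dvd_one this)
      · have hgeom : Sx * (x ^ t - 1) = x ^ ((s + 1) * t) - 1 := by
          have hg := geom_sum_mul (x ^ t) (s + 1)
          have hterm : ∀ j ∈ Finset.range (s + 1), x ^ (j * t) = (x ^ t) ^ j := fun j _ => by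
            rw [mul_comm, pow_mul]
          rw [hSx, Finset.sum_congr rfl hterm, hg, ← pow_mul, mul_comm]
        have hne : x ^ ((s + 1) * t) - 1 ≠ 0 := by
          intro h0
          have hx1 : x ^ ((s + 1) * t) = 1 := by
            have := sub_eq_zero.mp h0; simpa using this
          have hd1 : orderOf x ∣ (s + 1) * t := orderOf_dvd_of_pow_eq_one hx1
          have hd2 : orderOf x ∣ q + 1 := orderOf_dvd_of_pow_eq_one hx
          have hd3 : orderOf x ∣ t :=
            dvd_trans (Nat.dvd_gcd hd1 hd2)
              (key_nt (s + 1) t (q + 1) (Nat.succ_pos s) ht (Nat.succ_pos q) h2)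
          exact hxt (orderOf_dvd_iff_pow_eq_one.mp hd3)
        intro h0
        rw [h0, zero_mul] at hgeom
        exact hne hgeom.symm
    have hfin : x ^ (s * t) * Sx ^ (q - 1) * Sx = 1 * Sx := by
      rw [mul_assoc, ← pow_succ, Nat.sub_add_cancel hq1, hstep, one_mul]
    exact mul_right_cancel₀ hSne hfin
  -- conclude by showing the two functions agree on the set
  apply Set.EqOn.bijOn_iff
  intro x hx
  simp only [Set.mem_setOf_eq] at hx
  have hx0 : x ≠ 0 := by
    intro h0
    rw [h0, zero_pow (Nat.succ_ne_zero q)] at hx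
    exact zero_ne_one hx
  have hk := key x hx
  have hevalB : B.eval x = A.eval x * ∑ j ∈ Finset.range (s + 1), x ^ (j * t) := by
    rw [hB, Polynomial.eval_mul, Polynomial.eval_finset_sum]
    simp
  have hinv : (x ^ (s * t))⁻¹ = (∑ j ∈ Finset.range (s + 1), x ^ (j * t)) ^ (q - 1) :=
    inv_eq_of_mul_eq_one_right hk
  show x ^ r * B.eval x ^ (q - 1) = x ^ (r - (s * t : ℕ)) * A.eval x ^ (q - 1)
  rw [hevalB, mul_pow, zpow_sub₀ hx0, zpow_natCast, div_eq_mul_inv, hinv]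
  ring
end

section
/- Let q be a prime power, r an integer, s and t positive integers such that gcd(s+1, q) = 1 and gcd((q+1)/gcd(t, q+1), s+1) = 1. If x ↦ x^{r-st} · A(x)^{q-1} permutes μ_{q+1}, where A ∈ F_{q²}[X], then x ↦ x^r · (A(x) · ∑_{j=0}^{s} x^{jt})^{q-1} permutes μ_{q+1}. -/
lemma nt_gcd (t s Q : ℕ) (hQ : 0 < Q)
    (h : Nat.gcd (Q / Nat.gcd t Q) (s + 1) = 1) :
    Nat.gcd (t * (s + 1)) Q = Nat.gcd t Q := by
  set d := Nat.gcd t Q with hd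
  set m := Nat.gcd (t * (s + 1)) Q with hm
  have hd0 : 0 < d := Nat.gcd_pos_of_pos_right _ hQ
  have hdm : d ∣ m :=
    Nat.dvd_gcd ((Nat.gcd_dvd_left t Q).mul_right _) (Nat.gcd_dvd_right t Q)
  have hmQ : m ∣ Q := Nat.gcd_dvd_right _ _
  have hmts : m ∣ t * (s + 1) := Nat.gcd_dvd_left _ _
  have hsplit : m ∣ Nat.gcd m t * Nat.gcd m (s + 1) :=
    Nat.dvd_gcd_mul_gcd_iff_dvd_mul.mpr hmts
  have hgmt : Nat.gcd m t = d := by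
    apply Nat.dvd_antisymm
    · exact Nat.dvd_gcd (Nat.gcd_dvd_right m t) ((Nat.gcd_dvd_left m t).trans hmQ)
    · exact Nat.dvd_gcd hdm (Nat.gcd_dvd_left t Q)
  rw [hgmt] at hsplit
  obtain ⟨k, hk⟩ := hdm
  have hkg : k ∣ Nat.gcd m (s + 1) := by
    have : d * k ∣ d * Nat.gcd m (s + 1) := hk ▸ hsplit
    exact (Nat.mul_dvd_mul_iff_left hd0).mp this
  have hks : k ∣ s + 1 := hkg.trans (Nat.gcd_dvd_right _ _)
  have hkQd : k ∣ Q / d := by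
    have h1 : d * k ∣ d * (Q / d) := by
      rw [Nat.mul_div_cancel' (Nat.gcd_dvd_right t Q)]
      exact hk ▸ hmQ
    exact (Nat.mul_dvd_mul_iff_left hd0).mp h1
  have hk1 : k = 1 := Nat.dvd_one.mp (h ▸ Nat.dvd_gcd hkQd hks)
  rw [hk, hk1, Nat.mul_one]

/-- One direction of Lemma 2: if `x ↦ x^{r-st} A(x)^{q-1}` permutes `μ_{q+1}` then so does
`x ↦ x^r (A(x)·∑_{j=0}^{s} x^{jt})^{q-1}`. -/
theorem stmt_2 (q : ℕ) (hq : ∃ p n : ℕ, p.Prime ∧ 0 < n ∧ q = p ^ n)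
    (F : Type) [Field F] [Fintype F] (hF : Fintype.card F = q ^ 2)
    (r : ℤ) (s t : ℕ) (hs : 0 < s) (ht : 0 < t)
    (h1 : Nat.gcd (s + 1) q = 1)
    (h2 : Nat.gcd ((q + 1) / Nat.gcd t (q + 1)) (s + 1) = 1)
    (A : Polynomial F)
    (hA : Set.BijOn (fun x : F => x ^ (r - (s * t : ℕ)) * A.eval x ^ (q - 1))
      {x : F | x ^ (q + 1) = 1} {x : F | x ^ (q + 1) = 1}) :
    Set.BijOn
      (fun x : F => x ^ r * (A.eval x * ∑ j ∈ Finset.range (s + 1), x ^ (j * t)) ^ (q - 1))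
      {x : F | x ^ (q + 1) = 1} {x : F | x ^ (q + 1) = 1} := by
  obtain ⟨p, n, hp, hn, hqpn⟩ := hq
  haveI : Fact p.Prime := ⟨hp⟩
  have hq1 : 1 ≤ q := hqpn ▸ Nat.one_le_pow _ _ hp.pos
  have hpq : p ∣ q := hqpn ▸ dvd_pow_self p hn.ne'
  -- characteristic of F is p
  haveI hcharF : CharP F p := by
    haveI : CharP F (ringChar F) := ringChar.charP F
    obtain ⟨m, hcprime, hcard⟩ := FiniteField.card F (ringChar F)
    have hpc : p ∣ ringChar F := by
      have hpd : p ∣ Fintype.card F := by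
        rw [hF]; exact hpq.trans (dvd_pow_self q two_ne_zero)
      rw [hcard] at hpd
      exact hp.dvd_of_dvd_pow hpd
    have : p = ringChar F := ((Nat.prime_dvd_prime_iff_eq hp hcprime).mp hpc)
    rw [this]; infer_instance
  haveI : ExpChar F p := expChar_prime F p
  -- basic facts about μ
  have hx0 : ∀ x : F, x ^ (q + 1) = 1 → x ≠ 0 := by
    intro x hx h0
    rw [h0, zero_pow (Nat.succ_ne_zero q)] at hx
    exact zero_ne_one hx
  -- the geometric sum does not vanish on μ
  have hSne : ∀ x : F, x ^ (q + 1) = 1 →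
      (∑ j ∈ Finset.range (s + 1), x ^ (j * t)) ≠ 0 := by
    intro x hx h0
    by_cases hxt : x ^ t = 1
    · have hterm : ∀ j ∈ Finset.range (s + 1), x ^ (j * t) = 1 := by
        intro j _
        rw [mul_comm, pow_mul, hxt, one_pow]
      rw [Finset.sum_congr rfl hterm, Finset.sum_const, Finset.card_range,
        nsmul_eq_mul, mul_one] at h0
      have hps : ¬ p ∣ (s + 1) := by
        intro hd
        have : p ∣ Nat.gcd (s + 1) q := Nat.dvd_gcd hd hpq
        rw [h1] at this
        exact hp.one_lt.ne' (Nat.dvd_one.mp this)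
      exact hps ((CharP.cast_eq_zero_iff F p (s + 1)).mp (by exact_mod_cast h0))
    · -- x^{t(s+1)} = 1
      have hgeom : (∑ j ∈ Finset.range (s + 1), (x ^ t) ^ j) * (x ^ t - 1)
          = (x ^ t) ^ (s + 1) - 1 := geom_sum_mul (x ^ t) (s + 1)
      have hsum_eq : (∑ j ∈ Finset.range (s + 1), (x ^ t) ^ j)
          = ∑ j ∈ Finset.range (s + 1), x ^ (j * t) := by
        refine Finset.sum_congr rfl fun j _ => ?_
        rw [mul_comm, pow_mul]
      rw [hsum_eq, h0, zero_mul] at hgeom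
      have hpow : x ^ (t * (s + 1)) = 1 := by
        rw [pow_mul]
        linear_combination hgeom.symm
      have ho1 : orderOf x ∣ t * (s + 1) := orderOf_dvd_of_pow_eq_one hpow
      have ho2 : orderOf x ∣ q + 1 := orderOf_dvd_of_pow_eq_one hx
      have homd : orderOf x ∣ Nat.gcd t (q + 1) := by
        rw [← nt_gcd t s (q + 1) (Nat.succ_pos q) h2]
        exact Nat.dvd_gcd ho1 ho2
      have : x ^ t = 1 :=
        orderOf_dvd_iff_pow_eq_one.mp (homd.trans (Nat.gcd_dvd_left t (q + 1)))
      exact hxt this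
  -- key identity: S(x)^{q-1} = (x^{st})⁻¹ on μ
  have hkey : ∀ x : F, x ^ (q + 1) = 1 →
      (∑ j ∈ Finset.range (s + 1), x ^ (j * t)) ^ (q - 1) = (x ^ (s * t))⁻¹ := by
    intro x hx
    have hx0' : x ≠ 0 := hx0 x hx
    have hxq : x ^ q = x⁻¹ := by
      have : x ^ q * x = 1 := by rw [← pow_succ]; exact hx
      exact eq_inv_of_mul_eq_one_left this
    set S : F := ∑ j ∈ Finset.range (s + 1), x ^ (j * t) with hS
    have hSq : S ^ q = ∑ j ∈ Finset.range (s + 1), (x ^ (j * t)) ^ q := by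
      rw [hS, hqpn]; exact sum_pow_char_pow (p := p) (n := n) _ _
    have hterm : ∀ j ∈ Finset.range (s + 1),
        (x ^ (j * t)) ^ q = (x⁻¹) ^ (j * t) := by
      intro j _
      rw [← pow_mul, mul_comm (j * t) q, pow_mul, hxq]
    rw [Finset.sum_congr rfl hterm] at hSq
    have hrev : x ^ (s * t) * S ^ q = S := by
      rw [hSq, Finset.mul_sum]
      have hterm2 : ∀ j ∈ Finset.range (s + 1),
          x ^ (s * t) * (x⁻¹) ^ (j * t) = x ^ ((s - j) * t) := by
        intro j hj
        have hjs : j ≤ s := Nat.lt_succ_iff.mp (Finset.mem_range.mp hj)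
        have hsplit : s * t = (s - j) * t + j * t := by
          rw [← Nat.add_mul, Nat.sub_add_cancel hjs]
        rw [hsplit, pow_add, mul_assoc, inv_pow, mul_inv_cancel₀ (pow_ne_zero _ hx0'),
          mul_one]
      rw [Finset.sum_congr rfl hterm2, hS]
      have := Finset.sum_range_reflect (fun j => x ^ (j * t)) (s + 1)
      simpa using this
    have hSne' : S ≠ 0 := hSne x hx
    have hxst : (x : F) ^ (s * t) ≠ 0 := pow_ne_zero _ hx0'
    have hSqval : S ^ q = (x ^ (s * t))⁻¹ * S :=
      ((inv_mul_eq_iff_eq_mul₀ hxst).mpr hrev.symm).symm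
    have : S ^ (q - 1) * S = S ^ q := by
      rw [← pow_succ, Nat.sub_add_cancel hq1]
    calc S ^ (q - 1) = S ^ (q - 1) * S * S⁻¹ := by
          rw [mul_assoc, mul_inv_cancel₀ hSne', mul_one]
      _ = (x ^ (s * t))⁻¹ * S * S⁻¹ := by rw [this, hSqval]
      _ = (x ^ (s * t))⁻¹ := by
          rw [mul_assoc, mul_inv_cancel₀ hSne', mul_one]
  -- the two maps agree on μ
  refine hA.congr ?_
  intro x hx
  have hx' : x ^ (q + 1) = 1 := hx
  have hx0' : x ≠ 0 := hx0 x hx'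
  show x ^ (r - (s * t : ℕ)) * A.eval x ^ (q - 1)
      = x ^ r * (A.eval x * ∑ j ∈ Finset.range (s + 1), x ^ (j * t)) ^ (q - 1)
  rw [mul_pow, hkey x hx', zpow_sub₀ hx0', zpow_natCast]
  field_simp
end

section
/- Let q be a prime power, and suppose v ∈ ℤ and D(X) ∈ F_{q²}[X] are such that x ↦ x^v · D(x)^{q-1} permutes μ_{q+1}. Let s, t be positive integers with gcd(s+1, q) = 1 and gcd((q+1)/gcd(t, q+1), s+1) = 1. If r is a positive integer with gcd(r, q-1) = 1 and r ≡ v + st (mod q+1), then X^r · B(X^{q-1}) permutes F_{q²}, where B(X) := D(X) · ∑_{j=0}^{s} X^{jt}. -/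
lemma aux_dvd (d t Q s : ℕ) (ht : 0 < t) (hQ : 0 < Q) (hdQ : d ∣ Q) (hd : d ∣ (s+1)*t)
    (h2 : Nat.gcd (Q / Nat.gcd t Q) (s + 1) = 1) : d ∣ t := by
  have hd0 : 0 < d := Nat.pos_of_dvd_of_pos hdQ hQ
  set g := Nat.gcd d t with hg
  have hg0 : 0 < g := Nat.gcd_pos_of_pos_left t hd0
  have cop : Nat.Coprime (d / g) (t / g) := Nat.coprime_div_gcd_div_gcd hg0
  have step1 : d / g ∣ s + 1 := by
    have h' : (d / g) * g ∣ ((s+1) * (t/g)) * g := by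
      rw [Nat.div_mul_cancel (Nat.gcd_dvd_left d t), mul_assoc,
        Nat.div_mul_cancel (Nat.gcd_dvd_right d t)]
      exact hd
    exact cop.dvd_of_dvd_mul_right ((Nat.mul_dvd_mul_iff_right hg0).mp h')
  set G := Nat.gcd t Q with hG
  have hG0 : 0 < G := Nat.gcd_pos_of_pos_left Q ht
  have lcm1 : Nat.lcm d t = (d / g) * t := by
    apply Nat.eq_of_mul_eq_mul_left hg0
    rw [Nat.gcd_mul_lcm, ← mul_assoc, Nat.mul_div_cancel' (Nat.gcd_dvd_left d t)]
  have lcm2 : Nat.lcm Q t = (Q / G) * t := by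
    apply Nat.eq_of_mul_eq_mul_left hG0
    rw [hG, Nat.gcd_comm t Q, Nat.gcd_mul_lcm, ← mul_assoc,
      Nat.mul_div_cancel' (Nat.gcd_dvd_left Q t)]
  have hlcm : Nat.lcm d t ∣ Nat.lcm Q t :=
    Nat.lcm_dvd (hdQ.trans (Nat.dvd_lcm_left Q t)) (Nat.dvd_lcm_right Q t)
  rw [lcm1, lcm2] at hlcm
  have step2 : d / g ∣ Q / G := (Nat.mul_dvd_mul_iff_right ht).mp hlcm
  have : d / g ∣ 1 := by rw [← h2]; exact Nat.dvd_gcd step2 step1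
  have hdg : d / g = 1 := Nat.dvd_one.mp this
  have : d = g := by
    conv_lhs => rw [← Nat.div_mul_cancel (Nat.gcd_dvd_left d t), hdg, one_mul]
  rw [this]
  exact Nat.gcd_dvd_right d t

/-- Corollary 3.1: from a permutation `x ↦ x^v D(x)^{q-1}` of `μ_{q+1}` one obtains the
permutation polynomial `X^r B(X^{q-1})` of `F_{q²}` with `B = D·∑_{j=0}^{s} X^{jt}`. -/
theorem stmt_3 (q : ℕ) (hq : ∃ p n : ℕ, p.Prime ∧ 0 < n ∧ q = p ^ n)
    (F : Type) [Field F] [Fintype F] (hF : Fintype.card F = q ^ 2)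
    (v : ℤ) (D : Polynomial F)
    (hD : Set.BijOn (fun x : F => x ^ v * D.eval x ^ (q - 1))
      {x : F | x ^ (q + 1) = 1} {x : F | x ^ (q + 1) = 1})
    (s t : ℕ) (hs : 0 < s) (ht : 0 < t)
    (h1 : Nat.gcd (s + 1) q = 1)
    (h2 : Nat.gcd ((q + 1) / Nat.gcd t (q + 1)) (s + 1) = 1)
    (r : ℕ) (hr : 0 < r) (hrq : Nat.gcd r (q - 1) = 1)
    (hmod : (r : ℤ) ≡ v + (s * t : ℕ) [ZMOD (q + 1)])
    (B : Polynomial F)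
    (hB : B = D * ∑ j ∈ Finset.range (s + 1), Polynomial.X ^ (j * t)) :
    Function.Bijective (fun c : F => c ^ r * B.eval (c ^ (q - 1))) := by
  obtain ⟨p, n, hp, hn, hqpn⟩ := hq
  have hq2 : 2 ≤ q := by
    rw [hqpn]
    calc 2 ≤ p := hp.two_le
    _ = p ^ 1 := (pow_one p).symm
    _ ≤ p ^ n := Nat.pow_le_pow_right hp.pos hn
  -- characteristic
  haveI : CharP F (ringChar F) := ringChar.charP F
  obtain ⟨m, hpm, hcard⟩ := FiniteField.card F (ringChar F)
  have hpp : ringChar F = p := by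
    have h1' : ringChar F ∣ p ^ (2 * n) := by
      have hc2 : Fintype.card F = p ^ (2 * n) := by
        rw [hF, hqpn, ← pow_mul, mul_comm n 2]
      rw [← hc2, hcard]
      exact dvd_pow_self _ m.pos.ne'
    exact (Nat.prime_dvd_prime_iff_eq hpm hp).mp (hpm.dvd_of_dvd_pow h1')
  haveI : CharP F p := hpp ▸ (ringChar.charP F)
  have hs1F : ((s : F) + 1) ≠ 0 := by
    intro h0
    have : ((s + 1 : ℕ) : F) = 0 := by push_cast; exact h0
    have hps : p ∣ s + 1 := (CharP.cast_eq_zero_iff F p (s + 1)).mp this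
    have hpq : p ∣ q := hqpn ▸ dvd_pow_self p hn.ne'
    have : p ∣ 1 := h1 ▸ Nat.dvd_gcd hps hpq
    exact hp.one_lt.ne' (Nat.dvd_one.mp this)
  -- S function
  set S : F → F := fun x => ∑ j ∈ Finset.range (s + 1), x ^ (j * t) with hS
  have hBev : ∀ x : F, B.eval x = D.eval x * S x := by
    intro x
    simp [hB, hS, Polynomial.eval_finset_sum]
  -- basic facts
  have hμ0 : ∀ x : F, x ^ (q + 1) = 1 → x ≠ 0 := by
    intro x hx h0
    rw [h0, zero_pow (by omega)] at hx
    exact zero_ne_one hx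
  have hcq : ∀ c : F, c ≠ 0 → (c ^ (q - 1)) ^ (q + 1) = 1 := by
    intro c hc
    rw [← pow_mul]
    have he : (q - 1) * (q + 1) = q ^ 2 - 1 := by
      obtain ⟨m', rfl⟩ : ∃ m', q = m' + 1 := ⟨q - 1, by omega⟩
      have e1 : (m' + 1) ^ 2 = m' ^ 2 + 2 * m' + 1 := by ring
      have e2 : m' * (m' + 1 + 1) = m' ^ 2 + 2 * m' := by ring
      simp only [Nat.add_sub_cancel]
      omega
    rw [he, ← hF]
    exact FiniteField.pow_card_sub_one_eq_one c hc
  -- S x ≠ 0 on μ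
  have hSne : ∀ x : F, x ^ (q + 1) = 1 → S x ≠ 0 := by
    intro x hx
    have hSgeom : S x = ∑ j ∈ Finset.range (s + 1), (x ^ t) ^ j := by
      simp [hS, pow_mul, mul_comm]
    by_cases hxt : x ^ t = 1
    · rw [hSgeom, hxt]
      simpa using hs1F
    · intro h0
      have hgeom : (∑ j ∈ Finset.range (s + 1), (x ^ t) ^ j) * (x ^ t - 1)
          = (x ^ t) ^ (s + 1) - 1 := geom_sum_mul (x ^ t) (s + 1)
      rw [← hSgeom, h0, zero_mul] at hgeom
      have hxst : x ^ (t * (s + 1)) = 1 := by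
        rw [pow_mul]
        exact sub_eq_zero.mp hgeom.symm
      have hd1 : orderOf x ∣ q + 1 := orderOf_dvd_of_pow_eq_one hx
      have hd2 : orderOf x ∣ (s + 1) * t := by
        rw [mul_comm]; exact orderOf_dvd_of_pow_eq_one hxst
      have hdt : orderOf x ∣ t := aux_dvd (orderOf x) t (q + 1) s ht (by omega) hd1 hd2 h2
      exact hxt (orderOf_dvd_iff_pow_eq_one.mp hdt)
  -- D eval ≠ 0 on μ
  have hDne : ∀ x : F, x ^ (q + 1) = 1 → D.eval x ≠ 0 := by
    intro x hx h0
    have hm := hD.mapsTo (show x ∈ {x : F | x ^ (q + 1) = 1} from hx)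
    simp only [Set.mem_setOf_eq] at hm
    rw [h0, zero_pow (by omega), mul_zero, zero_pow (by omega)] at hm
    exact zero_ne_one hm
  -- zpow congruence
  have hxr : ∀ x : F, x ^ (q + 1) = 1 → x ^ r = x ^ v * x ^ (s * t) := by
    intro x hx
    have hx0 := hμ0 x hx
    obtain ⟨k, hk⟩ := hmod.dvd
    have hr' : (r : ℤ) = (v + ((s * t : ℕ) : ℤ)) + ((q + 1 : ℕ) : ℤ) * (-k) := by
      push_cast at hk ⊢
      linarith
    calc x ^ r = x ^ ((r : ℤ)) := (zpow_natCast x r).symm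
      _ = x ^ ((v + ((s * t : ℕ) : ℤ)) + ((q + 1 : ℕ) : ℤ) * (-k)) := by rw [← hr']
      _ = x ^ (v + ((s * t : ℕ) : ℤ)) * (x ^ (((q + 1 : ℕ) : ℤ))) ^ (-k) := by
          rw [zpow_add₀ hx0, zpow_mul]
      _ = x ^ v * x ^ (s * t) := by
          rw [zpow_natCast, hx, one_zpow, mul_one, zpow_add₀ hx0, zpow_natCast]
  -- key identity on μ
  have hkey : ∀ x : F, x ^ (q + 1) = 1 →
      x ^ r * (B.eval x) ^ (q - 1) = x ^ v * (D.eval x) ^ (q - 1) := by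
    intro x hx
    have hx0 := hμ0 x hx
    -- Frobenius-type: x^(s*t) * (S x)^q = S x
    haveI : ExpChar F p := ExpChar.prime hp
    have hSq : x ^ (s * t) * (S x) ^ q = S x := by
      have hfrob : (S x) ^ q = ∑ j ∈ Finset.range (s + 1), (x ^ (j * t)) ^ q := by
        simp only [hS]
        rw [hqpn]
        exact sum_pow_char_pow p n (Finset.range (s + 1)) _
      rw [hfrob, Finset.mul_sum]
      simp only [hS]
      rw [← Finset.sum_range_reflect (fun j => x ^ (j * t)) (s + 1)]
      apply Finset.sum_congr rfl
      intro j hj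
      simp only [Finset.mem_range] at hj
      have hjs : j ≤ s := by omega
      have harith : s * t + j * t * q = (s + 1 - 1 - j) * t + (q + 1) * (j * t) := by
        have h' : s + 1 - 1 - j = s - j := by omega
        calc s * t + j * t * q = ((s - j) + j) * t + j * t * q := by
              rw [Nat.sub_add_cancel hjs]
          _ = ((s - j) * t + j * t) + j * t * q := by rw [Nat.add_mul]
          _ = (s - j) * t + (j * t * q + j * t) := by ring
          _ = (s + 1 - 1 - j) * t + (q + 1) * (j * t) := by rw [h']; ring
      rw [← pow_mul, ← pow_add, harith, pow_add, pow_mul x (q + 1), hx, one_pow, mul_one]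
    have hSx := hSne x hx
    have hclaim : x ^ (s * t) * (S x) ^ (q - 1) = 1 := by
      have hq1 : (q - 1) + 1 = q := by omega
      have : (x ^ (s * t) * (S x) ^ (q - 1)) * S x = 1 * S x := by
        rw [mul_assoc, ← pow_succ, hq1, one_mul, hSq]
      exact mul_right_cancel₀ hSx this
    calc x ^ r * (B.eval x) ^ (q - 1)
        = x ^ v * x ^ (s * t) * ((D.eval x) ^ (q - 1) * (S x) ^ (q - 1)) := by
          rw [hBev, mul_pow, hxr x hx]
      _ = x ^ v * (D.eval x) ^ (q - 1) * (x ^ (s * t) * (S x) ^ (q - 1)) := by ring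
      _ = x ^ v * (D.eval x) ^ (q - 1) := by rw [hclaim, mul_one]
  -- nonvanishing of the map on nonzero elements
  have hfne : ∀ c : F, c ≠ 0 → c ^ r * B.eval (c ^ (q - 1)) ≠ 0 := by
    intro c hc
    have hxμ := hcq c hc
    exact mul_ne_zero (pow_ne_zero r hc)
      (by rw [hBev]; exact mul_ne_zero (hDne _ hxμ) (hSne _ hxμ))
  rw [← Finite.injective_iff_bijective]
  intro c₁ c₂ hcc
  simp only at hcc
  by_cases h1c : c₁ = 0
  · by_cases h2c : c₂ = 0
    · rw [h1c, h2c]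
    · exact absurd (by rw [← hcc, h1c, zero_pow hr.ne', zero_mul]) (hfne c₂ h2c)
  · by_cases h2c : c₂ = 0
    · exact absurd (by rw [hcc, h2c, zero_pow hr.ne', zero_mul]) (hfne c₁ h1c)
    · have hx₁ := hcq c₁ h1c
      have hx₂ := hcq c₂ h2c
      have hpow : (c₁ ^ (q - 1)) ^ r * (B.eval (c₁ ^ (q - 1))) ^ (q - 1)
          = (c₂ ^ (q - 1)) ^ r * (B.eval (c₂ ^ (q - 1))) ^ (q - 1) := by
        have h' := congrArg (· ^ (q - 1)) hcc
        simp only [mul_pow] at h'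
        rw [← pow_mul, ← pow_mul, mul_comm r (q - 1), pow_mul, pow_mul] at h'
        exact h'
      rw [hkey _ hx₁, hkey _ hx₂] at hpow
      have hxeq : c₁ ^ (q - 1) = c₂ ^ (q - 1) := hD.injOn hx₁ hx₂ hpow
      have hcr : c₁ ^ r = c₂ ^ r := by
        rw [hxeq] at hcc
        have hBne : B.eval (c₂ ^ (q - 1)) ≠ 0 := by
          rw [hBev]; exact mul_ne_zero (hDne _ hx₂) (hSne _ hx₂)
        exact mul_right_cancel₀ hBne hcc
      have hbez := Nat.gcd_eq_gcd_ab r (q - 1)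
      rw [hrq] at hbez
      have key : ∀ c : F, c ≠ 0 →
          c = (c ^ r) ^ (Nat.gcdA r (q - 1)) * (c ^ (q - 1)) ^ (Nat.gcdB r (q - 1)) := by
        intro c hc
        calc c = c ^ ((1 : ℤ)) := (zpow_one c).symm
          _ = c ^ ((r : ℤ) * Nat.gcdA r (q - 1) + ((q - 1 : ℕ) : ℤ) * Nat.gcdB r (q - 1)) := by
              rw [← hbez]; norm_num
          _ = (c ^ ((r : ℤ))) ^ Nat.gcdA r (q - 1)
              * (c ^ (((q - 1 : ℕ)) : ℤ)) ^ Nat.gcdB r (q - 1) := by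
              rw [zpow_add₀ hc, zpow_mul, zpow_mul]
          _ = (c ^ r) ^ Nat.gcdA r (q - 1) * (c ^ (q - 1)) ^ Nat.gcdB r (q - 1) := by
              rw [zpow_natCast, zpow_natCast]
      rw [key c₁ h1c, key c₂ h2c, hcr, hxeq]
end

section
/- Let q be a prime power, and suppose v ∈ ℤ and D(X) ∈ F_{q²}[X] are such that x ↦ x^v · D(x)^{q-1} permutes μ_{q+1}. Let s, t be positive integers with gcd(s+1, q) = 1 and gcd((q+1)/gcd(t, q+1), s+1) = 1. Suppose B(X) ∈ F_{q²}[X] satisfies D(X) = B(X) · ∑_{j=0}^{s} X^{jt}. If r is a positive integer with gcd(r, q-1) = 1 and r ≡ v - st (mod q+1), then X^r · B(X^{q-1}) permutes F_{q²}. -/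
/-- Corollary 3.2: from a permutation `x ↦ x^v D(x)^{q-1}` of `μ_{q+1}`, if
`D = B·∑_{j=0}^{s} X^{jt}` then `X^r B(X^{q-1})` permutes `F_{q²}` for suitable `r`. -/
theorem stmt_4 (q : ℕ) (hq : ∃ p n : ℕ, p.Prime ∧ 0 < n ∧ q = p ^ n)
    (F : Type) [Field F] [Fintype F] (hF : Fintype.card F = q ^ 2)
    (v : ℤ) (D : Polynomial F)
    (hD : Set.BijOn (fun x : F => x ^ v * D.eval x ^ (q - 1))
      {x : F | x ^ (q + 1) = 1} {x : F | x ^ (q + 1) = 1})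
    (s t : ℕ) (hs : 0 < s) (ht : 0 < t)
    (h1 : Nat.gcd (s + 1) q = 1)
    (h2 : Nat.gcd ((q + 1) / Nat.gcd t (q + 1)) (s + 1) = 1)
    (B : Polynomial F)
    (hB : D = B * ∑ j ∈ Finset.range (s + 1), Polynomial.X ^ (j * t))
    (r : ℕ) (hr : 0 < r) (hrq : Nat.gcd r (q - 1) = 1)
    (hmod : (r : ℤ) ≡ v - (s * t : ℕ) [ZMOD (q + 1)]) :
    Function.Bijective (fun c : F => c ^ r * B.eval (c ^ (q - 1))) := by
  classical
  obtain ⟨p, n, hp, hn, hqpn⟩ := hq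
  haveI : Fact p.Prime := ⟨hp⟩
  have hq2 : 2 ≤ q := by
    rw [hqpn]
    calc 2 ≤ p := hp.two_le
      _ ≤ p ^ n := Nat.le_self_pow hn.ne' p
  have hqm1 : q - 1 ≠ 0 := by omega
  -- characteristic of F is p
  haveI : CharP F (ringChar F) := ringChar.charP F
  obtain ⟨m, hpr, hcard'⟩ := FiniteField.card F (ringChar F)
  have hpchar : p = ringChar F := by
    have hdvd : p ∣ Fintype.card F := by
      rw [hF, hqpn]
      exact dvd_pow (dvd_pow_self p hn.ne') two_ne_zero
    rw [hcard'] at hdvd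
    exact (Nat.prime_dvd_prime_iff_eq hp hpr).mp (hp.dvd_of_dvd_pow hdvd)
  haveI hcp : CharP F p := by rw [hpchar]; infer_instance
  haveI : ExpChar F p := .prime hp
  -- the auxiliary polynomial S
  set Sp : Polynomial F := ∑ j ∈ Finset.range (s + 1), Polynomial.X ^ (j * t) with hSp
  have hSeval : ∀ x : F, Sp.eval x = ∑ j ∈ Finset.range (s + 1), x ^ (j * t) := by
    intro x
    simp [hSp, Polynomial.eval_finset_sum]
  have hμ0 : ∀ x : F, x ^ (q + 1) = 1 → x ≠ 0 := by
    intro x hx h0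
    rw [h0, zero_pow (by omega : q + 1 ≠ 0)] at hx
    exact one_ne_zero hx.symm
  have hpns : ¬ p ∣ (s + 1) := by
    intro hps
    have hpq : p ∣ q := hqpn ▸ dvd_pow_self p hn.ne'
    have hd := Nat.dvd_gcd hps hpq
    rw [h1] at hd
    exact hp.ne_one (Nat.dvd_one.mp hd)
  -- S does not vanish on μ_{q+1}
  have hSne : ∀ x : F, x ^ (q + 1) = 1 → Sp.eval x ≠ 0 := by
    intro x hx
    rw [hSeval]
    by_cases hxt : x ^ t = 1
    · have hone : ∀ j ∈ Finset.range (s + 1), x ^ (j * t) = 1 := by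
        intro j _
        rw [mul_comm, pow_mul, hxt, one_pow]
      rw [Finset.sum_congr rfl hone, Finset.sum_const, Finset.card_range, nsmul_eq_mul, mul_one]
      intro h0
      exact hpns ((CharP.cast_eq_zero_iff F p (s + 1)).mp (by exact_mod_cast h0))
    · intro h0
      have hsum : ∑ i ∈ Finset.range (s + 1), (x ^ t) ^ i = 0 := by
        rw [← h0]
        apply Finset.sum_congr rfl
        intro j _
        rw [← pow_mul, mul_comm]
      have hgs := geom_sum_mul (x ^ t) (s + 1)
      rw [hsum, zero_mul] at hgs
      have hy1 : (x ^ t) ^ (s + 1) = 1 := sub_eq_zero.mp hgs.symm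
      obtain ⟨k, hk⟩ := Nat.gcd_dvd_left t (q + 1)
      have hy2 : (x ^ t) ^ ((q + 1) / Nat.gcd t (q + 1)) = 1 := by
        rw [← pow_mul]
        have hdiv : t * ((q + 1) / Nat.gcd t (q + 1)) = k * (q + 1) := by
          nth_rewrite 1 [hk]
          rw [mul_comm (Nat.gcd t (q + 1)) k, mul_assoc,
            Nat.mul_div_cancel' (Nat.gcd_dvd_right t (q + 1))]
        rw [hdiv, mul_comm, pow_mul, hx, one_pow]
      have hgcd : (x ^ t) ^ Nat.gcd ((q + 1) / Nat.gcd t (q + 1)) (s + 1) = 1 :=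
        pow_gcd_eq_one.mpr ⟨hy2, hy1⟩
      rw [h2, pow_one] at hgcd
      exact hxt hgcd
  -- S(x)^(q-1) * x^(s*t) = 1 on μ_{q+1}
  have hSq : ∀ x : F, x ^ (q + 1) = 1 → Sp.eval x ^ (q - 1) * x ^ (s * t) = 1 := by
    intro x hx
    have hSx := hSne x hx
    have hfr : Sp.eval x ^ q * x ^ (s * t) = Sp.eval x := by
      rw [hSeval]
      have hq' : (∑ j ∈ Finset.range (s + 1), x ^ (j * t)) ^ q
          = ∑ j ∈ Finset.range (s + 1), (x ^ (j * t)) ^ q := by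
        rw [hqpn]
        exact sum_pow_char_pow (p := p) (n := n) _ _
      rw [hq', Finset.sum_mul,
        ← Finset.sum_range_reflect (fun j => x ^ (j * t)) (s + 1)]
      apply Finset.sum_congr rfl
      intro j hj
      have hjs : j ≤ s := Nat.lt_succ_iff.mp (Finset.mem_range.mp hj)
      have hred : s + 1 - 1 - j = s - j := by omega
      rw [hred, ← pow_mul, ← pow_add]
      have h5 : j * t + (s - j) * t = s * t := by
        rw [← Nat.add_mul]
        congr 1
        omega
      have hexp : j * t * q + s * t = (q + 1) * (j * t) + (s - j) * t := by
        rw [Nat.add_mul, one_mul, mul_comm (j * t) q, add_assoc, h5]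
      rw [hexp, pow_add, pow_mul, hx, one_pow, one_mul]
    have hqsplit : q = (q - 1) + 1 := by omega
    rw [hqsplit, pow_succ] at hfr
    apply mul_right_cancel₀ hSx
    rw [one_mul]
    calc Sp.eval x ^ (q - 1) * x ^ (s * t) * Sp.eval x
        = Sp.eval x ^ (q - 1) * Sp.eval x * x ^ (s * t) := by ring
      _ = Sp.eval x := hfr
  -- the two maps agree on μ_{q+1}
  have hgD : ∀ x : F, x ^ (q + 1) = 1 →
      x ^ r * B.eval x ^ (q - 1) = x ^ v * D.eval x ^ (q - 1) := by
    intro x hx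
    have hxne := hμ0 x hx
    have hDx : D.eval x = B.eval x * Sp.eval x := by rw [hB, Polynomial.eval_mul]
    have hSc := hSq x hx
    have hxv : (x : F) ^ v * Sp.eval x ^ (q - 1) = x ^ r := by
      obtain ⟨k, hk⟩ := Int.ModEq.dvd hmod
      have hv : v = (r : ℤ) + ((s * t : ℕ) : ℤ) + ((q : ℤ) + 1) * k := by
        linear_combination hk
      have hz : x ^ v = x ^ (r : ℤ) * x ^ ((s * t : ℕ) : ℤ) := by
        rw [hv, zpow_add₀ hxne, zpow_add₀ hxne, zpow_mul]
        have hone : x ^ ((q : ℤ) + 1) = 1 := by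
          rw [show ((q : ℤ) + 1) = ((q + 1 : ℕ) : ℤ) by push_cast; ring,
            zpow_natCast, hx]
        rw [hone, one_zpow, mul_one]
      rw [hz, zpow_natCast, zpow_natCast, mul_assoc,
        mul_comm (x ^ (s * t)), hSc, mul_one]
    rw [hDx, mul_pow, ← hxv]
    ring
  have hgBij : Set.BijOn (fun x : F => x ^ r * B.eval x ^ (q - 1))
      {x : F | x ^ (q + 1) = 1} {x : F | x ^ (q + 1) = 1} := by
    apply Set.BijOn.congr hD
    intro x hx
    exact (hgD x hx).symm
  -- B does not vanish on μ_{q+1}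
  have hBne : ∀ x : F, x ^ (q + 1) = 1 → B.eval x ≠ 0 := by
    intro x hx hB0
    have hmem := hgBij.mapsTo hx
    simp only [Set.mem_setOf_eq] at hmem
    rw [hB0, zero_pow hqm1, mul_zero, zero_pow (by omega : q + 1 ≠ 0)] at hmem
    exact one_ne_zero hmem.symm
  -- c^(q-1) lies in μ_{q+1} for c ≠ 0
  have hpow : ∀ c : F, c ≠ 0 → (c ^ (q - 1)) ^ (q + 1) = 1 := by
    intro c hc
    rw [← pow_mul]
    have hqq : (q - 1) * (q + 1) + 1 = q ^ 2 := by
      obtain ⟨m', rfl⟩ : ∃ m', q = m' + 1 := ⟨q - 1, by omega⟩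
      simp only [Nat.add_sub_cancel]
      ring
    have hcard1 : (q - 1) * (q + 1) = Fintype.card F - 1 := by
      rw [hF, ← hqq]
      simp
    rw [hcard1]
    exact FiniteField.pow_card_sub_one_eq_one c hc
  set f : F → F := fun c => c ^ r * B.eval (c ^ (q - 1)) with hf
  have hf0 : f 0 = 0 := by
    simp [hf, zero_pow hr.ne']
  have hfne : ∀ c : F, c ≠ 0 → f c ≠ 0 := by
    intro c hc
    exact mul_ne_zero (pow_ne_zero r hc) (hBne _ (hpow c hc))
  have hinj : Function.Injective f := by
    intro c1 c2 h
    by_cases hc1 : c1 = 0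
    · by_cases hc2 : c2 = 0
      · rw [hc1, hc2]
      · exact absurd (by rw [← h, hc1, hf0]) (hfne c2 hc2)
    · by_cases hc2 : c2 = 0
      · exact absurd (by rw [h, hc2, hf0]) (hfne c1 hc1)
      · have hfq : ∀ c : F, (f c) ^ (q - 1)
            = (c ^ (q - 1)) ^ r * B.eval (c ^ (q - 1)) ^ (q - 1) := by
          intro c
          rw [hf]
          simp only []
          rw [mul_pow, ← pow_mul, mul_comm r (q - 1), pow_mul]
        have heq : (fun x : F => x ^ r * B.eval x ^ (q - 1)) (c1 ^ (q - 1))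
            = (fun x : F => x ^ r * B.eval x ^ (q - 1)) (c2 ^ (q - 1)) := by
          simp only []
          rw [← hfq, ← hfq, h]
        have hw := hgBij.injOn (hpow c1 hc1) (hpow c2 hc2) heq
        have hr' : c1 ^ r = c2 ^ r := by
          apply mul_right_cancel₀ (hBne _ (hpow c2 hc2))
          calc c1 ^ r * B.eval (c2 ^ (q - 1))
              = c1 ^ r * B.eval (c1 ^ (q - 1)) := by rw [hw]
            _ = c2 ^ r * B.eval (c2 ^ (q - 1)) := h
        have hbez := Nat.gcd_eq_gcd_ab r (q - 1)
        rw [hrq] at hbez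
        have key : ∀ c : F, c ≠ 0 →
            c = (c ^ r) ^ (Nat.gcdA r (q - 1)) * (c ^ (q - 1)) ^ (Nat.gcdB r (q - 1)) := by
          intro c hc
          have hone : (1 : ℤ)
              = (r : ℤ) * Nat.gcdA r (q - 1) + ((q - 1 : ℕ) : ℤ) * Nat.gcdB r (q - 1) := by
            exact_mod_cast hbez
          calc c = c ^ (1 : ℤ) := (zpow_one c).symm
            _ = c ^ ((r : ℤ) * Nat.gcdA r (q - 1) + ((q - 1 : ℕ) : ℤ) * Nat.gcdB r (q - 1)) := by
                rw [← hone]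
            _ = (c ^ r) ^ Nat.gcdA r (q - 1) * (c ^ (q - 1)) ^ Nat.gcdB r (q - 1) := by
                rw [zpow_add₀ hc, zpow_mul, zpow_mul, zpow_natCast, zpow_natCast]
        rw [key c1 hc1, key c2 hc2, hr', hw]
  exact Finite.injective_iff_bijective.mp hinj
end

section
/- Let k and ℓ be positive integers with ord₂(ℓ) ≤ ord₂(k), and set q := 2^k, Q := 2^ℓ, and D(X) := X^{Q+1} + X + 1 ∈ F₂[X]. Then the map x ↦ x^{Q+1} · D(x)^{q-1} permutes the group μ_{q+1} of (q+1)-th roots of unity in F_{q²}. -/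
private lemma pow_two_pow_add {M : Type*} [Monoid M] (w : M) (a b : ℕ)
    (ha : w ^ (2:ℕ) ^ a = w) : w ^ (2:ℕ) ^ (a + b) = w ^ (2:ℕ) ^ b := by
  rw [pow_add, pow_mul, ha]

private lemma pow_two_pow_mul {M : Type*} [Monoid M] (w : M) (a : ℕ)
    (ha : w ^ (2:ℕ) ^ a = w) : ∀ c, w ^ (2:ℕ) ^ (a * c) = w := by
  intro c
  induction c with
  | zero => simp
  | succ n ih =>
      have h : a * (n + 1) = a + a * n := by ring
      rw [h, pow_two_pow_add w a (a * n) ha, ih]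

private lemma pow_two_pow_gcd {M : Type*} [Monoid M] (w : M) :
    ∀ a b : ℕ, w ^ (2:ℕ) ^ a = w → w ^ (2:ℕ) ^ b = w →
      w ^ (2:ℕ) ^ (Nat.gcd a b) = w := by
  intro a b
  induction a, b using Nat.gcd.induction with
  | H0 b => intro _ hb; simpa using hb
  | H1 a b ha ih =>
      intro h1 h2
      rw [Nat.gcd_rec]
      refine ih ?_ h1
      have hdm : a * (b / a) + b % a = b := Nat.div_add_mod b a
      have hmul : w ^ (2:ℕ) ^ (a * (b / a)) = w := pow_two_pow_mul w a h1 _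
      have h3 := pow_two_pow_add w (a * (b / a)) (b % a) hmul
      rw [hdm, h2] at h3
      exact h3.symm

private lemma gcd_two_mul_dvd (k ℓ : ℕ) (hk : 0 < k) (hl : 0 < ℓ)
    (hord : padicValNat 2 ℓ ≤ padicValNat 2 k) : Nat.gcd ℓ (2 * k) ∣ k := by
  set g := Nat.gcd ℓ (2 * k) with hg
  have hg0 : 0 < g := Nat.gcd_pos_of_pos_left _ hl
  have hgl : g ∣ ℓ := Nat.gcd_dvd_left _ _
  have hg2k : g ∣ 2 * k := Nat.gcd_dvd_right _ _
  have hfac : (2:ℕ) ^ g.factorization 2 * (g / 2 ^ g.factorization 2) = g :=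
    Nat.ordProj_mul_ordCompl_eq_self g 2
  set a := g.factorization 2 with haa
  set u := g / 2 ^ a with hu
  have hu_odd : ¬ (2:ℕ) ∣ u := Nat.not_dvd_ordCompl Nat.prime_two hg0.ne'
  have hu_dvd_g : u ∣ g := Nat.ordCompl_dvd g 2
  have hu_dvd_2k : u ∣ 2 * k := hu_dvd_g.trans hg2k
  have hcop2u : Nat.Coprime 2 u := (Nat.Prime.coprime_iff_not_dvd Nat.prime_two).mpr hu_odd
  have hu_dvd_k : u ∣ k := (Nat.Coprime.dvd_of_dvd_mul_left (hcop2u.symm)) hu_dvd_2k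
  have h1 : g.factorization 2 ≤ ℓ.factorization 2 :=
    ((Nat.factorization_le_iff_dvd hg0.ne' hl.ne').mpr hgl) 2
  have hak : a ≤ padicValNat 2 k := by
    calc a ≤ ℓ.factorization 2 := h1
    _ = padicValNat 2 ℓ := Nat.factorization_def ℓ Nat.prime_two
    _ ≤ padicValNat 2 k := hord
  have h2a_dvd_k : (2:ℕ) ^ a ∣ k := by
    have hk2 : (2:ℕ) ^ padicValNat 2 k ∣ k := by
      have h := Nat.ordProj_dvd k 2
      rwa [Nat.factorization_def k Nat.prime_two] at h
    exact dvd_trans (pow_dvd_pow 2 hak) hk2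
  have hcop : Nat.Coprime ((2:ℕ) ^ a) u := Nat.Coprime.pow_left a hcop2u
  have hfin := Nat.Coprime.mul_dvd_of_dvd_of_dvd hcop h2a_dvd_k hu_dvd_k
  rwa [hfac] at hfin

/-- Lemma 4.1: for `q = 2^k`, `Q = 2^ℓ` with `ord₂(ℓ) ≤ ord₂(k)` and
`D(X) = X^{Q+1} + X + 1`, the map `x ↦ x^{Q+1} D(x)^{q-1}` permutes `μ_{q+1}`. -/
theorem stmt_5 (k ℓ : ℕ) (hk : 0 < k) (hl : 0 < ℓ)
    (hord : padicValNat 2 ℓ ≤ padicValNat 2 k)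
    (q Q : ℕ) (hq : q = 2 ^ k) (hQ : Q = 2 ^ ℓ)
    (F : Type) [Field F] [Fintype F] (hF : Fintype.card F = q ^ 2)
    (D : Polynomial F) (hD : D = Polynomial.X ^ (Q + 1) + Polynomial.X + 1) :
    Set.BijOn (fun x : F => x ^ (Q + 1) * D.eval x ^ (q - 1))
      {x : F | x ^ (q + 1) = 1} {x : F | x ^ (q + 1) = 1} := by
  have hq1 : 1 ≤ q := by rw [hq]; exact Nat.one_le_two_pow
  have hq0 : q ≠ 0 := by omega
  have hcard : Fintype.card F = 2 ^ (2 * k) := by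
    rw [hF, hq, ← pow_mul, mul_comm]
  haveI hchar2 : CharP F 2 := by
    obtain ⟨p, hp⟩ := CharP.exists F
    haveI := hp
    have hprime : p.Prime := CharP.char_is_prime F p
    obtain ⟨n, -, hcardp⟩ := FiniteField.card F p
    have hpd : p ∣ 2 ^ (2 * k) := by
      rw [← hcard, hcardp]
      exact dvd_pow_self p n.pos.ne'
    have hpd2 : p ∣ 2 := hprime.dvd_of_dvd_pow hpd
    have hp2 : p = 2 := (Nat.prime_dvd_prime_iff_eq hprime Nat.prime_two).mp hpd2
    rwa [hp2] at hp
  haveI : Fact (Nat.Prime 2) := ⟨Nat.prime_two⟩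
  have htwo : (2 : F) = 0 := by exact_mod_cast CharP.cast_eq_zero F 2
  have frob : ∀ (m : ℕ) (a b : F), (a + b) ^ (2:ℕ) ^ m = a ^ (2:ℕ) ^ m + b ^ (2:ℕ) ^ m :=
    fun m a b => add_pow_char_pow a b 2 m
  have hadd_self : ∀ a : F, a + a = 0 := fun a => by
    have h : a + a = 2 * a := by ring
    rw [h, htwo, zero_mul]
  have hcancel : ∀ a b : F, a + b = 0 → a = b := by
    intro a b h
    have h2 : a = (a + b) + b := by rw [add_assoc, hadd_self, add_zero]
    rwa [h, zero_add] at h2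
  have hgdvd : Nat.gcd ℓ (2 * k) ∣ k := gcd_two_mul_dvd k ℓ hk hl hord
  have hlift : ∀ w : F, w ^ (2:ℕ) ^ ℓ = w → w ^ (2:ℕ) ^ k = w := by
    intro w hw
    have hw2k : w ^ (2:ℕ) ^ (2 * k) = w := by
      have h := FiniteField.pow_card w
      rwa [hcard] at h
    have hwg := pow_two_pow_gcd w ℓ (2 * k) hw hw2k
    obtain ⟨m, hm⟩ := hgdvd
    have h := pow_two_pow_mul w (Nat.gcd ℓ (2 * k)) hwg m
    rwa [← hm] at h
  have hne0 : ∀ x : F, x ^ (q + 1) = 1 → x ≠ 0 := by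
    intro x hx h0
    rw [h0, zero_pow (Nat.succ_ne_zero q)] at hx
    exact zero_ne_one hx
  have hinv : ∀ x : F, x ^ (q + 1) = 1 → x ^ q = x⁻¹ := by
    intro x hx
    have h : x ^ q * x = 1 := by rw [← pow_succ]; exact hx
    exact eq_inv_of_mul_eq_one_left h
  have hQq : ∀ x : F, x ^ (q+1) = 1 → x ^ ((Q+1) * q) * x ^ (Q+1) = 1 := by
    intro x hx
    rw [← pow_add]
    have h : (Q+1) * q + (Q+1) = (q+1) * (Q+1) := by ring
    rw [h, pow_mul, hx, one_pow]
  have hxQq : ∀ x : F, x ^ (q+1) = 1 → x ^ (Q+1) * x ^ q = x ^ Q := by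
    intro x hx
    rw [← pow_add]
    have h : Q + 1 + q = Q + (q + 1) := by ring
    rw [h, pow_add, hx, mul_one]
  have hDq : ∀ x : F, (x ^ (Q+1) + x + 1) ^ q = x ^ ((Q+1)*q) + x ^ q + 1 := by
    intro x
    rw [hq, frob k (x ^ (Q+1) + x) 1, frob k (x ^ (Q+1)) x, one_pow, ← pow_mul]
  have hN : ∀ x : F, x ^ (q+1) = 1 →
      x ^ (Q+1) * (x ^ (Q+1) + x + 1) ^ q = 1 + x ^ Q + x ^ (Q+1) := by
    intro x hx
    rw [hDq x, mul_add, mul_add, mul_comm (x ^ (Q+1)) (x ^ ((Q+1)*q)), hQq x hx,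
      hxQq x hx, mul_one]
  have hDne : ∀ x : F, x ^ (q + 1) = 1 → x ^ (Q+1) + x + 1 ≠ 0 := by
    intro x hx hD0
    have hNx : 1 + x ^ Q + x ^ (Q+1) = 0 := by
      have h := hN x hx
      rw [hD0, zero_pow hq0, mul_zero] at h
      exact h.symm
    have hxQx : x ^ Q = x := by
      refine (hcancel x (x ^ Q) ?_).symm
      have h2 : x ^ (Q+1) + x ^ (Q+1) = 0 := hadd_self _
      have h3 : (1:F) + 1 = 0 := hadd_self 1
      linear_combination hD0 + hNx - h2 - h3
    have hxq : x ^ (2:ℕ) ^ k = x := hlift x (by rw [← hQ]; exact hxQx)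
    have hxq' : x ^ q = x := by rw [hq]; exact hxq
    have hx2 : x * x = 1 := by
      have h := hx
      rw [pow_succ, hxq'] at h
      exact h
    have hsq : (x + 1) * (x + 1) = 0 := by
      linear_combination hx2 + (x + 1) * htwo
    have hx1 : x = 1 := hcancel x 1 (mul_self_eq_zero.mp hsq)
    rw [hx1, one_pow] at hD0
    have h : (1:F) + 1 + 1 = 1 := by rw [hadd_self, zero_add]
    rw [h] at hD0
    exact one_ne_zero hD0
  have heval : ∀ t : F, D.eval t = t ^ (Q+1) + t + 1 := by
    intro t; rw [hD]; simp
  -- MapsTo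
  have hmaps : Set.MapsTo (fun x : F => x ^ (Q + 1) * D.eval x ^ (q - 1))
      {x : F | x ^ (q + 1) = 1} {x : F | x ^ (q + 1) = 1} := by
    intro x hx
    simp only [Set.mem_setOf_eq] at hx ⊢
    rw [heval]
    have hD0 := hDne x hx
    rw [mul_pow, ← pow_mul, ← pow_mul]
    have e1 : (Q+1) * (q+1) = (q+1) * (Q+1) := mul_comm _ _
    rw [e1, pow_mul, hx, one_pow, one_mul]
    have e2' : (q - 1) * (q + 1) + 1 = q ^ 2 := by
      rcases Nat.exists_eq_add_of_le hq1 with ⟨m, rfl⟩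
      simp only [Nat.add_sub_cancel_left]
      ring
    have e2 : (q - 1) * (q + 1) = q ^ 2 - 1 := Nat.eq_sub_of_add_eq e2'
    rw [e2, ← hF]
    exact FiniteField.pow_card_sub_one_eq_one _ hD0
  -- InjOn
  have hinj : Set.InjOn (fun x : F => x ^ (Q + 1) * D.eval x ^ (q - 1))
      {x : F | x ^ (q + 1) = 1} := by
    intro x hx y hy hxy
    simp only [Set.mem_setOf_eq] at hx hy
    simp only [heval] at hxy
    by_contra hne
    have hDx0 : x ^ (Q+1) + x + 1 ≠ 0 := hDne x hx
    have hDy0 : y ^ (Q+1) + y + 1 ≠ 0 := hDne y hy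
    have hx0 := hne0 x hx
    have hy0 := hne0 y hy
    -- cross multiplied key identity
    have hkey : (1 + x ^ Q + x ^ (Q+1)) * (y ^ (Q+1) + y + 1)
        = (1 + y ^ Q + y ^ (Q+1)) * (x ^ (Q+1) + x + 1) := by
      have hDxq : (x ^ (Q+1) + x + 1) ^ (q-1) * (x ^ (Q+1) + x + 1)
          = (x ^ (Q+1) + x + 1) ^ q := by
        rw [← pow_succ, Nat.sub_add_cancel hq1]
      have hDyq : (y ^ (Q+1) + y + 1) ^ (q-1) * (y ^ (Q+1) + y + 1)
          = (y ^ (Q+1) + y + 1) ^ q := by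
        rw [← pow_succ, Nat.sub_add_cancel hq1]
      have h1 : x ^ (Q+1) * (x ^ (Q+1) + x + 1) ^ (q-1)
            * ((x ^ (Q+1) + x + 1) * (y ^ (Q+1) + y + 1))
          = (1 + x ^ Q + x ^ (Q+1)) * (y ^ (Q+1) + y + 1) := by
        calc x ^ (Q+1) * (x ^ (Q+1) + x + 1) ^ (q-1)
              * ((x ^ (Q+1) + x + 1) * (y ^ (Q+1) + y + 1))
            = (x ^ (Q+1) * ((x ^ (Q+1) + x + 1) ^ (q-1) * (x ^ (Q+1) + x + 1)))
              * (y ^ (Q+1) + y + 1) := by ring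
          _ = (x ^ (Q+1) * (x ^ (Q+1) + x + 1) ^ q) * (y ^ (Q+1) + y + 1) := by rw [hDxq]
          _ = (1 + x ^ Q + x ^ (Q+1)) * (y ^ (Q+1) + y + 1) := by rw [hN x hx]
      have h2 : y ^ (Q+1) * (y ^ (Q+1) + y + 1) ^ (q-1)
            * ((x ^ (Q+1) + x + 1) * (y ^ (Q+1) + y + 1))
          = (1 + y ^ Q + y ^ (Q+1)) * (x ^ (Q+1) + x + 1) := by
        calc y ^ (Q+1) * (y ^ (Q+1) + y + 1) ^ (q-1)
              * ((x ^ (Q+1) + x + 1) * (y ^ (Q+1) + y + 1))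
            = (y ^ (Q+1) * ((y ^ (Q+1) + y + 1) ^ (q-1) * (y ^ (Q+1) + y + 1)))
              * (x ^ (Q+1) + x + 1) := by ring
          _ = (y ^ (Q+1) * (y ^ (Q+1) + y + 1) ^ q) * (x ^ (Q+1) + x + 1) := by rw [hDyq]
          _ = (1 + y ^ Q + y ^ (Q+1)) * (x ^ (Q+1) + x + 1) := by rw [hN y hy]
      rw [← h1, ← h2, hxy]
    -- z, s
    have hs0 : x + y ≠ 0 := fun h => hne (hcancel x y h)
    -- z ≠ 0 sublemma
    have hzlem : ∀ a b : F, a ^ (q+1) = 1 → b ^ (q+1) = 1 → a * b + b + 1 = 0 → a = b := by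
      intro a b ha hb hz
      have hb0 := hne0 b hb
      have hab : a * b = b + 1 := hcancel _ _ (by linear_combination hz)
      have h1 : (a*b) ^ (q+1) = (b+1) ^ (q+1) := by rw [hab]
      have h2 : (b+1) ^ (q+1) = (b+1) ^ q * (b+1) := pow_succ _ _
      have h3 : (b+1) ^ q = b ^ q + 1 := by
        rw [hq]
        have h := frob k b 1
        rwa [one_pow] at h
      have h4 : (a*b) ^ (q+1) = 1 := by rw [mul_pow, ha, hb, one_mul]
      have h6 : b ^ q * b = 1 := by rw [← pow_succ]; exact hb
      have h5 : b ^ q + b = 1 := by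
        have hT : (1:F) = (b ^ q + 1) * (b + 1) := by rw [← h3, ← h2, ← h1, h4]
        linear_combination -hT - h6 - htwo
      have h7 : (b ^ q + b) * b = 1 * b := by rw [h5]
      have hb2 : b * b = b + 1 := by linear_combination h7 - h6 - htwo
      have h8 : a * b = b * b := by rw [hab, ← hb2]
      exact mul_right_cancel₀ hb0 h8
    have hz0 : x*y + y + 1 ≠ 0 := fun h => hne (hzlem x y hx hy h)
    have hz'0 : x*y + x + 1 ≠ 0 := fun h =>
      hne ((hzlem y x hy hx (by linear_combination h)).symm)
    -- main char-2 identity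
    have hfrobQ : ∀ a b : F, (a + b) ^ Q = a ^ Q + b ^ Q := by
      intro a b; rw [hQ]; exact frob ℓ a b
    have hE : (x+y) ^ Q * (x*y + y + 1) = (x+y) * ((x*y + y + 1) ^ Q) := by
      refine hcancel _ _ ?_
      rw [hfrobQ x y, hfrobQ (x*y + y) 1, hfrobQ (x*y) y, mul_pow, one_pow]
      have hpx : x ^ (Q+1) = x ^ Q * x := pow_succ x Q
      have hpy : y ^ (Q+1) = y ^ Q * y := pow_succ y Q
      rw [hpx, hpy] at hkey
      linear_combination -hkey +
        ((1 + x ^ Q + x ^ Q * x) * (y ^ Q * y + y + 1)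
          - (x * y * x ^ Q * y ^ Q + x * x ^ Q + 1)) * htwo
    -- w := s / z
    have hwQ : ((x+y) / (x*y + y + 1)) ^ Q = (x+y) / (x*y + y + 1) := by
      rw [div_pow, div_eq_div_iff (pow_ne_zero Q hz0) hz0]
      linear_combination hE
    have hw2 : ((x+y) / (x*y + y + 1)) ^ (2:ℕ) ^ ℓ = (x+y) / (x*y + y + 1) := by
      rw [← hQ]; exact hwQ
    have hwq : ((x+y) / (x*y + y + 1)) ^ q = (x+y) / (x*y + y + 1) := by
      rw [hq]; exact hlift _ hw2
    have hxinv : x ^ q = x⁻¹ := hinv x hx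
    have hyinv : y ^ q = y⁻¹ := hinv y hy
    have hsq : (x+y) ^ q * (x*y) = x + y := by
      rw [hq, frob k x y, ← hq, hxinv, hyinv]
      field_simp
      ring
    have hzq : (x*y + y + 1) ^ q * (x*y) = x*y + x + 1 := by
      rw [hq, frob k (x*y + y) 1, frob k (x*y) y, one_pow, mul_pow, ← hq,
        hxinv, hyinv]
      field_simp
      ring
    have hcross : (x+y) ^ q * (x*y + y + 1) = (x+y) * (x*y + y + 1) ^ q := by
      have h := hwq
      rw [div_pow] at h
      rw [div_eq_div_iff (pow_ne_zero q hz0) hz0] at h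
      exact h
    have hfin : (x+y) * (x*y + x + 1) = (x+y) * (x*y + y + 1) := by
      calc (x+y) * (x*y + x + 1) = (x+y) * ((x*y + y + 1) ^ q * (x*y)) := by rw [hzq]
        _ = ((x+y) * (x*y + y + 1) ^ q) * (x*y) := by ring
        _ = ((x+y) ^ q * (x*y + y + 1)) * (x*y) := by rw [hcross]
        _ = ((x+y) ^ q * (x*y)) * (x*y + y + 1) := by ring
        _ = (x+y) * (x*y + y + 1) := by rw [hsq]
    have hzz : x*y + x + 1 = x*y + y + 1 := mul_left_cancel₀ hs0 hfin
    exact hne (by linear_combination hzz)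
  have hfinset : Set.Finite {x : F | x ^ (q+1) = 1} := Set.toFinite _
  exact (hfinset.injOn_iff_bijOn_of_mapsTo hmaps).mp hinj
end

section
/- Let k and ℓ be positive integers with ord₂(ℓ) ≠ ord₂(k), and set q := 2^k, Q := 2^ℓ, and D(X) := X^Q + X + 1 ∈ F₂[X]. Then the map x ↦ x^{Q+1} · D(x)^{q-1} permutes the group μ_{q+1} of (q+1)-th roots of unity in F_{q²}. -/
/-- Auxiliary: if `e ∣ 2*l` but `e ∤ l` then the 2-adic valuation of `e` is one more
than that of `l`. -/
lemma aux_fact2 {e l : ℕ} (he : e ≠ 0) (hl : l ≠ 0) (hd : e ∣ 2 * l) (hnd : ¬ e ∣ l) :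
    e.factorization 2 = l.factorization 2 + 1 := by
  have h2l : 2 * l ≠ 0 := by positivity
  have hle : e.factorization ≤ (2 * l).factorization :=
    (Nat.factorization_le_iff_dvd he h2l).2 hd
  have hmul : (2 * l).factorization = (2 : ℕ).factorization + l.factorization :=
    Nat.factorization_mul (by norm_num) hl
  have h2fact : (2 : ℕ).factorization = Finsupp.single 2 1 := Nat.Prime.factorization Nat.prime_two
  have hle2 : e.factorization 2 ≤ l.factorization 2 + 1 := by
    have := Finsupp.le_def.1 hle 2
    rw [hmul] at this
    simp [h2fact] at this
    omega
  by_contra hne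
  have hle2' : e.factorization 2 ≤ l.factorization 2 := by omega
  apply hnd
  rw [← Nat.factorization_le_iff_dvd he hl]
  rw [Finsupp.le_def]
  intro p
  by_cases hp : p = 2
  · subst hp; exact hle2'
  · have := Finsupp.le_def.1 hle p
    rw [hmul] at this
    simpa [h2fact, Finsupp.single_apply, hp, Ne.symm hp] using this

/-- Auxiliary number theory: if `n > 1` divides both `2^l + 1` and `2^k + 1`
(with `l, k > 0`), then `l` and `k` have the same 2-adic valuation. -/
lemma aux_nt {k l n : ℕ} (hk : 0 < k) (hl : 0 < l) (hn : 1 < n)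
    (h1 : n ∣ 2 ^ l + 1) (h2 : n ∣ 2 ^ k + 1) :
    padicValNat 2 l = padicValNat 2 k := by
  have hodd : ¬ 2 ∣ n := by
    intro h
    have h2d : (2 : ℕ) ∣ 2 ^ l + 1 := h.trans h1
    have h2p : (2 : ℕ) ∣ 2 ^ l := dvd_pow_self 2 hl.ne'
    omega
  set e := orderOf (2 : ZMod n) with he
  have key : ∀ m : ℕ, 0 < m → n ∣ 2 ^ m + 1 → e ∣ 2 * m ∧ ¬ e ∣ m := by
    intro m hm hdvd
    have h0 : ((2 ^ m + 1 : ℕ) : ZMod n) = 0 :=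
      (ZMod.natCast_eq_zero_iff _ _).2 hdvd
    push_cast at h0
    have hneg : (2 : ZMod n) ^ m = -1 := by linear_combination h0
    constructor
    · apply orderOf_dvd_of_pow_eq_one
      rw [mul_comm, pow_mul, hneg]
      ring
    · intro hdvd'
      have h1' : (2 : ZMod n) ^ m = 1 := orderOf_dvd_iff_pow_eq_one.1 hdvd'
      rw [h1'] at hneg
      have hz : ((2 : ℕ) : ZMod n) = 0 := by push_cast; linear_combination hneg
      have hn2 : n ∣ 2 := (ZMod.natCast_eq_zero_iff _ _).1 hz
      have := Nat.le_of_dvd (by norm_num) hn2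
      interval_cases n
      · exact hodd (dvd_refl 2)
  obtain ⟨hd1, hnd1⟩ := key l hl h1
  obtain ⟨hd2, hnd2⟩ := key k hk h2
  have he0 : e ≠ 0 := by
    intro h
    rw [h] at hd1
    have := zero_dvd_iff.1 hd1
    omega
  have f1 := aux_fact2 he0 hl.ne' hd1 hnd1
  have f2 := aux_fact2 he0 hk.ne' hd2 hnd2
  rw [← Nat.factorization_def l Nat.prime_two, ← Nat.factorization_def k Nat.prime_two]
  omega

/-- Lemma 4.2: for `q = 2^k`, `Q = 2^ℓ` with `ord₂(ℓ) ≠ ord₂(k)` and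
`D(X) = X^Q + X + 1`, the map `x ↦ x^{Q+1} D(x)^{q-1}` permutes `μ_{q+1}`. -/
theorem stmt_6 (k ℓ : ℕ) (hk : 0 < k) (hl : 0 < ℓ)
    (hord : padicValNat 2 ℓ ≠ padicValNat 2 k)
    (q Q : ℕ) (hq : q = 2 ^ k) (hQ : Q = 2 ^ ℓ)
    (F : Type) [Field F] [Fintype F] (hF : Fintype.card F = q ^ 2)
    (D : Polynomial F) (hD : D = Polynomial.X ^ Q + Polynomial.X + 1) :
    Set.BijOn (fun x : F => x ^ (Q + 1) * D.eval x ^ (q - 1))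
      {x : F | x ^ (q + 1) = 1} {x : F | x ^ (q + 1) = 1} := by
  subst hD
  -- the characteristic is 2
  obtain ⟨n, hp, hcard⟩ := FiniteField.card F (ringChar F)
  have hchar2 : ringChar F = 2 := by
    have hdvd : ringChar F ∣ 2 ^ (k * 2) := by
      have : ringChar F ^ (n : ℕ) = 2 ^ (k * 2) := by
        rw [← hcard, hF, hq, ← pow_mul]
      exact this ▸ dvd_pow_self (ringChar F) n.ne_zero
    exact (Nat.prime_dvd_prime_iff_eq hp Nat.prime_two).1 (hp.dvd_of_dvd_pow hdvd)
  haveI : CharP F 2 := hchar2 ▸ ringChar.charP F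
  haveI : Fact (Nat.Prime 2) := ⟨Nat.prime_two⟩
  have h2 : (2 : F) = 0 := by
    have := CharP.cast_eq_zero F 2
    exact_mod_cast this
  have frobQ : ∀ a b : F, (a + b) ^ Q = a ^ Q + b ^ Q := by
    intro a b; rw [hQ]; exact add_pow_char_pow ..
  have frobq : ∀ a b : F, (a + b) ^ q = a ^ q + b ^ q := by
    intro a b; rw [hq]; exact add_pow_char_pow ..
  have h1q : 1 ≤ q := by rw [hq]; exact Nat.one_le_two_pow
  have hq0 : q ≠ 0 := by omega
  have hQ0 : Q ≠ 0 := by rw [hQ]; positivity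
  -- no roots of `X^Q + X + 1` on `μ_{q+1}`
  have hNroot : ∀ x : F, x ^ (q + 1) = 1 → x ^ Q + x + 1 ≠ 0 := by
    intro x hx h0
    have hx0 : x ≠ 0 := by
      rintro rfl
      rw [zero_pow (by omega)] at hx
      exact zero_ne_one hx
    have hxx : x ^ q * x = 1 := by rw [← pow_succ]; exact hx
    have hxQ : x ^ Q = x + 1 := by linear_combination h0 - (x + 1) * h2
    have h1 : (x + 1) ^ (q + 1) = 1 := by
      rw [← hxQ, pow_right_comm, hx, one_pow]
    have h2q : x ^ q + x = 1 := by
      rw [pow_succ, frobq x 1, one_pow] at h1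
      linear_combination h1 - hxx - h2
    have hxx2 : x ^ 2 + x + 1 = 0 := by
      have hmul : (x ^ q + x) * x = 1 * x := by rw [h2q]
      rw [add_mul, hxx] at hmul
      linear_combination hmul + x * h2
    have hx3 : x ^ 3 = 1 := by linear_combination (x - 1) * hxx2
    have h4 : ∀ m : ℕ, x ^ 4 ^ m = x := by
      intro m
      induction m with
      | zero => simp
      | succ i ih =>
        rw [pow_succ, pow_mul, ih, show (4 : ℕ) = 3 + 1 from rfl, pow_succ, hx3, one_mul]
    have hpow2 : ∀ m : ℕ, Even m → x ^ 2 ^ m = x := by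
      intro m ⟨r, hr⟩
      have : (2 : ℕ) ^ m = 4 ^ r := by
        rw [hr, ← two_mul, pow_mul]; norm_num
      rw [this, h4]
    have hone : (1 : F) ≠ 0 := one_ne_zero
    have hkodd : Odd k := by
      rcases Nat.even_or_odd k with hke | hko
      · exfalso
        have hxq : x ^ q = x := by rw [hq]; exact hpow2 k hke
        rw [hxq] at h2q
        exact hone (by linear_combination x * h2 - h2q)
      · exact hko
    have hlodd : Odd ℓ := by
      rcases Nat.even_or_odd ℓ with hle | hlo
      · exfalso
        have hxQ' : x ^ Q = x := by rw [hQ]; exact hpow2 ℓ hle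
        rw [hxQ'] at hxQ
        exact hone (by linear_combination -hxQ)
      · exact hlo
    apply hord
    obtain ⟨r, hr⟩ := hlodd
    obtain ⟨t, ht⟩ := hkodd
    rw [padicValNat.eq_zero_of_not_dvd (by omega : ¬ 2 ∣ ℓ),
      padicValNat.eq_zero_of_not_dvd (by omega : ¬ 2 ∣ k)]
  -- evaluation of D
  have hev : ∀ x : F, (Polynomial.X ^ Q + Polynomial.X + 1 : Polynomial F).eval x
      = x ^ Q + x + 1 := by
    intro x; simp
  -- the exponent identity
  have hqq : (q - 1) * (q + 1) = q * q - 1 := by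
    have h : 1 ≤ q * q := Nat.one_le_iff_ne_zero.2 (by positivity)
    zify [h1q, h]
    ring
  have hcard1 : Fintype.card F - 1 = (q - 1) * (q + 1) := by
    rw [hqq, hF, pow_two]
  -- MapsTo
  have hmaps : Set.MapsTo (fun x : F => x ^ (Q + 1)
      * (Polynomial.X ^ Q + Polynomial.X + 1 : Polynomial F).eval x ^ (q - 1))
      {x : F | x ^ (q + 1) = 1} {x : F | x ^ (q + 1) = 1} := by
    intro x hx
    simp only [Set.mem_setOf_eq] at hx ⊢
    rw [hev]
    have hNx := hNroot x hx
    rw [mul_pow, ← pow_mul, ← pow_mul, mul_comm (Q + 1) (q + 1), pow_mul, hx, one_pow,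
      ← hcard1, FiniteField.pow_card_sub_one_eq_one _ hNx, one_mul]
  -- InjOn
  have hinj : Set.InjOn (fun x : F => x ^ (Q + 1)
      * (Polynomial.X ^ Q + Polynomial.X + 1 : Polynomial F).eval x ^ (q - 1))
      {x : F | x ^ (q + 1) = 1} := by
    intro x hx y hy heq
    simp only [Set.mem_setOf_eq] at hx hy
    simp only [hev] at heq
    by_contra hxy
    have hx0 : x ≠ 0 := by
      rintro rfl; rw [zero_pow (by omega)] at hx; exact zero_ne_one hx
    have hy0 : y ≠ 0 := by
      rintro rfl; rw [zero_pow (by omega)] at hy; exact zero_ne_one hy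
    have hxx : x ^ q * x = 1 := by rw [← pow_succ]; exact hx
    have hyy : y ^ q * y = 1 := by rw [← pow_succ]; exact hy
    have hNx := hNroot x hx
    have hNy := hNroot y hy
    have hs : x + y ≠ 0 := by
      intro h
      exact hxy (by linear_combination h - y * h2)
    -- Frobenius of the trinomial
    have hNq : ∀ z : F, (z ^ Q + z + 1) ^ q = (z ^ q) ^ Q + z ^ q + 1 := by
      intro z
      rw [frobq (z ^ Q + z) 1, frobq (z ^ Q) z, one_pow, pow_right_comm]
    have hpow : ∀ z : F, z ^ (q - 1) * z = z ^ q := by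
      intro z
      rw [← pow_succ]
      congr 1
      omega
    -- from f(x) = f(y) to the polynomial relation E1
    have E1' : x ^ (Q + 1) * ((x ^ Q + x + 1) ^ (q - 1) * (x ^ Q + x + 1)) * (y ^ Q + y + 1)
        = y ^ (Q + 1) * ((y ^ Q + y + 1) ^ (q - 1) * (y ^ Q + y + 1)) * (x ^ Q + x + 1) := by
      linear_combination ((x ^ Q + x + 1) * (y ^ Q + y + 1)) * heq
    rw [hpow (x ^ Q + x + 1), hpow (y ^ Q + y + 1)] at E1'
    have hAx : ∀ z : F, z ^ q * z = 1 → z ^ (Q + 1) * ((z ^ Q + z + 1) ^ q)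
        = z + z ^ Q + z ^ Q * z := by
      intro z hz
      rw [hNq z]
      calc z ^ (Q + 1) * ((z ^ q) ^ Q + z ^ q + 1)
          = (z ^ q * z) ^ Q * z + z ^ Q * (z ^ q * z) + z ^ Q * z := by
            rw [mul_pow]; ring
        _ = z + z ^ Q + z ^ Q * z := by rw [hz, one_pow, mul_one, one_mul]
    rw [mul_assoc, mul_assoc, ← mul_assoc (x ^ (Q+1)), ← mul_assoc (y ^ (Q+1)),
      hAx x hxx, hAx y hyy] at E1'
    -- E1' : (x + x^Q + x^Q*x) * (y^Q + y + 1) = (y + y^Q + y^Q*y) * (x^Q + x + 1)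
    have key1 : (x * y + y + 1) * (x ^ Q + y ^ Q)
        = (x ^ Q * y ^ Q + x ^ Q + 1) * (x + y) := by
      linear_combination E1' + (y ^ Q * (x * y + y + 1) - x * (x ^ Q * y ^ Q + x ^ Q + 1)) * h2
    have key2 : (x * y + x + 1) * (x ^ Q + y ^ Q)
        = (x ^ Q * y ^ Q + y ^ Q + 1) * (x + y) := by
      linear_combination -E1' + (x ^ Q * (x * y + x + 1) - y * (x ^ Q * y ^ Q + y ^ Q + 1)) * h2
    -- a, b nonzero
    have hs' : x ^ Q + y ^ Q ≠ 0 := by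
      rw [← frobQ]; exact pow_ne_zero _ hs
    have haQ : (x * y + x + 1) ^ Q = x ^ Q * y ^ Q + x ^ Q + 1 := by
      rw [frobQ (x * y + x) 1, frobQ (x * y) x, mul_pow, one_pow]
    have hbQ : (x * y + y + 1) ^ Q = x ^ Q * y ^ Q + y ^ Q + 1 := by
      rw [frobQ (x * y + y) 1, frobQ (x * y) y, mul_pow, one_pow]
    have hab : (x * y + x + 1) + (x * y + y + 1) = x + y := by
      linear_combination (x * y + 1) * h2
    have ha : x * y + x + 1 ≠ 0 := by
      intro h
      have hbz : (x * y + y + 1) * (x ^ Q + y ^ Q) = 0 := by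
        rw [key1, ← haQ, h]
        rw [zero_pow hQ0, zero_mul]
      have hb0 : x * y + y + 1 = 0 := by
        rcases mul_eq_zero.1 hbz with h' | h'
        · exact h'
        · exact absurd h' hs'
      apply hs
      rw [← hab, h, hb0, add_zero]
    have hb : x * y + y + 1 ≠ 0 := by
      intro h
      have haz : (x * y + x + 1) * (x ^ Q + y ^ Q) = 0 := by
        rw [key2, ← hbQ, h]
        rw [zero_pow hQ0, zero_mul]
      have ha0 : x * y + x + 1 = 0 := by
        rcases mul_eq_zero.1 haz with h' | h'
        · exact h'
        · exact absurd h' hs'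
      exact ha ha0
    -- a^{Q+1} = b^{Q+1}
    have e2' : (x * y + x + 1) ^ Q * (x * y + x + 1) * (x ^ Q + y ^ Q)
        = (x * y + y + 1) ^ Q * (x * y + y + 1) * (x ^ Q + y ^ Q) := by
      rw [haQ, hbQ]
      linear_combination (x ^ Q * y ^ Q + x ^ Q + 1) * key2 - (x ^ Q * y ^ Q + y ^ Q + 1) * key1
    have e2 : (x * y + x + 1) ^ (Q + 1) = (x * y + y + 1) ^ (Q + 1) := by
      rw [pow_succ, pow_succ]
      exact mul_right_cancel₀ hs' e2'
    -- a^{q+1} = b^{q+1}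
    have hp0 : x * y ≠ 0 := mul_ne_zero hx0 hy0
    have haq : (x * y + x + 1) ^ q = x ^ q * y ^ q + x ^ q + 1 := by
      rw [frobq (x * y + x) 1, frobq (x * y) x, mul_pow, one_pow]
    have hbq : (x * y + y + 1) ^ q = x ^ q * y ^ q + y ^ q + 1 := by
      rw [frobq (x * y + y) 1, frobq (x * y) y, mul_pow, one_pow]
    have pa : (x * y) * (x * y + x + 1) ^ q = x * y + y + 1 := by
      rw [haq]
      calc (x * y) * (x ^ q * y ^ q + x ^ q + 1)
          = (x ^ q * x) * (y ^ q * y) + (x ^ q * x) * y + x * y := by ring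
        _ = x * y + y + 1 := by rw [hxx, hyy]; ring
    have pb : (x * y) * (x * y + y + 1) ^ q = x * y + x + 1 := by
      rw [hbq]
      calc (x * y) * (x ^ q * y ^ q + y ^ q + 1)
          = (x ^ q * x) * (y ^ q * y) + (y ^ q * y) * x + x * y := by ring
        _ = x * y + x + 1 := by rw [hxx, hyy]; ring
    have e3 : (x * y + x + 1) ^ (q + 1) = (x * y + y + 1) ^ (q + 1) := by
      have step : (x * y) * (x * y + x + 1) ^ (q + 1) = (x * y) * (x * y + y + 1) ^ (q + 1) := by
        rw [pow_succ, pow_succ]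
        calc (x * y) * ((x * y + x + 1) ^ q * (x * y + x + 1))
            = ((x * y) * (x * y + x + 1) ^ q) * (x * y + x + 1) := by ring
          _ = (x * y + y + 1) * (x * y + x + 1) := by rw [pa]
          _ = ((x * y) * (x * y + y + 1) ^ q) * (x * y + y + 1) := by rw [pb]; ring
          _ = (x * y) * ((x * y + y + 1) ^ q * (x * y + y + 1)) := by ring
      exact mul_left_cancel₀ hp0 step
    -- the quotient has order dividing both Q+1 and q+1
    set m : F := (x * y + x + 1) * (x * y + y + 1)⁻¹ with hmdef
    have hm2 : m ^ (Q + 1) = 1 := by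
      rw [hmdef, mul_pow, inv_pow]
      exact (mul_inv_eq_one₀ (pow_ne_zero _ hb)).2 e2
    have hm1 : m ^ (q + 1) = 1 := by
      rw [hmdef, mul_pow, inv_pow]
      exact (mul_inv_eq_one₀ (pow_ne_zero _ hb)).2 e3
    have hd1 : orderOf m ∣ Q + 1 := orderOf_dvd_of_pow_eq_one hm2
    have hd2 : orderOf m ∣ q + 1 := orderOf_dvd_of_pow_eq_one hm1
    have hno0 : orderOf m ≠ 0 := by
      intro h
      rw [h] at hd2
      have := zero_dvd_iff.1 hd2
      omega
    rcases Nat.lt_or_ge (orderOf m) 2 with hlt | hge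
    · -- order 1 : a = b, so x = y
      have hm : m = 1 := orderOf_eq_one_iff.1 (by omega)
      have hAB : x * y + x + 1 = x * y + y + 1 :=
        (mul_inv_eq_one₀ hb).1 hm
      exact hxy (by linear_combination hAB)
    · rw [hQ] at hd1
      rw [hq] at hd2
      exact hord (aux_nt hk hl hge hd1 hd2)
  exact (Set.Finite.injOn_iff_bijOn_of_mapsTo (Set.toFinite _) hmaps).1 hinj
end

section
/- Let k, ℓ, t be positive integers with k even, set q := 2^k, Q := 2^ℓ, and suppose ord₂(ℓ) ≤ ord₂(k). Let D(X) := X^{Q+1} + X + 1 and B(X) := D(X) · (X^{2t} + X^t + 1). If r is a positive integer with gcd(r, q-1) = 1 and r ≡ Q + 1 + 2t (mod q+1), then X^r · B(X^{q-1}) is a permutation polynomial of F_{q²}. -/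
lemma aux_pow_sub_one_dvd {a b : ℕ} (h : a ∣ b) : 2^a - 1 ∣ 2^b - 1 := by
  obtain ⟨c, rfl⟩ := h
  calc 2^a - 1 ∣ (2^a)^c - 1^c := Nat.sub_dvd_pow_sub_pow _ 1 c
  _ = 2^(a*c) - 1 := by rw [one_pow, pow_mul]

lemma aux_dvd_gcd_pow {o : ℕ} : ∀ a b : ℕ, o ∣ 2^a - 1 → o ∣ 2^b - 1 → o ∣ 2^(Nat.gcd a b) - 1 := by
  intro a
  induction a using Nat.strong_induction_on with
  | _ a ih =>
    intro b ha hb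
    rcases Nat.eq_zero_or_pos a with rfl | hpos
    · simpa using hb
    · rw [Nat.gcd_rec]
      have hba : b % a < a := Nat.mod_lt _ hpos
      refine ih _ hba _ ?_ ha
      have h1 : o ∣ 2^(a * (b / a)) - 1 := ha.trans (aux_pow_sub_one_dvd ⟨b / a, rfl⟩)
      have h2 : 2^b - 2^(b % a) = 2^(b % a) * (2^(a * (b/a)) - 1) := by
        rw [Nat.mul_sub, mul_one, ← pow_add]
        congr 2
        rw [Nat.add_comm]
        exact (Nat.div_add_mod b a).symm
      have h3 : o ∣ 2^b - 2^(b % a) := h2 ▸ h1.mul_left _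
      have h4 : 2^(b % a) - 1 = (2^b - 1) - (2^b - 2^(b % a)) := by
        have hle : 2^(b % a) ≤ 2^b := Nat.pow_le_pow_right (by norm_num) (Nat.mod_le _ _)
        have h1le : 1 ≤ 2^(b % a) := Nat.one_le_two_pow
        omega
      rw [h4]
      exact Nat.dvd_sub hb h3

lemma aux_gcd_two_mul {l k : ℕ} (hl : 0 < l) (hk : 0 < k)
    (hord : padicValNat 2 l ≤ padicValNat 2 k) : Nat.gcd l (2*k) = Nat.gcd l k := by
  have hfact : Fact (Nat.Prime 2) := ⟨Nat.prime_two⟩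
  apply Nat.dvd_antisymm
  · set g := Nat.gcd l (2*k) with hg
    have hgl : g ∣ l := Nat.gcd_dvd_left _ _
    have hg2k : g ∣ 2*k := Nat.gcd_dvd_right _ _
    have hgpos : 0 < g := Nat.gcd_pos_of_pos_left _ hl
    set v := padicValNat 2 g with hv
    set m := g / 2^v with hm
    have hsplit : 2^v * m = g := Nat.mul_div_cancel' pow_padicValNat_dvd
    have hmodd : ¬ 2 ∣ m := by
      intro h2m
      have hdd : 2^(v+1) ∣ g := by
        rw [← hsplit]
        obtain ⟨m', hm'⟩ := h2m
        exact ⟨m', by rw [hm']; ring⟩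
      have := (padicValNat_dvd_iff_le hgpos.ne').mp hdd
      omega
    have hmk : m ∣ k := by
      have hmdvd : m ∣ 2 * k := dvd_trans (Dvd.intro_left _ hsplit) hg2k
      exact Nat.Coprime.dvd_of_dvd_mul_left ((Nat.coprime_two_right).mpr (Nat.odd_iff.mpr (by omega))) hmdvd
    have hvk : 2^v ∣ k := by
      have hvl : v ≤ padicValNat 2 l := by
        have : 2^v ∣ l := dvd_trans ⟨m, hsplit.symm⟩ hgl
        exact (padicValNat_dvd_iff_le hl.ne').mp this
      calc 2^v ∣ 2^(padicValNat 2 k) := pow_dvd_pow 2 (le_trans hvl hord)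
      _ ∣ k := pow_padicValNat_dvd
    have : 2^v * m ∣ k := Nat.Coprime.mul_dvd_of_dvd_of_dvd
      (Nat.Coprime.pow_left _ ((Nat.coprime_two_left).mpr (Nat.odd_iff.mpr (by omega)))) hvk hmk
    rw [hsplit] at this
    exact Nat.dvd_gcd hgl this
  · exact Nat.dvd_gcd (Nat.gcd_dvd_left _ _) ((Nat.gcd_dvd_right _ _).trans ⟨2, by ring⟩)

lemma aux_ord_dvd {F : Type} [Field F] {V : F} (hV : V ≠ 0) {a : ℕ} (h : V^(2^a) = V) :
    orderOf V ∣ 2^a - 1 := by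
  apply orderOf_dvd_of_pow_eq_one
  have h1 : 1 ≤ 2^a := Nat.one_le_two_pow
  have h2 : V^(2^a - 1) * V = V := by
    rw [← pow_succ]
    have heq : 2^a - 1 + 1 = 2^a := by omega
    rw [heq, h]
  exact mul_right_cancel₀ hV (h2.trans (one_mul V).symm)

lemma aux_pow_eq_self {F : Type} [Field F] {V : F} {a : ℕ}
    (h : orderOf V ∣ 2^a - 1) : V^(2^a) = V := by
  have h1 : 1 ≤ 2^a := Nat.one_le_two_pow
  have h2 : V^(2^a - 1) = 1 := orderOf_dvd_iff_pow_eq_one.mp h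
  calc V^(2^a) = V^(2^a - 1 + 1) := by congr 1; omega
  _ = V^(2^a-1) * V := pow_succ _ _
  _ = V := by rw [h2, one_mul]

lemma aux_sq_sub_one {k : ℕ} : (2^k+1) * (2^k-1) = 2^(2*k) - 1 := by
  have h1 : 1 ≤ 2^k := Nat.one_le_two_pow
  have h2 : 2^(2*k) = 2^k * 2^k := by rw [two_mul, pow_add]
  have h3 : 1 ≤ 2^k * 2^k := Nat.one_le_iff_ne_zero.mpr (by positivity)
  rw [h2]
  zify [h1, h3]
  ring

lemma aux_char_two (F : Type) [Field F] [Fintype F] {n : ℕ} (hn : n ≠ 0)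
    (hF : Fintype.card F = 2^n) : CharP F 2 := by
  have h0 : ((2^n : ℕ) : F) = 0 := by rw [← hF]; exact FiniteField.cast_card_eq_zero F
  push_cast at h0
  have h2 : (2 : F) = 0 := pow_eq_zero_iff hn |>.mp h0
  have hch : ringChar F = 2 :=
    CharP.ringChar_of_prime_eq_zero Nat.prime_two (by exact_mod_cast h2)
  rw [← hch]
  exact ringChar.charP F

lemma aux_3_dvd {n : ℕ} (hn : Even n) : (3:ℕ) ∣ 2^n - 1 := by
  obtain ⟨m, rfl⟩ := hn
  have : (3:ℕ) ∣ 4^m - 1^m := Nat.sub_dvd_pow_sub_pow 4 1 m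
  rw [one_pow] at this
  have h4 : (4:ℕ)^m = 2^(m+m) := by
    rw [show m+m = 2*m from (two_mul m).symm, pow_mul]; norm_num
  rwa [h4] at this

lemma aux_mu_fix {k l : ℕ} (hk : 0 < k) (hl : 0 < l)
    (hord : padicValNat 2 l ≤ padicValNat 2 k)
    {F : Type} [Field F] {z : F} (hz : z^(2^k+1) = 1) (hfix : z^(2^l) = z) : z = 1 := by
  have hz0 : z ≠ 0 := by
    intro h
    rw [h, zero_pow (by positivity)] at hz
    exact zero_ne_one hz
  have ho1 : orderOf z ∣ 2^l - 1 := aux_ord_dvd hz0 hfix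
  have ho2 : orderOf z ∣ 2^k + 1 := orderOf_dvd_of_pow_eq_one hz
  have ho3 : orderOf z ∣ 2^(2*k) - 1 := ho2.trans ⟨2^k - 1, aux_sq_sub_one.symm⟩
  have ho4 := aux_dvd_gcd_pow l (2*k) ho1 ho3
  rw [aux_gcd_two_mul hl hk hord] at ho4
  have ho5 : orderOf z ∣ 2^k - 1 := ho4.trans (aux_pow_sub_one_dvd (Nat.gcd_dvd_right l k))
  have harith : (2^k+1) - (2^k-1) = 2 := by
    have := Nat.one_le_two_pow (n := k); omega
  have ho6 : orderOf z ∣ 2 := harith ▸ Nat.dvd_sub ho2 ho5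
  have h2l : 2 ∣ 2^l := dvd_pow_self 2 hl.ne'
  have h1le : 1 ≤ 2^l := Nat.one_le_two_pow
  have hodd : ¬ 2 ∣ (2^l - 1) := by omega
  rcases (Nat.dvd_prime Nat.prime_two).mp ho6 with h | h
  · exact orderOf_eq_one_iff.mp h
  · exact absurd (h ▸ ho1) hodd

lemma core_inj {k l : ℕ} (hk : 0 < k) (hl : 0 < l) (hke : Even k)
    (hord : padicValNat 2 l ≤ padicValNat 2 k)
    {F : Type} [Field F] [Fintype F] (hF : Fintype.card F = 2^(2*k))
    {x y s : F} (hx : x^(2^k+1) = 1) (hy : y^(2^k+1) = 1)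
    (hsx : x^(2^l+1)+x^(2^l)+1 = s*(x^(2^l+1)+x+1))
    (hsy : y^(2^l+1)+y^(2^l)+1 = s*(y^(2^l+1)+y+1)) : x = y := by
  classical
  haveI : Fact (Nat.Prime 2) := ⟨Nat.prime_two⟩
  haveI hchar : CharP F 2 := aux_char_two F (by positivity) hF
  have htwo : (2:F) = 0 := by exact_mod_cast CharP.cast_eq_zero F 2
  have frob : ∀ (a b : F) (n : ℕ), (a+b)^(2^n) = a^(2^n)+b^(2^n) :=
    fun a b n => add_pow_char_pow a b 2 n
  have hx0 : x ≠ 0 := by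
    intro h; rw [h, zero_pow (by positivity)] at hx; exact zero_ne_one hx
  have hy0 : y ≠ 0 := by
    intro h; rw [h, zero_pow (by positivity)] at hy; exact zero_ne_one hy
  -- cube root of unity
  have h3card : (3:ℕ) ∣ Fintype.card Fˣ := by
    rw [Fintype.card_units, hF]
    exact aux_3_dvd (even_two_mul k)
  obtain ⟨u, hu⟩ := exists_prime_orderOf_dvd_card 3 h3card
  set ω : F := (u : F) with hωdef
  have horder : orderOf ω = 3 := by rw [hωdef, orderOf_units, hu]
  have hw3 : ω^3 = 1 := by rw [← horder]; exact pow_orderOf_eq_one ω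
  have hw1 : ω ≠ 1 := by
    intro h; rw [h, orderOf_one] at horder; norm_num at horder
  have hww : ω^2 + ω + 1 = 0 := by
    have hcube : (ω+1)*(ω^2+ω+1) = 0 := by linear_combination hw3 + (ω^2+ω+1)*htwo
    rcases mul_eq_zero.mp hcube with h | h
    · exact absurd (by linear_combination h - htwo : ω = 1) hw1
    · exact h
  have hq3 : ω^(2^k) = ω := aux_pow_eq_self (horder ▸ aux_3_dvd hke)
  have hnotmu : ∀ z : F, z^(2^k+1) = 1 → z ≠ ω ∧ z ≠ ω^2 := by
    intro z hz
    have hwq1 : ω^(2^k+1) = ω^2 := by rw [pow_succ, hq3, sq]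
    constructor
    · intro h
      rw [h, hwq1] at hz
      have h4 := hw3
      rw [pow_succ, hz, one_mul] at h4
      exact hw1 h4
    · intro h
      rw [h] at hz
      have hz2 : (ω^(2^k+1))^2 = 1 := by
        rw [← pow_mul, mul_comm (2^k+1) 2, pow_mul, hz]
      rw [hwq1] at hz2
      have h4 : ω^4 = 1 := by rw [← hz2]; ring
      have h5 : ω^3 * ω = 1 := by rw [← h4]; ring
      rw [hw3, one_mul] at h5
      exact hw1 h5
  -- K1 identities
  have K1x : x^(2^l)*((s+1)*x+1) = s*x+s+1 := by
    linear_combination hsx + (s*x^(2^l+1) - 1)*htwo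
  have K1y : y^(2^l)*((s+1)*y+1) = s*y+s+1 := by
    linear_combination hsy + (s*y^(2^l+1) - 1)*htwo
  -- denominators nonzero
  have hDen : ∀ z : F, z^(2^k+1) = 1 → z^(2^l)*((s+1)*z+1) = s*z+s+1 → (s+1)*z+1 ≠ 0 := by
    intro z hz K1z h
    have h2 : s*z+s+1 = 0 := by linear_combination z^(2^l)*h - K1z
    have hsz : s = z := by linear_combination h2 - h
    rw [hsz] at h2
    have hfac : (z+ω)*(z+ω^2) = 0 := by
      linear_combination h2 + (-1+ω+z)*hww + (-z)*htwo
    rcases mul_eq_zero.mp hfac with hh | hh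
    · exact (hnotmu z hz).1 (by linear_combination hh - ω*htwo)
    · exact (hnotmu z hz).2 (by linear_combination hh - ω^2*htwo)
  have hDx : (s+1)*x+1 ≠ 0 := hDen x hx K1x
  have hDy : (s+1)*y+1 ≠ 0 := hDen y hy K1y
  -- the four twist identities
  have I1x : (x^(2^l) + ω)*((s+1)*x+1) = (ω+1)*(s+ω+1)*(x+ω) := by
    linear_combination K1x + (-1-ω-s-x)*hww + (1+ω+s)*htwo
  have I2x : (x^(2^l) + ω^2)*((s+1)*x+1) = ω*(s+ω)*(x+ω^2) := by
    linear_combination K1x + (1+ω-ω^2+s-s*ω+x*s)*hww + (-ω-x*s*ω)*htwo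
  have I1y : (y^(2^l) + ω)*((s+1)*y+1) = (ω+1)*(s+ω+1)*(y+ω) := by
    linear_combination K1y + (-1-ω-s-y)*hww + (1+ω+s)*htwo
  have I2y : (y^(2^l) + ω^2)*((s+1)*y+1) = ω*(s+ω)*(y+ω^2) := by
    linear_combination K1y + (1+ω-ω^2+s-s*ω+y*s)*hww + (-ω-y*s*ω)*htwo
  -- the cross ratio V
  have hxw : x+ω ≠ 0 := fun h => (hnotmu x hx).1 (by linear_combination h - htwo*ω)
  have hxw2 : x+ω^2 ≠ 0 := fun h => (hnotmu x hx).2 (by linear_combination h - htwo*ω^2)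
  have hyw : y+ω ≠ 0 := fun h => (hnotmu y hy).1 (by linear_combination h - htwo*ω)
  have hyw2 : y+ω^2 ≠ 0 := fun h => (hnotmu y hy).2 (by linear_combination h - htwo*ω^2)
  have hP1 : (x+ω)*(y+ω^2) ≠ 0 := mul_ne_zero hxw hyw2
  have hP2 : (x+ω^2)*(y+ω) ≠ 0 := mul_ne_zero hxw2 hyw
  have hxq : x^(2^k)*x = 1 := by rw [← pow_succ]; exact hx
  have hyq : y^(2^k)*y = 1 := by rw [← pow_succ]; exact hy
  have hq3b : (ω^2)^(2^k) = ω^2 := by rw [← pow_mul, mul_comm, pow_mul, hq3]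
  have e1 : ((x+ω)*(y+ω^2))^(2^k) = (x^(2^k)+ω)*(y^(2^k)+ω^2) := by
    rw [mul_pow, frob x ω k, frob y (ω^2) k, hq3, hq3b]
  have e2 : ((x+ω^2)*(y+ω))^(2^k) = (x^(2^k)+ω^2)*(y^(2^k)+ω) := by
    rw [mul_pow, frob x (ω^2) k, frob y ω k, hq3, hq3b]
  have r1 : (x^(2^k)+ω)*(y^(2^k)+ω^2)*(x*y) = (x+ω^2)*(y+ω) := by
    linear_combination (1 - ω - y - x*y + x*y*x^(2^k) + x*y*ω)*hww
      + (-y + y*y^(2^k) - y*ω)*hxq + (1 + x*ω)*hyq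
  have r2 : (x^(2^k)+ω^2)*(y^(2^k)+ω)*(x*y) = (x+ω)*(y+ω^2) := by
    linear_combination (1 - ω - x - x*y + x*y*y^(2^k) + x*y*ω)*hww
      + (y*y^(2^k) + y*ω)*hxq + (1 - x - x*ω)*hyq
  have Rel : ((x+ω)*(y+ω^2))^(2^k) * ((x+ω)*(y+ω^2))
      = ((x+ω^2)*(y+ω))^(2^k) * ((x+ω^2)*(y+ω)) := by
    apply mul_right_cancel₀ (mul_ne_zero hx0 hy0)
    rw [e1, e2]
    linear_combination ((x+ω)*(y+ω^2))*r1 - ((x+ω^2)*(y+ω))*r2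
  set V : F := ((x+ω)*(y+ω^2)) / ((x+ω^2)*(y+ω)) with hVdef
  have hV0 : V ≠ 0 := div_ne_zero hP1 hP2
  have hVq : V^(2^k) * V = 1 := by
    rw [hVdef, div_pow, div_mul_div_comm,
      div_eq_one_iff_eq (mul_ne_zero (pow_ne_zero _ hP2) hP2)]
    exact Rel
  have hoq : orderOf V ∣ 2^k+1 := orderOf_dvd_of_pow_eq_one (by rw [pow_succ]; exact hVq)
  have hV2 : V^2 = 1 := by
    rcases Nat.even_or_odd l with hle | hlo
    · -- l even : V^(2^l) = V
      have hQ3 : ω^(2^l) = ω := aux_pow_eq_self (horder ▸ aux_3_dvd hle)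
      have hQ3b : (ω^2)^(2^l) = ω^2 := by rw [← pow_mul, mul_comm, pow_mul, hQ3]
      have eQ1 : ((x+ω)*(y+ω^2))^(2^l) = (x^(2^l)+ω)*(y^(2^l)+ω^2) := by
        rw [mul_pow, frob x ω l, frob y (ω^2) l, hQ3, hQ3b]
      have eQ2 : ((x+ω^2)*(y+ω))^(2^l) = (x^(2^l)+ω^2)*(y^(2^l)+ω) := by
        rw [mul_pow, frob x (ω^2) l, frob y ω l, hQ3, hQ3b]
      have RelQ : ((x+ω)*(y+ω^2))^(2^l) * ((x+ω^2)*(y+ω))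
          = ((x+ω^2)*(y+ω))^(2^l) * ((x+ω)*(y+ω^2)) := by
        apply mul_right_cancel₀ (mul_ne_zero hDx hDy)
        rw [eQ1, eQ2]
        linear_combination ((y^(2^l)+ω^2)*((s+1)*y+1)*((x+ω^2)*(y+ω)))*I1x
          + ((ω+1)*(s+ω+1)*(x+ω)*((x+ω^2)*(y+ω)))*I2y
          - ((y^(2^l)+ω)*((s+1)*y+1)*((x+ω)*(y+ω^2)))*I2x
          - (ω*(s+ω)*(x+ω^2)*((x+ω)*(y+ω^2)))*I1y
      have hVQ : V^(2^l) = V := by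
        rw [hVdef, div_pow, div_eq_div_iff (pow_ne_zero _ hP2) hP2]
        linear_combination RelQ
      have hol : orderOf V ∣ 2^l - 1 := aux_ord_dvd hV0 hVQ
      have ho3 : orderOf V ∣ 2^(2*k) - 1 := hoq.trans ⟨2^k-1, aux_sq_sub_one.symm⟩
      have ho4 := aux_dvd_gcd_pow l (2*k) hol ho3
      rw [aux_gcd_two_mul hl hk hord] at ho4
      have ho5 : orderOf V ∣ 2^k - 1 := ho4.trans (aux_pow_sub_one_dvd (Nat.gcd_dvd_right l k))
      have hVk : V^(2^k) = V := aux_pow_eq_self ho5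
      calc V^2 = V^(2^k)*V := by rw [hVk]; ring
      _ = 1 := hVq
    · -- l odd : V^(2^l) = V⁻¹
      obtain ⟨m, rfl⟩ := hlo
      have he : ω^(2^(2*m)) = ω := aux_pow_eq_self (horder ▸ aux_3_dvd (even_two_mul m))
      have hQ3o : ω^(2^(2*m+1)) = ω^2 := by
        rw [pow_succ 2 (2*m), pow_mul, he]
      have hQ3bo : (ω^2)^(2^(2*m+1)) = ω := by
        rw [← pow_mul, mul_comm, pow_mul, hQ3o]
        calc (ω^2)^2 = ω^3*ω := by ring
        _ = ω := by rw [hw3, one_mul]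
      have eQ1 : ((x+ω)*(y+ω^2))^(2^(2*m+1)) = (x^(2^(2*m+1))+ω^2)*(y^(2^(2*m+1))+ω) := by
        rw [mul_pow, frob x ω (2*m+1), frob y (ω^2) (2*m+1), hQ3o, hQ3bo]
      have eQ2 : ((x+ω^2)*(y+ω))^(2^(2*m+1)) = (x^(2^(2*m+1))+ω)*(y^(2^(2*m+1))+ω^2) := by
        rw [mul_pow, frob x (ω^2) (2*m+1), frob y ω (2*m+1), hQ3o, hQ3bo]
      have RelQ : ((x+ω)*(y+ω^2))^(2^(2*m+1)) * ((x+ω)*(y+ω^2))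
          = ((x+ω^2)*(y+ω))^(2^(2*m+1)) * ((x+ω^2)*(y+ω)) := by
        apply mul_right_cancel₀ (mul_ne_zero hDx hDy)
        rw [eQ1, eQ2]
        linear_combination ((y^(2^(2*m+1))+ω)*((s+1)*y+1)*((x+ω)*(y+ω^2)))*I2x
          + (ω*(s+ω)*(x+ω^2)*((x+ω)*(y+ω^2)))*I1y
          - ((y^(2^(2*m+1))+ω^2)*((s+1)*y+1)*((x+ω^2)*(y+ω)))*I1x
          - ((ω+1)*(s+ω+1)*(x+ω)*((x+ω^2)*(y+ω)))*I2y
      have hVQo : V^(2^(2*m+1))*V = 1 := by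
        rw [hVdef, div_pow, div_mul_div_comm,
          div_eq_one_iff_eq (mul_ne_zero (pow_ne_zero _ hP2) hP2)]
        exact RelQ
      have hoQ : orderOf V ∣ 2^(2*m+1)+1 :=
        orderOf_dvd_of_pow_eq_one (by rw [pow_succ]; exact hVQo)
      have ho2l : orderOf V ∣ 2^(2*(2*m+1)) - 1 :=
        hoQ.trans ⟨2^(2*m+1)-1, (aux_sq_sub_one (k := 2*m+1)).symm⟩
      have hVinv : V^(2^(2*m+1)) = V⁻¹ := eq_inv_of_mul_eq_one_left hVQo
      have hVkinv : V^(2^k) = V⁻¹ := eq_inv_of_mul_eq_one_left hVq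
      have hVlk : V^(2^((2*m+1)+k)) = V := by
        rw [pow_add, pow_mul, hVinv, inv_pow, hVkinv, inv_inv]
      have holk : orderOf V ∣ 2^((2*m+1)+k) - 1 := aux_ord_dvd hV0 hVlk
      have hg1 := aux_dvd_gcd_pow (2*(2*m+1)) ((2*m+1)+k) ho2l holk
      have hlk : ¬ 2 ∣ ((2*m+1)+k) := by
        obtain ⟨j, rfl⟩ := hke
        omega
      have hgodd : ¬ 2 ∣ Nat.gcd (2*(2*m+1)) ((2*m+1)+k) :=
        fun h => hlk (h.trans (Nat.gcd_dvd_right _ _))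
      have hgl : Nat.gcd (2*(2*m+1)) ((2*m+1)+k) ∣ 2*m+1 :=
        Nat.Coprime.dvd_of_dvd_mul_left
          ((Nat.coprime_two_right).mpr (Nat.odd_iff.mpr (by omega)))
          (Nat.gcd_dvd_left _ _)
      have hol : orderOf V ∣ 2^(2*m+1) - 1 := hg1.trans (aux_pow_sub_one_dvd hgl)
      have hVl : V^(2^(2*m+1)) = V := aux_pow_eq_self hol
      calc V^2 = V^(2^(2*m+1))*V := by rw [hVl]; ring
      _ = 1 := hVQo
  have hV1 : V = 1 := by
    have hsq : (V-1)^2 = 0 := by linear_combination hV2 + (1-V)*htwo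
    have := (pow_eq_zero_iff (two_ne_zero)).mp hsq
    exact sub_eq_zero.mp this
  have hP12 : (x+ω)*(y+ω^2) = (x+ω^2)*(y+ω) := by
    rw [hVdef] at hV1
    exact (div_eq_one_iff_eq hP2).mp hV1
  linear_combination -hP12 + (x - y)*hww + (y*ω - x*ω)*htwo

lemma aux_cgen {F : Type} [Field F] {x : F} {k : ℕ} (hx : x^(2^k+1) = 1) (a : ℕ) :
    (x^a)^(2^k) * x^a = 1 := by
  rw [← pow_succ, ← pow_mul, mul_comm, pow_mul, hx, one_pow]

lemma aux_pow_mod {F : Type} [Field F] {x : F} {m : ℕ} (hm : x^m = 1) {a b : ℕ}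
    (hab : a ≡ b [MOD m]) : x^a = x^b := by
  have key : ∀ c, x^c = x^(c % m) := by
    intro c
    conv_lhs => rw [← Nat.div_add_mod c m]
    rw [pow_add, pow_mul, hm, one_pow, one_mul]
  rw [key a, key b]
  exact congrArg (fun n => x ^ n) hab

lemma aux_conj_dn {F : Type} [Field F] [CharP F 2] {x : F} {k l : ℕ} (hx : x^(2^k+1) = 1) :
    (x^(2^l+1)+x+1)^(2^k) * x^(2^l+1) = x^(2^l+1)+x^(2^l)+1 := by
  haveI : Fact (Nat.Prime 2) := ⟨Nat.prime_two⟩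
  have hexp : (x^(2^l+1)+x+1)^(2^k) = (x^(2^l+1))^(2^k) + x^(2^k) + 1 := by
    rw [add_pow_char_pow (x^(2^l+1)+x) 1 2 k, add_pow_char_pow (x^(2^l+1)) x 2 k, one_pow]
  rw [hexp]
  have c1 : (x^(2^l+1))^(2^k) * x^(2^l+1) = 1 := aux_cgen hx (2^l+1)
  have c2 : x^(2^k) * x^(2^l+1) = x^(2^l) := by
    rw [pow_succ]
    calc x^(2^k)*(x^(2^l)*x) = x^(2^l)*(x^(2^k)*x) := by ring
    _ = x^(2^l) := by rw [← pow_succ, hx, mul_one]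
  linear_combination c1 + c2

lemma aux_conj_w {F : Type} [Field F] [CharP F 2] {x : F} {k t : ℕ} (hx : x^(2^k+1) = 1) :
    (x^(2*t)+x^t+1)^(2^k) * x^(2*t) = x^(2*t)+x^t+1 := by
  haveI : Fact (Nat.Prime 2) := ⟨Nat.prime_two⟩
  have hexp : (x^(2*t)+x^t+1)^(2^k) = (x^(2*t))^(2^k) + (x^t)^(2^k) + 1 := by
    rw [add_pow_char_pow (x^(2*t)+x^t) 1 2 k, add_pow_char_pow (x^(2*t)) (x^t) 2 k, one_pow]
  rw [hexp]
  have c1 : (x^(2*t))^(2^k) * x^(2*t) = 1 := aux_cgen hx (2*t)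
  have hsplit : x^(2*t) = x^t * x^t := by rw [two_mul, pow_add]
  have c2 : (x^t)^(2^k) * x^(2*t) = x^t := by
    rw [hsplit, ← mul_assoc, aux_cgen hx t, one_mul]
  linear_combination c1 + c2

lemma aux_dn_ne {k l : ℕ} (hk : 0 < k) (hl : 0 < l)
    (hord : padicValNat 2 l ≤ padicValNat 2 k)
    {F : Type} [Field F] [Fintype F] (hF : Fintype.card F = 2^(2*k))
    {x : F} (hx : x^(2^k+1) = 1) : x^(2^l+1)+x+1 ≠ 0 := by
  haveI : Fact (Nat.Prime 2) := ⟨Nat.prime_two⟩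
  haveI hchar : CharP F 2 := aux_char_two F (by positivity) hF
  have htwo : (2:F) = 0 := by exact_mod_cast CharP.cast_eq_zero F 2
  intro hdx
  have h0 := aux_conj_dn (l := l) hx
  rw [hdx, zero_pow (by positivity : (2:ℕ)^k ≠ 0), zero_mul] at h0
  have hnx : x^(2^l+1)+x^(2^l)+1 = 0 := h0.symm
  have hfix : x^(2^l) = x := by linear_combination hnx - hdx
  have hx1 : x = 1 := aux_mu_fix hk hl hord hx hfix
  rw [hx1] at hdx
  exact one_ne_zero (by linear_combination hdx - htwo : (1:F) = 0)

lemma aux_w_ne {k t : ℕ} (hk : 0 < k) (hke : Even k)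
    {F : Type} [Field F] [Fintype F] (hF : Fintype.card F = 2^(2*k))
    {x : F} (hx : x^(2^k+1) = 1) : x^(2*t)+x^t+1 ≠ 0 := by
  haveI : Fact (Nat.Prime 2) := ⟨Nat.prime_two⟩
  haveI hchar : CharP F 2 := aux_char_two F (by positivity) hF
  have htwo : (2:F) = 0 := by exact_mod_cast CharP.cast_eq_zero F 2
  intro h
  have hzz : (x^t)^2 + x^t + 1 = 0 := by
    have hsq : (x^t)^2 = x^(2*t) := by rw [← pow_mul, mul_comm]
    rw [hsq]; exact h
  have hz3 : (x^t)^3 = 1 := by linear_combination ((x^t) - 1)*hzz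
  have hzmu : (x^t)^(2^k+1) = 1 := by rw [← pow_mul, mul_comm, pow_mul, hx, one_pow]
  have hzalt : x^t ≠ 1 := by
    intro h1; rw [h1] at hzz
    exact one_ne_zero (by linear_combination hzz - htwo : (1:F) = 0)
  have horder : orderOf (x^t) = 3 := by
    have hdvd : orderOf (x^t) ∣ 3 := orderOf_dvd_of_pow_eq_one hz3
    rcases (Nat.dvd_prime (by norm_num : Nat.Prime 3)).mp hdvd with h1 | h1
    · exact absurd (orderOf_eq_one_iff.mp h1) hzalt
    · exact h1
  have h3q : (3:ℕ) ∣ 2^k+1 := horder ▸ orderOf_dvd_of_pow_eq_one hzmu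
  have h3q' : (3:ℕ) ∣ 2^k-1 := aux_3_dvd hke
  have harith : (2^k+1) - (2^k-1) = 2 := by have := Nat.one_le_two_pow (n := k); omega
  have h32 : (3:ℕ) ∣ 2 := harith ▸ Nat.dvd_sub h3q h3q'
  norm_num at h32

set_option maxHeartbeats 2000000
/-- Corollary 5.1, case (4.1): `X^r B(X^{q-1})` with
`B = (X^{Q+1}+X+1)(X^{2t}+X^t+1)` is a permutation polynomial of `F_{q²}`. -/
theorem stmt_7 (k ℓ t : ℕ) (hk : 0 < k) (hl : 0 < ℓ) (ht : 0 < t) (hke : Even k)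
    (q Q : ℕ) (hq : q = 2 ^ k) (hQ : Q = 2 ^ ℓ)
    (hord : padicValNat 2 ℓ ≤ padicValNat 2 k)
    (F : Type) [Field F] [Fintype F] (hF : Fintype.card F = q ^ 2)
    (D B : Polynomial F)
    (hD : D = Polynomial.X ^ (Q + 1) + Polynomial.X + 1)
    (hB : B = D * (Polynomial.X ^ (2 * t) + Polynomial.X ^ t + 1))
    (r : ℕ) (hr : 0 < r) (hrq : Nat.gcd r (q - 1) = 1)
    (hmod : r ≡ Q + 1 + 2 * t [MOD q + 1]) :
    Function.Bijective (fun c : F => c ^ r * B.eval (c ^ (q - 1))) := by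
  subst hB hD hq hQ
  classical
  haveI : Fact (Nat.Prime 2) := ⟨Nat.prime_two⟩
  have hcard : Fintype.card F = 2^(2*k) := by rw [hF, ← pow_mul, mul_comm k 2]
  haveI hchar : CharP F 2 := aux_char_two F (by positivity) hcard
  have htwo : (2:F) = 0 := by exact_mod_cast CharP.cast_eq_zero F 2
  have hq1 : (1:ℕ) ≤ 2^k := Nat.one_le_two_pow
  have hBeval : ∀ z : F,
      ((Polynomial.X ^ (2^ℓ + 1) + Polynomial.X + 1) *
        (Polynomial.X ^ (2*t) + Polynomial.X ^ t + 1)).eval z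
      = (z^(2^ℓ+1)+z+1) * (z^(2*t)+z^t+1) := by
    intro z
    simp [Polynomial.eval_mul, Polynomial.eval_add, Polynomial.eval_pow]
  refine Finite.injective_iff_bijective.mp ?_
  intro c c' hcc
  dsimp only at hcc
  rw [hBeval, hBeval] at hcc
  -- facts for nonzero c
  have hval : ∀ c : F, c ≠ 0 → (c^(2^k-1))^(2^k+1) = 1 := by
    intro c hc
    rw [← pow_mul]
    have harith : (2^k-1)*(2^k+1) = Fintype.card F - 1 := by
      rw [hcard, mul_comm]; exact aux_sq_sub_one
    rw [harith]
    exact FiniteField.pow_card_sub_one_eq_one c hc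
  by_cases hc : c = 0
  · by_cases hc' : c' = 0
    · rw [hc, hc']
    · exfalso
      have hymu := hval c' hc'
      have hne : c'^r * ((c'^(2^k-1))^(2^ℓ+1)+c'^(2^k-1)+1) *
          ((c'^(2^k-1))^(2*t)+(c'^(2^k-1))^t+1) ≠ 0 :=
        mul_ne_zero (mul_ne_zero (pow_ne_zero _ hc') (aux_dn_ne hk hl hord hcard hymu))
          (aux_w_ne hk hke hcard hymu)
      rw [hc, zero_pow hr.ne', zero_mul] at hcc
      exact hne (by linear_combination -hcc)
  · by_cases hc' : c' = 0
    · exfalso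
      have hxmu := hval c hc
      have hne : c^r * ((c^(2^k-1))^(2^ℓ+1)+c^(2^k-1)+1) *
          ((c^(2^k-1))^(2*t)+(c^(2^k-1))^t+1) ≠ 0 :=
        mul_ne_zero (mul_ne_zero (pow_ne_zero _ hc) (aux_dn_ne hk hl hord hcard hxmu))
          (aux_w_ne hk hke hcard hxmu)
      rw [hc', zero_pow hr.ne', zero_mul] at hcc
      exact hne (by linear_combination hcc)
    -- main case
    · have hxmu := hval c hc
      have hymu := hval c' hc'
      have hx0 : c^(2^k-1) ≠ 0 := pow_ne_zero _ hc
      have hy0 : c'^(2^k-1) ≠ 0 := pow_ne_zero _ hc'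
      have hdnx := aux_dn_ne hk hl hord hcard hxmu
      have hdny := aux_dn_ne hk hl hord hcard hymu
      have hwx := aux_w_ne (t := t) hk hke hcard hxmu
      have hwy := aux_w_ne (t := t) hk hke hcard hymu
      have KIx : (((c^(2^k-1))^(2^ℓ+1)+c^(2^k-1)+1) *
            ((c^(2^k-1))^(2*t)+(c^(2^k-1))^t+1))^(2^k) * (c^(2^k-1))^(2^ℓ+1+2*t)
          = ((c^(2^k-1))^(2^ℓ+1)+(c^(2^k-1))^(2^ℓ)+1) *
            ((c^(2^k-1))^(2*t)+(c^(2^k-1))^t+1) := by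
        have h1 := aux_conj_dn (l := ℓ) hxmu
        have h2 := aux_conj_w (t := t) hxmu
        rw [mul_pow, pow_add]
        linear_combination (((c^(2^k-1))^(2*t)+(c^(2^k-1))^t+1)^(2^k) * (c^(2^k-1))^(2*t)) * h1
          + (((c^(2^k-1))^(2^ℓ+1)+(c^(2^k-1))^(2^ℓ)+1)) * h2
      have KIy : (((c'^(2^k-1))^(2^ℓ+1)+c'^(2^k-1)+1) *
            ((c'^(2^k-1))^(2*t)+(c'^(2^k-1))^t+1))^(2^k) * (c'^(2^k-1))^(2^ℓ+1+2*t)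
          = ((c'^(2^k-1))^(2^ℓ+1)+(c'^(2^k-1))^(2^ℓ)+1) *
            ((c'^(2^k-1))^(2*t)+(c'^(2^k-1))^t+1) := by
        have h1 := aux_conj_dn (l := ℓ) hymu
        have h2 := aux_conj_w (t := t) hymu
        rw [mul_pow, pow_add]
        linear_combination (((c'^(2^k-1))^(2*t)+(c'^(2^k-1))^t+1)^(2^k) * (c'^(2^k-1))^(2*t)) * h1
          + (((c'^(2^k-1))^(2^ℓ+1)+(c'^(2^k-1))^(2^ℓ)+1)) * h2
      -- abbreviations (written out in full)
      have step1 : (c ^ r)^(2^k) * ((((c^(2^k-1))^(2^ℓ+1)+c^(2^k-1)+1) *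
            ((c^(2^k-1))^(2*t)+(c^(2^k-1))^t+1)))^(2^k) *
            (c' ^ r * (((c'^(2^k-1))^(2^ℓ+1)+c'^(2^k-1)+1) *
            ((c'^(2^k-1))^(2*t)+(c'^(2^k-1))^t+1)))
          = (c' ^ r)^(2^k) * ((((c'^(2^k-1))^(2^ℓ+1)+c'^(2^k-1)+1) *
            ((c'^(2^k-1))^(2*t)+(c'^(2^k-1))^t+1)))^(2^k) *
            (c ^ r * (((c^(2^k-1))^(2^ℓ+1)+c^(2^k-1)+1) *
            ((c^(2^k-1))^(2*t)+(c^(2^k-1))^t+1))) := by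
        rw [← mul_pow, ← mul_pow, hcc]
      have harith2 : r*2^k = r + (2^k-1)*r := by
        have h2 : (2^k-1)*r = 2^k*r - 1*r := Nat.sub_mul _ _ _
        have h3 : r ≤ 2^k*r := Nat.le_mul_of_pos_left r (by positivity)
        have h4 : r*2^k = 2^k*r := mul_comm r _
        omega
      have hA : (c^r)^(2^k) = c^r * (c^(2^k-1))^r := by
        rw [← pow_mul, ← pow_mul, ← pow_add, harith2, mul_comm (2^k-1) r]
      have hA' : (c'^r)^(2^k) = c'^r * (c'^(2^k-1))^r := by
        rw [← pow_mul, ← pow_mul, ← pow_add, harith2, mul_comm (2^k-1) r]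
      have step4 : (c^(2^k-1))^r * (((c^(2^k-1))^(2^ℓ+1)+(c^(2^k-1))^(2^ℓ)+1) *
            ((c^(2^k-1))^(2*t)+(c^(2^k-1))^t+1)) *
            ((((c'^(2^k-1))^(2^ℓ+1)+c'^(2^k-1)+1) *
            ((c'^(2^k-1))^(2*t)+(c'^(2^k-1))^t+1)) * (c'^(2^k-1))^(2^ℓ+1+2*t))
          = (c'^(2^k-1))^r * (((c'^(2^k-1))^(2^ℓ+1)+(c'^(2^k-1))^(2^ℓ)+1) *
            ((c'^(2^k-1))^(2*t)+(c'^(2^k-1))^t+1)) *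
            ((((c^(2^k-1))^(2^ℓ+1)+c^(2^k-1)+1) *
            ((c^(2^k-1))^(2*t)+(c^(2^k-1))^t+1)) * (c^(2^k-1))^(2^ℓ+1+2*t)) := by
        apply mul_left_cancel₀ (mul_ne_zero (pow_ne_zero r hc) (pow_ne_zero r hc'))
        linear_combination ((c^(2^k-1))^(2^ℓ+1+2*t)*(c'^(2^k-1))^(2^ℓ+1+2*t))*step1
          - ((c^r)^(2^k)*c'^r*(((c'^(2^k-1))^(2^ℓ+1)+c'^(2^k-1)+1) *
              ((c'^(2^k-1))^(2*t)+(c'^(2^k-1))^t+1))*(c'^(2^k-1))^(2^ℓ+1+2*t))*KIx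
          + ((c'^r)^(2^k)*c^r*(((c^(2^k-1))^(2^ℓ+1)+c^(2^k-1)+1) *
              ((c^(2^k-1))^(2*t)+(c^(2^k-1))^t+1))*(c^(2^k-1))^(2^ℓ+1+2*t))*KIy
          - (c'^r*(((c^(2^k-1))^(2^ℓ+1)+(c^(2^k-1))^(2^ℓ)+1) *
              ((c^(2^k-1))^(2*t)+(c^(2^k-1))^t+1))*
              ((((c'^(2^k-1))^(2^ℓ+1)+c'^(2^k-1)+1) *
              ((c'^(2^k-1))^(2*t)+(c'^(2^k-1))^t+1)) * (c'^(2^k-1))^(2^ℓ+1+2*t)))*hA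
          + (c^r*(((c'^(2^k-1))^(2^ℓ+1)+(c'^(2^k-1))^(2^ℓ)+1) *
              ((c'^(2^k-1))^(2*t)+(c'^(2^k-1))^t+1))*
              ((((c^(2^k-1))^(2^ℓ+1)+c^(2^k-1)+1) *
              ((c^(2^k-1))^(2*t)+(c^(2^k-1))^t+1)) * (c^(2^k-1))^(2^ℓ+1+2*t)))*hA'
      have hrEx : (c^(2^k-1))^r = (c^(2^k-1))^(2^ℓ+1+2*t) := aux_pow_mod hxmu hmod
      have hrEy : (c'^(2^k-1))^r = (c'^(2^k-1))^(2^ℓ+1+2*t) := aux_pow_mod hymu hmod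
      rw [hrEx, hrEy] at step4
      have hxE : (c^(2^k-1))^(2^ℓ+1+2*t) ≠ 0 := pow_ne_zero _ hx0
      have hyE : (c'^(2^k-1))^(2^ℓ+1+2*t) ≠ 0 := pow_ne_zero _ hy0
      have step6 : ((c^(2^k-1))^(2^ℓ+1)+(c^(2^k-1))^(2^ℓ)+1) *
            ((c'^(2^k-1))^(2^ℓ+1)+c'^(2^k-1)+1)
          = ((c'^(2^k-1))^(2^ℓ+1)+(c'^(2^k-1))^(2^ℓ)+1) *
            ((c^(2^k-1))^(2^ℓ+1)+c^(2^k-1)+1) := by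
        apply mul_right_cancel₀ (mul_ne_zero (mul_ne_zero (mul_ne_zero hxE hyE) hwx) hwy)
        linear_combination step4
      have hsx : (c^(2^k-1))^(2^ℓ+1)+(c^(2^k-1))^(2^ℓ)+1
          = (((c^(2^k-1))^(2^ℓ+1)+(c^(2^k-1))^(2^ℓ)+1)/((c^(2^k-1))^(2^ℓ+1)+c^(2^k-1)+1))
            * ((c^(2^k-1))^(2^ℓ+1)+c^(2^k-1)+1) :=
        (div_mul_cancel₀ _ hdnx).symm
      have hsy : (c'^(2^k-1))^(2^ℓ+1)+(c'^(2^k-1))^(2^ℓ)+1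
          = (((c^(2^k-1))^(2^ℓ+1)+(c^(2^k-1))^(2^ℓ)+1)/((c^(2^k-1))^(2^ℓ+1)+c^(2^k-1)+1))
            * ((c'^(2^k-1))^(2^ℓ+1)+c'^(2^k-1)+1) := by
        apply mul_right_cancel₀ hdnx
        linear_combination ((c'^(2^k-1))^(2^ℓ+1)+c'^(2^k-1)+1)*hsx - step6
      have hXY : c^(2^k-1) = c'^(2^k-1) :=
        core_inj hk hl hke hord hcard hxmu hymu hsx hsy
      rw [← hXY] at hcc
      have hcr : c^r = c'^r :=
        mul_right_cancel₀ (mul_ne_zero hdnx hwx) hcc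
      have hdr : (c/c')^r = 1 := by rw [div_pow, hcr, div_self (pow_ne_zero _ hc')]
      have hdq : (c/c')^(2^k-1) = 1 := by rw [div_pow, hXY, div_self (pow_ne_zero _ hc')]
      have ho := Nat.dvd_gcd (orderOf_dvd_of_pow_eq_one hdr) (orderOf_dvd_of_pow_eq_one hdq)
      rw [hrq] at ho
      have h1 : c/c' = 1 := orderOf_eq_one_iff.mp (Nat.dvd_one.mp ho)
      exact (div_eq_one_iff_eq hc').mp h1
end

section
/- Let k and ℓ be even positive integers with ord₂(ℓ) ≤ ord₂(k), set q := 2^k and Q := 2^ℓ, and let B(X) := (X^{Q+1} + X + 1)/(X² + X + 1) ∈ F₂[X]. If r is a positive integer with gcd(r, q-1) = 1 and r ≡ Q - 1 (mod q+1), then X^r · B(X^{q-1}) is a permutation polynomial of F_{q²}. -/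
open Finset

section CharTwoAux
variable {F : Type} [Field F] [CharP F 2]

lemma fr2 (m : ℕ) (x y : F) : (x + y) ^ (2^m) = x ^ (2^m) + y ^ (2^m) :=
  add_pow_char_pow x y 2 m

lemma natCast_cases (j : ℕ) : (j : F) = 0 ∨ (j : F) = 1 := by
  rcases Nat.even_or_odd j with ⟨m, hm⟩ | ⟨m, hm⟩
  · left; subst hm; push_cast; exact CharTwo.add_self_eq_zero _
  · right; subst hm
    push_cast
    rw [two_mul]
    rw [CharTwo.add_self_eq_zero ((m:F))]
    ring

/-- partial trace sum -/
noncomputable def S (m : ℕ) (x : F) : F := ∑ i ∈ range m, x ^ (2^i)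

lemma S_add (m : ℕ) (x y : F) : S m (x + y) = S m x + S m y := by
  unfold S
  rw [← Finset.sum_add_distrib]
  exact Finset.sum_congr rfl fun i _ => fr2 i x y

lemma S_sq_add (m : ℕ) (x : F) : S m (x^2 + x) = x ^ (2^m) + x := by
  induction m with
  | zero => simp [S, CharTwo.add_self_eq_zero]
  | succ n ih =>
      rw [S, Finset.sum_range_succ, ← S, ih, fr2]
      have h1 : (x^2) ^ (2^n) = x ^ (2^(n+1)) := by
        rw [← pow_mul, pow_succ, mul_comm (2^n) 2]
      rw [h1]
      have := CharTwo.add_self_eq_zero (x ^ (2^n))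
      linear_combination this

lemma S_frob_fix (m : ℕ) (z : F) (hz : z ^ (2^m) = z) : (S m z) ^ (2^m) = S m z := by
  unfold S
  rw [sum_pow_char_pow]
  exact Finset.sum_congr rfl fun i _ => by
    rw [← pow_mul, mul_comm, pow_mul, hz]

lemma pow_pow_fix (m n : ℕ) (u : F) (hu : u ^ (2^m) = u) : u ^ (2^(n*m)) = u := by
  induction n with
  | zero => simp
  | succ t ih =>
      have : 2 ^ ((t+1)*m) = 2^(t*m) * 2^m := by rw [← pow_add]; ring_nf
      rw [this, pow_mul, ih, hu]

lemma S_split (a b : ℕ) (x : F) : S (a + b) x = S a x + (S b x) ^ (2^a) := by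
  induction b with
  | zero => simp [S]
  | succ t ih =>
      have h1 : a + (t+1) = (a + t) + 1 := by ring
      rw [h1, S, Finset.sum_range_succ, ← S, ih]
      have h3 : S (t+1) x = S t x + x ^ (2^t) := by
        rw [S, Finset.sum_range_succ, ← S]
      rw [h3, fr2]
      have h2 : (x ^ (2^t)) ^ (2^a) = x ^ (2^(a+t)) := by
        rw [← pow_mul, ← pow_add, add_comm t a]
      rw [h2]; ring

lemma S_block (m n : ℕ) (z : F) (hz : z ^ (2^m) = z) : S (n * m) z = (n : F) * S m z := by
  induction n with
  | zero => simp [S]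
  | succ t ih =>
      have h1 : (t+1) * m = t*m + m := by ring
      rw [h1, S_split, ih]
      have h2 : (S m z) ^ (2^(t*m)) = S m z := pow_pow_fix m t (S m z) (S_frob_fix m z hz)
      rw [h2]
      push_cast; ring

lemma pow_congr_of_pow_eq_one {x : F} {s a b : ℕ} (hs : 0 < s) (h1 : x ^ s = 1)
    (hab : a ≡ b [MOD s]) : x ^ a = x ^ b := by
  have ha : x ^ a = x ^ (a % s) := by
    conv_lhs => rw [← Nat.div_add_mod a s]
    rw [pow_add, pow_mul, h1, one_pow, one_mul]
  have hb : x ^ b = x ^ (b % s) := by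
    conv_lhs => rw [← Nat.div_add_mod b s]
    rw [pow_add, pow_mul, h1, one_pow, one_mul]
  rw [ha, hb, hab]

end CharTwoAux
section A
variable {F : Type} [Field F] [CharP F 2]

lemma fr2' (m : ℕ) (x y : F) : (x + y) ^ (2^m) = x ^ (2^m) + y ^ (2^m) :=
  add_pow_char_pow x y 2 m

lemma natCast_cases' (j : ℕ) : (j : F) = 0 ∨ (j : F) = 1 := by
  rcases Nat.even_or_odd j with ⟨m, hm⟩ | ⟨m, hm⟩
  · left; subst hm; push_cast; exact CharTwo.add_self_eq_zero _
  · right; subst hm; push_cast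
    rw [two_mul, CharTwo.add_self_eq_zero ((m:F))]; ring

/-- Key Frobenius-iteration lemma. -/
lemma lemT (k ℓ : ℕ) (hn : ∃ n j : ℕ, n * ℓ = k + 2*k*j)
    (hcard : ∀ x : F, x ^ (2^(2*k)) = x)
    (w β : F) (hw : w ^ (2^k) = w + 1) (hwQ : w ^ (2^ℓ) = w + β)
    (hβ : β ^ (2^ℓ) = β) : β = 1 := by
  obtain ⟨n, j, hnj⟩ := hn
  have h1 : ∀ i : ℕ, w ^ ((2^ℓ)^i) = w + (i : F) * β := by
    intro i
    induction i with
    | zero => simp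
    | succ t ih =>
        rw [pow_succ, pow_mul, ih, fr2', mul_pow, hβ, hwQ]
        rcases natCast_cases' (F := F) t with h | h
        · rw [h, zero_pow (by positivity : (2:ℕ)^ℓ ≠ 0), zero_mul, add_zero]
          push_cast [h]; ring
        · rw [h, one_pow, one_mul]; push_cast [h]; ring
  have h2 : ∀ i : ℕ, ∀ x : F, x ^ ((2^(2*k))^i) = x := by
    intro i
    induction i with
    | zero => simp
    | succ t ih => intro x; rw [pow_succ, pow_mul, ih, hcard]
  have e1 : w ^ (2^(n*ℓ)) = w + (n : F) * β := by
    rw [show (2:ℕ)^(n*ℓ) = ((2:ℕ)^ℓ)^n by rw [← pow_mul, mul_comm]]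
    exact h1 n
  have e2 : w ^ (2^(n*ℓ)) = w + 1 := by
    rw [hnj]
    have h3 : 2 ^ (k + 2*k*j) = (2^(2*k))^j * 2^k := by
      rw [← pow_mul, ← pow_add, add_comm]
    rw [h3, pow_mul, h2 j, hw]
  have h4 : (n : F) * β = 1 := add_left_cancel (e1.symm.trans e2)
  rcases natCast_cases' (F := F) n with h | h
  · rw [h, zero_mul] at h4; exact absurd h4.symm one_ne_zero
  · rw [h, one_mul] at h4; exact h4

end A

/-- number theory: existence of n, j with n*ℓ = k + 2*k*j -/
lemma NTlem (k ℓ : ℕ) (hk : 0 < k) (hl : 0 < ℓ)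
    (hord : padicValNat 2 ℓ ≤ padicValNat 2 k) :
    ∃ n j : ℕ, n * ℓ = k + 2*k*j := by
  set d := Nat.gcd ℓ (2*k) with hd
  have hd0 : d ≠ 0 := Nat.gcd_ne_zero_left hl.ne'
  have hk0 : k ≠ 0 := hk.ne'
  have hdvk : d ∣ k := by
    rw [← Nat.factorization_le_iff_dvd hd0 hk0]
    intro p
    by_cases hp : p.Prime
    · by_cases hp2 : p = 2
      · subst hp2
        have h1 : d.factorization 2 ≤ ℓ.factorization 2 :=
          (Nat.factorization_le_iff_dvd hd0 hl.ne').mpr (Nat.gcd_dvd_left _ _) 2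
        have h2 : ℓ.factorization 2 = padicValNat 2 ℓ := Nat.factorization_def ℓ Nat.prime_two
        have h3 : k.factorization 2 = padicValNat 2 k := Nat.factorization_def k Nat.prime_two
        omega
      · have h1 : d.factorization p ≤ (2*k).factorization p :=
          (Nat.factorization_le_iff_dvd hd0 (by positivity)).mpr (Nat.gcd_dvd_right _ _) p
        have h2 : (2*k).factorization p = (2:ℕ).factorization p + k.factorization p := by
          rw [Nat.factorization_mul (by norm_num) hk0]; simp
        have h3 : (2:ℕ).factorization p = 0 := by
          rw [Nat.Prime.factorization Nat.prime_two]
          simp [Finsupp.single_apply, Ne.symm hp2]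
        omega
    · simp [Nat.factorization_eq_zero_of_not_prime _ hp]
  obtain ⟨m, hm⟩ := hdvk
  have hbez := Nat.gcd_eq_gcd_ab ℓ (2*k)
  set A := Nat.gcdA ℓ (2*k) with hA
  set Bb := Nat.gcdB ℓ (2*k) with hB
  have hkz : (k:ℤ) = (ℓ:ℤ)*(A*(m:ℤ)) + 2*(k:ℤ)*(Bb*(m:ℤ)) := by
    have hm' : (k:ℤ) = (d:ℤ)*(m:ℤ) := by exact_mod_cast hm
    have h' : (d:ℤ) = (ℓ:ℤ)*A + 2*(k:ℤ)*Bb := by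
      rw [hd]; push_cast at hbez ⊢; linarith [hbez]
    linear_combination hm' + (m:ℤ) * h'
  have h2k : (0:ℤ) < 2*(k:ℤ) := by positivity
  set n0 : ℤ := (A * (m:ℤ)) % (2*(k:ℤ)) with hn0
  have hn0nn : 0 ≤ n0 := Int.emod_nonneg _ h2k.ne'
  set nz : ℤ := n0 + 2*(k:ℤ) with hnz
  have hnK : 2*(k:ℤ) ≤ nz := by omega
  have hnpos : 0 < nz := by omega
  have h1 : (2*(k:ℤ)) ∣ (A*(m:ℤ) - n0) := Int.dvd_self_sub_of_emod_eq rfl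
  have h2 : nz * ℓ - k = (n0 - A*(m:ℤ))*ℓ + (2*(k:ℤ))*((ℓ:ℤ) + Bb*(m:ℤ)) + ((ℓ:ℤ)*(A*(m:ℤ)) - (2*(k:ℤ))*(Bb*(m:ℤ)) - k) + 0 := by ring
  have hmodd : (2*(k:ℤ)) ∣ (nz * ℓ - k) := by
    rw [h2]
    have h3 : (ℓ:ℤ)*(A*(m:ℤ)) - (2*(k:ℤ))*(Bb*(m:ℤ)) - k = -(2*((2*(k:ℤ))*(Bb*(m:ℤ)))) := by
      linear_combination -hkz
    rw [h3, add_zero]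
    exact dvd_add (dvd_add ((dvd_sub_comm.mp h1).mul_right _) (dvd_mul_right _ _))
      (dvd_neg.mpr ((dvd_mul_right _ _).mul_left 2))
  obtain ⟨t, ht⟩ := hmodd
  have hl1 : (1:ℤ) ≤ (ℓ:ℤ) := by exact_mod_cast hl
  have hk1 : (1:ℤ) ≤ (k:ℤ) := by exact_mod_cast hk
  have hge : (2*(k:ℤ)) ≤ nz * ℓ := by nlinarith
  have hKt : 0 < 2*(k:ℤ) * t := by linarith
  have htnn : 0 ≤ t := by
    by_contra hc; push_neg at hc; nlinarith
  refine ⟨nz.toNat, t.toNat, ?_⟩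
  have e1 : (nz.toNat : ℤ) = nz := Int.toNat_of_nonneg hnpos.le
  have e2 : (t.toNat : ℤ) = t := Int.toNat_of_nonneg htnn
  have hfin : ((nz.toNat * ℓ : ℕ) : ℤ) = ((k + 2*k*t.toNat : ℕ) : ℤ) := by
    push_cast [e1, e2]
    linarith [ht]
  exact_mod_cast hfin

section Core
variable {F : Type} [Field F] [CharP F 2]

lemma S_sq (m : ℕ) (z : F) : (S m z)^2 = S m (z^2) := by
  unfold S
  rw [sum_pow_char]
  exact Finset.sum_congr rfl fun i _ => (pow_right_comm z 2 (2^i)).symm ▸ rfl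

lemma S_fix (m : ℕ) (z : F) (h : S m z = 0) : z^(2^m) = z := by
  have h2 : (2:F) = 0 := CharTwo.two_eq_zero
  have h1 : z^(2^m) + z = S m (z^2 + z) := (S_sq_add m z).symm
  rw [S_add, ← S_sq, h] at h1
  simp only [ne_eq, OfNat.ofNat_ne_zero, not_false_eq_true, zero_pow, add_zero] at h1
  linear_combination h1 - z*h2

lemma lemL1 (k ℓ : ℕ) (hn : ∃ n j : ℕ, n * ℓ = k + 2*k*j)
    (hcard : ∀ x : F, x ^ (2^(2*k)) = x)
    (w : F) (hw : w ^ (2^k) = w + 1) : w^(2^ℓ) ≠ w := by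
  intro h
  have h0 := lemT k ℓ hn hcard w 0 hw (by rw [h, add_zero])
    (by rw [zero_pow (by positivity : (2:ℕ)^ℓ ≠ 0)])
  exact one_ne_zero h0.symm

lemma lemCore (k ℓ : ℕ) (hn : ∃ n j : ℕ, n * ℓ = k + 2*k*j)
    (hcard : ∀ x : F, x ^ (2^(2*k)) = x)
    (w v : F) (hw : w ^ (2^k) = w + 1) (hv : v ^ (2^k) = v + 1)
    (hMN : (w^(2^ℓ)*w + w^(2^ℓ) + 1) * (v^(2^ℓ)*v + v + 1)
         = (v^(2^ℓ)*v + v^(2^ℓ) + 1) * (w^(2^ℓ)*w + w + 1)) : w = v := by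
  have h2 : (2:F) = 0 := CharTwo.two_eq_zero
  by_contra hne
  obtain ⟨t, ht, ht0⟩ : ∃ t : F, v = w + t ∧ t ≠ 0 :=
    ⟨v - w, by ring, fun h => hne (sub_eq_zero.mp h).symm⟩
  obtain ⟨a, ha⟩ : ∃ x : F, w^(2^ℓ) = w + x := ⟨w^(2^ℓ) - w, by ring⟩
  obtain ⟨b, hbb⟩ : ∃ x : F, v^(2^ℓ) = v + x := ⟨v^(2^ℓ) - v, by ring⟩
  have ha0 : a ≠ 0 := fun h0 => lemL1 k ℓ hn hcard w hw (by rw [ha, h0, add_zero])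
  rw [ha, hbb, ht] at hMN
  have h1 : v^(2^ℓ) = w^(2^ℓ) + t^(2^ℓ) := by rw [ht, fr2']
  have htQ : t^(2^ℓ) = t + (a + b) := by
    linear_combination -h1 - ha + hbb - ht + (v - t - a - w)*h2
  by_cases hab : a = b
  · -- case a = b
    rw [← hab] at hMN
    have keyA : a * (t*(t+a+1)) = 0 := by
      linear_combination hMN + (-(a*t*w))*h2
    have key2 : t*(t+a+1) = 0 := by
      rcases mul_eq_zero.mp keyA with h | h
      · exact absurd h ha0
      · exact h
    rcases mul_eq_zero.mp key2 with h | hta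
    · exact ht0 h
    have hbeta : b = t + 1 := by linear_combination -hab - hta + a*h2
    have htQ' : t^(2^ℓ) = t := by linear_combination htQ - hab + a*h2
    have hbfix : b^(2^ℓ) = b := by rw [hbeta, fr2', one_pow, htQ']
    have hb1 : b = 1 := lemT k ℓ hn hcard v b hv hbb hbfix
    exact ht0 (by linear_combination hb1 - hbeta)
  · -- case a ≠ b
    have hE1 : a*(a*t + (t + (a+b))*t + t) = (a+b)*(w^2+w+1) := by
      linear_combination hMN + (-a - a*t*w - a*w - a*w^2 + a^2*t)*h2
    have hτ0 : t + (a+b) ≠ 0 := by rw [← htQ]; exact pow_ne_zero _ ht0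
    have hclear : ((w+a)^2 + (w+a) + 1)*t + (w^2+w+1)*(t + (a+b)) = a*((t + (a+b))*t) := by
      linear_combination hE1 + (a - a*b*t + a*t*w - a*t^2 + a*w + a*w^2 - a^2*t + b + b*w + b*w^2 + t + t*w + t*w^2)*h2
    obtain ⟨x, hxd⟩ : ∃ x : F, x = (w^2+w+1)/t := ⟨_, rfl⟩
    have hxt : x * t = w^2+w+1 := by rw [hxd]; field_simp
    have hxa' : (x + a)*(t + (a+b))*t = ((w+a)^2 + (w+a) + 1)*t := by
      linear_combination (t + (a+b))*hxt + hclear + (a*b*t - a*t - 2*a*t*w + a*t^2 - t - t*w - t*w^2)*h2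
    have hxQt : x^(2^ℓ) * (t + (a+b)) = (w+a)^2 + (w+a) + 1 := by
      rw [← htQ, ← mul_pow, hxt, show (w^2+w+1:F) = (w^2+w)+1 from by ring, fr2', one_pow,
        fr2', pow_right_comm, ha]
    have hxA : x^(2^ℓ) = x + a := by
      have e1 : x^(2^ℓ) * ((t + (a+b))*t) = (x + a) * ((t + (a+b))*t) := by
        linear_combination t*hxQt - hxa'
      exact mul_right_cancel₀ (mul_ne_zero hτ0 ht0) e1
    have he_fq : (w^2+w : F)^(2^k) = w^2+w := by
      rw [fr2', pow_right_comm, hw]; linear_combination (w+1)*h2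
    have ht' : t = v + w := by linear_combination -ht - w*h2
    have ht_fq : t^(2^k) = t := by rw [ht', fr2', hv, hw]; linear_combination h2
    have hnum : ((w^2+w+1 : F))^(2^k) = w^2+w+1 := by
      rw [show (w^2+w+1:F) = (w^2+w)+1 from by ring, fr2', one_pow, he_fq]
    have hx_fq : x^(2^k) = x := by
      rw [hxd, div_pow, ht_fq, hnum]
    have hSy : S ℓ ((w^2+w) + (x^2+x)) = 0 := by
      rw [S_add, S_sq_add, S_sq_add, ha, hxA]; linear_combination (w + x + a)*h2
    have hyQ : ((w^2+w) + (x^2+x) : F)^(2^ℓ) = (w^2+w) + (x^2+x) := S_fix ℓ _ hSy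
    have hy_fq : ((w^2+w) + (x^2+x) : F)^(2^k) = (w^2+w) + (x^2+x) := by
      rw [fr2', he_fq, fr2', pow_right_comm, hx_fq]
    have hSky : S k ((w^2+w) + (x^2+x)) = 1 := by
      rw [S_add, S_sq_add, S_sq_add, hw, hx_fq]; linear_combination (w+x)*h2
    obtain ⟨n, j, hnj⟩ := hn
    have c1 : S (n*ℓ) ((w^2+w) + (x^2+x)) = 0 := by
      rw [S_block ℓ n _ hyQ, hSy, mul_zero]
    have c2 : S (n*ℓ) ((w^2+w) + (x^2+x)) = 1 := by
      rw [hnj, S_split, hSky]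
      have hz : S (2*k*j) ((w^2+w) + (x^2+x)) = 0 := by
        rw [show 2*k*j = (2*j)*k from by ring, S_block k (2*j) _ hy_fq]
        have : ((2*j : ℕ) : F) = 0 := by push_cast; rw [h2]; ring
        rw [this, zero_mul]
      rw [hz, zero_pow (by positivity : (2:ℕ)^k ≠ 0), add_zero]
    exact zero_ne_one (c1.symm.trans c2)

end Core

section Helpers
variable {F : Type} [Field F] [CharP F 2]

lemma powsub1 (c : F) (k : ℕ) : c^(2^k-1) * c = c^(2^k) := by
  rw [← pow_succ]
  congr 1
  have : (1:ℕ) ≤ 2^k := Nat.one_le_two_pow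
  omega

lemma keyPack (k : ℕ) (c : F) (hc : c ≠ 0) (hcf : c^(2^k) ≠ c)
    (hcard : ∀ x : F, x ^ (2^(2*k)) = x) :
    ∃ w : F, w ≠ 0 ∧ w^(2^k) = w + 1 ∧ c^(2^k-1) * w = w + 1 := by
  have h2 : (2:F) = 0 := CharTwo.two_eq_zero
  set s := c^(2^k) - c with hsdef
  have hs : s ≠ 0 := sub_ne_zero.mpr hcf
  have hs' : s = c^(2^k) + c := by rw [hsdef]; linear_combination -c*h2
  have hcq : c^(2^k) = s + c := by rw [hs']; linear_combination -c*h2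
  have h2k2 : (2:ℕ)^(2*k) = 2^k * 2^k := by rw [two_mul, pow_add]
  have hsfix : s^(2^k) = s := by
    rw [hs', fr2', ← pow_mul, ← h2k2, hcard]
    ring
  refine ⟨c/s, div_ne_zero hc hs, ?_, ?_⟩
  · rw [div_pow, hsfix, hcq, add_div, div_self hs]
    ring
  · rw [show c^(2^k-1) * (c/s) = (c^(2^k-1)*c)/s from (mul_div_assoc _ _ _).symm,
      powsub1, hcq, add_div, div_self hs]
    ring

lemma NMid (ℓ : ℕ) (ζ w : F) (hzw : ζ * w = w + 1) :
    (ζ^(2^ℓ)*ζ + ζ + 1) * (w^(2^ℓ)*w) = w^(2^ℓ)*w + w + 1 ∧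
    (ζ^(2^ℓ)*ζ + ζ^(2^ℓ) + 1) * (w^(2^ℓ)*w) = w^(2^ℓ)*w + w^(2^ℓ) + 1 := by
  have h2 : (2:F) = 0 := CharTwo.two_eq_zero
  have R2 : ζ^(2^ℓ) * w^(2^ℓ) = w^(2^ℓ) + 1 := by
    rw [← mul_pow, hzw, fr2', one_pow]
  constructor
  · linear_combination (ζ*w)*R2 + (2*(w^(2^ℓ)) + 1)*hzw + (w^(2^ℓ)*w + w^(2^ℓ))*h2
  · linear_combination (ζ*w)*R2 + (w^(2^ℓ)+1)*hzw + w*R2 + (w^(2^ℓ)*w + w)*h2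

lemma Pne (k : ℕ) (hke : Even k) (c : F) (hc : c ≠ 0)
    (hμ : (c^(2^k-1))^(2^k+1) = 1) : (c^(2^k-1))^2 + c^(2^k-1) + 1 ≠ 0 := by
  have h2 : (2:F) = 0 := CharTwo.two_eq_zero
  intro h0
  have h3 : (c^(2^k-1))^3 = 1 := by
    linear_combination (c^(2^k-1)+1)*h0 - ((c^(2^k-1))^2+(c^(2^k-1))+1)*h2
  have hd3 : orderOf (c^(2^k-1)) ∣ 3 := orderOf_dvd_of_pow_eq_one h3
  have hdq : orderOf (c^(2^k-1)) ∣ 2^k+1 := orderOf_dvd_of_pow_eq_one hμ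
  have hco : Nat.gcd 3 (2^k+1) = 1 := by
    have hco' : Nat.Coprime 3 (2^k+1) := by
      rw [Nat.Prime.coprime_iff_not_dvd Nat.prime_three]
      intro hdvd
      obtain ⟨m, hm⟩ := hke
      have hpm : 2^k % 3 = 1 := by
        rw [hm, show m + m = 2*m from by ring, pow_mul, Nat.pow_mod]
        norm_num
      omega
    exact hco'
  have h1 : orderOf (c^(2^k-1)) ∣ 1 := by
    have := Nat.dvd_gcd hd3 hdq
    rwa [hco] at this
  have hz1 : c^(2^k-1) = 1 := orderOf_eq_one_iff.mp (Nat.dvd_one.mp h1)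
  rw [hz1] at h0
  exact one_ne_zero (by linear_combination h0 - h2)

lemma Nnon (k ℓ : ℕ) (hn : ∃ n j : ℕ, n * ℓ = k + 2*k*j)
    (hcard : ∀ x : F, x ^ (2^(2*k)) = x)
    (c : F) (hc : c ≠ 0) :
    (c^(2^k-1))^(2^ℓ) * c^(2^k-1) + c^(2^k-1) + 1 ≠ 0 := by
  have h2 : (2:F) = 0 := CharTwo.two_eq_zero
  by_cases hcf : c^(2^k) = c
  · have hζ1 : c^(2^k-1) = 1 := mul_right_cancel₀ hc (by rw [powsub1, hcf, one_mul])
    rw [hζ1]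
    intro h0
    exact one_ne_zero (by linear_combination h0 - h2)
  · obtain ⟨w, hw0, hwl, hζw⟩ := keyPack k c hc hcf hcard
    intro h0
    have hNid := (NMid ℓ _ w hζw).1
    have hNw0 : w^(2^ℓ)*w + w + 1 = 0 := by
      linear_combination (w^(2^ℓ)*w)*h0 - hNid
    have hA : w^(2^ℓ)*w = w + 1 := by linear_combination hNw0 - (w+1)*h2
    have hE2 : (w^(2^ℓ)*w)^(2^k) = w := by
      rw [hA, fr2', one_pow, hwl]; linear_combination h2
    have hE1 : (w^(2^ℓ)*w)^(2^k) = (w^(2^k))^(2^ℓ) * w^(2^k) := by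
      rw [mul_pow, pow_right_comm]
    have hE3 : (w^(2^k))^(2^ℓ) * w^(2^k) = w := hE1.symm.trans hE2
    rw [hwl, fr2', one_pow] at hE3
    have hfix : w^(2^ℓ) = w := by linear_combination hE3 - hA - (w+1)*h2
    exact lemL1 k ℓ hn hcard w hwl hfix

end Helpers

/-- Corollary 5.2, case (4.1): with `B(X) = (X^{Q+1}+X+1)/(X²+X+1)`, the polynomial
`X^r B(X^{q-1})` is a permutation polynomial of `F_{q²}`. -/
theorem stmt_11 (k ℓ : ℕ) (hk : 0 < k) (hl : 0 < ℓ) (hke : Even k) (hle : Even ℓ)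
    (hord : padicValNat 2 ℓ ≤ padicValNat 2 k)
    (q Q : ℕ) (hq : q = 2 ^ k) (hQ : Q = 2 ^ ℓ)
    (F : Type) [Field F] [Fintype F] (hF : Fintype.card F = q ^ 2)
    (B : Polynomial F)
    (hB : B * (Polynomial.X ^ 2 + Polynomial.X + 1) =
      Polynomial.X ^ (Q + 1) + Polynomial.X + 1)
    (r : ℕ) (hr : 0 < r) (hrq : Nat.gcd r (q - 1) = 1)
    (hmod : r ≡ Q - 1 [MOD q + 1]) :
    Function.Bijective (fun c : F => c ^ r * B.eval (c ^ (q - 1))) := by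
  subst hq
  subst hQ
  have hcardF : Fintype.card F = 2^(2*k) := by rw [hF, ← pow_mul, Nat.mul_comm]
  have h2 : (2:F) = 0 := by
    have h0 : ((Fintype.card F : ℕ) : F) = 0 := FiniteField.cast_card_eq_zero F
    rw [hcardF] at h0
    push_cast at h0
    exact (pow_eq_zero_iff (by positivity)).mp h0
  haveI hch : CharP F 2 := by
    rcases (Nat.dvd_prime Nat.prime_two).mp (ringChar.dvd h2) with h | h
    · exfalso
      haveI := ringChar.charP F
      have h1 := CharP.cast_eq_zero F (ringChar F)
      rw [h] at h1
      simpa using h1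
    · exact h ▸ ringChar.charP F
  have hcard : ∀ x : F, x ^ (2^(2*k)) = x := fun x => by
    rw [← hcardF]; exact FiniteField.pow_card x
  have hn := NTlem k ℓ hk hl hord
  have hBev : ∀ z : F, Polynomial.eval z B * (z^2+z+1) = z^(2^ℓ+1) + z + 1 := by
    intro z
    have := congrArg (Polynomial.eval z) hB
    simpa using this
  have h2k1 : (1:ℕ) ≤ 2^k := Nat.one_le_two_pow
  have h2l1 : (1:ℕ) ≤ 2^ℓ := Nat.one_le_two_pow
  have hμall : ∀ c : F, c ≠ 0 → (c^(2^k-1))^(2^k+1) = 1 := by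
    intro c hc
    have hqq : (2^k - 1) * (2^k + 1) + 1 = 2^k * 2^k := by
      obtain ⟨m, hm⟩ : ∃ m, 2^k = m + 1 := ⟨2^k - 1, by omega⟩
      rw [hm]; simp; ring
    have e : (c^(2^k-1))^(2^k+1) * c = 1 * c := by
      rw [← pow_mul, one_mul, ← pow_succ, hqq,
        show (2:ℕ)^k*2^k = 2^(2*k) from by rw [two_mul, pow_add], hcard]
    exact mul_right_cancel₀ hc e
  have hBne : ∀ e : F, e ≠ 0 → Polynomial.eval (e^(2^k-1)) B ≠ 0 := by
    intro e he hB0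
    apply Nnon k ℓ hn hcard e he
    have h1 := hBev (e^(2^k-1))
    rw [hB0, zero_mul] at h1
    linear_combination -h1
  rw [← Finite.injective_iff_bijective]
  intro c d hcd0
  have hcd : c ^ r * Polynomial.eval (c^(2^k-1)) B = d ^ r * Polynomial.eval (d^(2^k-1)) B := hcd0
  by_cases hc0 : c = 0
  · subst hc0
    by_cases hd0 : d = 0
    · rw [hd0]
    · exfalso
      rw [zero_pow hr.ne', zero_mul] at hcd
      exact mul_ne_zero (pow_ne_zero r hd0) (hBne d hd0) hcd.symm
  by_cases hd0 : d = 0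
  · exfalso
    subst hd0
    rw [zero_pow hr.ne', zero_mul] at hcd
    exact mul_ne_zero (pow_ne_zero r hc0) (hBne c hc0) hcd
  have hPfrob : ∀ z : F, (z^2+z+1)^(2^k) = (z^(2^k))^2 + z^(2^k) + 1 := by
    intro z
    rw [show (z^2+z+1 : F) = (z^2+z)+1 from by ring, fr2', one_pow, fr2', pow_right_comm]
  have hNfrob : ∀ z : F, (z^(2^ℓ+1)+z+1)^(2^k) = (z^(2^k))^(2^ℓ+1) + z^(2^k) + 1 := by
    intro z
    rw [show (z^(2^ℓ+1)+z+1 : F) = (z^(2^ℓ+1)+z)+1 from by ring, fr2', one_pow, fr2',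
      pow_right_comm]
  have hfrob : ∀ e : F, e ≠ 0 →
      (Polynomial.eval (e^(2^k-1)) B)^(2^k) = Polynomial.eval ((e^(2^k-1))^(2^k)) B := by
    intro e he
    have hPq_ne : ((e^(2^k-1))^(2^k))^2 + (e^(2^k-1))^(2^k) + 1 ≠ 0 := by
      rw [pow_right_comm e (2^k-1) (2^k)]
      exact Pne k hke (e^(2^k)) (pow_ne_zero _ he) (hμall (e^(2^k)) (pow_ne_zero _ he))
    apply mul_right_cancel₀ hPq_ne
    calc (Polynomial.eval (e^(2^k-1)) B)^(2^k) * (((e^(2^k-1))^(2^k))^2 + (e^(2^k-1))^(2^k) + 1)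
        = (Polynomial.eval (e^(2^k-1)) B * ((e^(2^k-1))^2+(e^(2^k-1))+1))^(2^k) := by
          rw [mul_pow, hPfrob]
      _ = ((e^(2^k-1))^(2^ℓ+1)+(e^(2^k-1))+1)^(2^k) := by rw [hBev]
      _ = ((e^(2^k-1))^(2^k))^(2^ℓ+1) + (e^(2^k-1))^(2^k) + 1 := hNfrob _
      _ = Polynomial.eval ((e^(2^k-1))^(2^k)) B * (((e^(2^k-1))^(2^k))^2 + (e^(2^k-1))^(2^k) + 1) := (hBev _).symm
  have hnat : r * 2^k = r + (2^k-1)*r := by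
    obtain ⟨mm, hmm⟩ : ∃ x, 2^k = x + 1 := ⟨2^k - 1, by omega⟩
    rw [hmm]; simp; ring
  have hfq : ∀ e : F, e ≠ 0 → (e^r * Polynomial.eval (e^(2^k-1)) B)^(2^k)
      = e^r * (e^(2^k-1))^r * Polynomial.eval ((e^(2^k-1))^(2^k)) B := by
    intro e he
    have hthis : (e^r)^(2^k) = e^r * (e^(2^k-1))^r := by
      rw [← pow_mul, ← pow_mul, ← pow_add]
      exact congrArg (fun n => e ^ n) hnat
    rw [mul_pow, hfrob e he, hthis]
  have hbig : c^r * (c^(2^k-1))^r * Polynomial.eval ((c^(2^k-1))^(2^k)) B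
      = d^r * (d^(2^k-1))^r * Polynomial.eval ((d^(2^k-1))^(2^k)) B := by
    rw [← hfq c hc0, ← hfq d hd0, hcd]
  obtain ⟨z, hz⟩ : ∃ z : F, c^(2^k-1) = z := ⟨_, rfl⟩
  obtain ⟨x, hx⟩ : ∃ x : F, d^(2^k-1) = x := ⟨_, rfl⟩
  rw [hz, hx] at hbig hcd
  obtain ⟨zz, hzz⟩ : ∃ zz : F, z^(2^k) = zz := ⟨_, rfl⟩
  obtain ⟨xx, hxx⟩ : ∃ xx : F, x^(2^k) = xx := ⟨_, rfl⟩
  rw [hzz, hxx] at hbig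
  have hzne : z ≠ 0 := by rw [← hz]; exact pow_ne_zero _ hc0
  have hxne : x ≠ 0 := by rw [← hx]; exact pow_ne_zero _ hd0
  have hBz : Polynomial.eval z B ≠ 0 := by rw [← hz]; exact hBne c hc0
  have hbig2 : z^r * Polynomial.eval zz B * Polynomial.eval x B
      = x^r * Polynomial.eval xx B * Polynomial.eval z B := by
    apply mul_left_cancel₀ (mul_ne_zero (pow_ne_zero r hc0) (pow_ne_zero r hd0))
    linear_combination (d^r * Polynomial.eval x B) * hbig
      - (d^r * x^r * Polynomial.eval xx B) * hcd
  have hμz : z^(2^k+1) = 1 := by rw [← hz]; exact hμall c hc0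
  have hμx : x^(2^k+1) = 1 := by rw [← hx]; exact hμall d hd0
  have hμ1c : zz * z = 1 := by rw [← hzz, ← pow_succ]; exact hμz
  have hμ1d : xx * x = 1 := by rw [← hxx, ← pow_succ]; exact hμx
  have hZc : zz^(2^ℓ) * z^(2^ℓ) = 1 := by rw [← mul_pow, hμ1c, one_pow]
  have hZd : xx^(2^ℓ) * x^(2^ℓ) = 1 := by rw [← mul_pow, hμ1d, one_pow]
  have hP2c : (zz^2 + zz + 1) * z^2 = z^2+z+1 := by
    linear_combination (zz*z + z + 1) * hμ1c
  have hP2d : (xx^2 + xx + 1) * x^2 = x^2+x+1 := by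
    linear_combination (xx*x + x + 1) * hμ1d
  have hiic : (zz^(2^ℓ+1) + zz + 1) * (z^2*(z^(2^ℓ)*z))
      = (z^(2^ℓ)*z + z^(2^ℓ) + 1) * z^2 := by
    linear_combination (z^2*(zz^(2^ℓ)*z^(2^ℓ)) + z^(2^ℓ+2)) * hμ1c + z^2 * hZc
  have hiid : (xx^(2^ℓ+1) + xx + 1) * (x^2*(x^(2^ℓ)*x))
      = (x^(2^ℓ)*x + x^(2^ℓ) + 1) * x^2 := by
    linear_combination (x^2*(xx^(2^ℓ)*x^(2^ℓ)) + x^(2^ℓ+2)) * hμ1d + x^2 * hZd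
  have hiiic : Polynomial.eval zz B * (z^2+z+1) * (z^(2^ℓ)*z)
      = (z^(2^ℓ)*z + z^(2^ℓ) + 1) * z^2 := by
    linear_combination (z^2*(z^(2^ℓ)*z)) * (hBev zz)
      - (Polynomial.eval zz B*(z^(2^ℓ)*z)) * hP2c + hiic
  have hiiid : Polynomial.eval xx B * (x^2+x+1) * (x^(2^ℓ)*x)
      = (x^(2^ℓ)*x + x^(2^ℓ) + 1) * x^2 := by
    linear_combination (x^2*(x^(2^ℓ)*x)) * (hBev xx)
      - (Polynomial.eval xx B*(x^(2^ℓ)*x)) * hP2d + hiid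
  have hiva : z^r * ((z^(2^ℓ)*z + z^(2^ℓ) + 1) * z^2) * ((x^(2^ℓ)*x + x + 1) * (x^(2^ℓ)*x))
      = x^r * ((x^(2^ℓ)*x + x^(2^ℓ) + 1) * x^2) * ((z^(2^ℓ)*z + z + 1) * (z^(2^ℓ)*z)) := by
    linear_combination ((z^2+z+1)*(x^2+x+1)*(z^(2^ℓ)*z)*(x^(2^ℓ)*x)) * hbig2
      - (z^r*(x^(2^ℓ)*x)*(Polynomial.eval x B)*(x^2+x+1)) * hiiic
      - (z^r*((z^(2^ℓ)*z + z^(2^ℓ) + 1)*z^2)*(x^(2^ℓ)*x)) * (hBev x)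
      + (x^r*(z^(2^ℓ)*z)*(Polynomial.eval z B)*(z^2+z+1)) * hiiid
      + (x^r*((x^(2^ℓ)*x + x^(2^ℓ)+1)*x^2)*(z^(2^ℓ)*z)) * (hBev z)
  have hmodr : r + 2 ≡ 2^ℓ + 1 [MOD 2^k + 1] := by
    have h := Nat.ModEq.add_right 2 hmod
    rwa [show 2^ℓ - 1 + 2 = 2^ℓ + 1 from by omega] at h
  have H8 : z^(r+2) = z^(2^ℓ+1) :=
    pow_congr_of_pow_eq_one (by positivity) hμz hmodr
  have H9 : x^(r+2) = x^(2^ℓ+1) :=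
    pow_congr_of_pow_eq_one (by positivity) hμx hmodr
  have hivb : ((z^(2^ℓ)*z) * (x^(2^ℓ)*x)) * ((z^(2^ℓ)*z + z^(2^ℓ) + 1) * (x^(2^ℓ)*x + x + 1))
      = ((z^(2^ℓ)*z) * (x^(2^ℓ)*x)) * ((x^(2^ℓ)*x + x^(2^ℓ) + 1) * (z^(2^ℓ)*z + z + 1)) := by
    linear_combination hiva
      - ((z^(2^ℓ)*z + z^(2^ℓ)+1)*(x^(2^ℓ)*x + x+1)*(x^(2^ℓ)*x)) * H8
      + ((x^(2^ℓ)*x + x^(2^ℓ)+1)*(z^(2^ℓ)*z + z+1)*(z^(2^ℓ)*z)) * H9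
  have KEYμ : (z^(2^ℓ)*z + z^(2^ℓ) + 1) * (x^(2^ℓ)*x + x + 1)
      = (x^(2^ℓ)*x + x^(2^ℓ) + 1) * (z^(2^ℓ)*z + z + 1) :=
    mul_left_cancel₀ (mul_ne_zero (mul_ne_zero (pow_ne_zero _ hzne) hzne)
      (mul_ne_zero (pow_ne_zero _ hxne) hxne)) hivb
  have hζξ : z = x := by
    by_cases hcf : c^(2^k) = c <;> by_cases hdf : d^(2^k) = d
    · have hζ1 : z = 1 := mul_right_cancel₀ hc0 (by rw [← hz, powsub1, hcf, one_mul])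
      have hξ1 : x = 1 := mul_right_cancel₀ hd0 (by rw [← hx, powsub1, hdf, one_mul])
      rw [hζ1, hξ1]
    · exfalso
      obtain ⟨v, hv0, hvl, hξv⟩ := keyPack k d hd0 hdf hcard
      rw [hx] at hξv
      have hζ1 : z = 1 := mul_right_cancel₀ hc0 (by rw [← hz, powsub1, hcf, one_mul])
      rw [hζ1] at KEYμ
      have hQfix : x^(2^ℓ) = x := by
        linear_combination -KEYμ + (x - x^(2^ℓ))*h2
      have h5 : x^(2^ℓ) * v^(2^ℓ) = v^(2^ℓ) + 1 := by
        rw [← mul_pow, hξv, fr2', one_pow]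
      have hvfix : v^(2^ℓ) = v := by
        linear_combination v*h5 - (v^(2^ℓ))*hξv - (v*v^(2^ℓ))*hQfix
      exact lemL1 k ℓ hn hcard v hvl hvfix
    · exfalso
      obtain ⟨w, hw0, hwl, hζw⟩ := keyPack k c hc0 hcf hcard
      rw [hz] at hζw
      have hξ1 : x = 1 := mul_right_cancel₀ hd0 (by rw [← hx, powsub1, hdf, one_mul])
      rw [hξ1] at KEYμ
      have hQfix : z^(2^ℓ) = z := by
        linear_combination KEYμ + (z - z^(2^ℓ))*h2
      have h5 : z^(2^ℓ) * w^(2^ℓ) = w^(2^ℓ) + 1 := by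
        rw [← mul_pow, hζw, fr2', one_pow]
      have hwfix : w^(2^ℓ) = w := by
        linear_combination w*h5 - (w^(2^ℓ))*hζw - (w*w^(2^ℓ))*hQfix
      exact lemL1 k ℓ hn hcard w hwl hwfix
    · obtain ⟨w, hw0, hwl, hζw⟩ := keyPack k c hc0 hcf hcard
      obtain ⟨v, hv0, hvl, hξv⟩ := keyPack k d hd0 hdf hcard
      rw [hz] at hζw
      rw [hx] at hξv
      have hNw := (NMid ℓ z w hζw).1
      have hMw := (NMid ℓ z w hζw).2
      have hNv := (NMid ℓ x v hξv).1
      have hMv := (NMid ℓ x v hξv).2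
      have s1 : (w^(2^ℓ)*w + w^(2^ℓ) + 1)*(v^(2^ℓ)*v + v + 1)
          = ((z^(2^ℓ)*z + z^(2^ℓ) + 1) * (x^(2^ℓ)*x + x + 1))*((w^(2^ℓ)*w)*(v^(2^ℓ)*v)) := by
        rw [← hMw, ← hNv]; ring
      have s2 : (v^(2^ℓ)*v + v^(2^ℓ) + 1)*(w^(2^ℓ)*w + w + 1)
          = ((x^(2^ℓ)*x + x^(2^ℓ) + 1) * (z^(2^ℓ)*z + z + 1))*((w^(2^ℓ)*w)*(v^(2^ℓ)*v)) := by
        rw [← hMv, ← hNw]; ring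
      have hMN : (w^(2^ℓ)*w + w^(2^ℓ) + 1) * (v^(2^ℓ)*v + v + 1)
          = (v^(2^ℓ)*v + v^(2^ℓ) + 1) * (w^(2^ℓ)*w + w + 1) := by
        rw [s1, s2, KEYμ]
      have hwv : w = v := lemCore k ℓ hn hcard w v hwl hvl hMN
      rw [hwv] at hζw
      exact mul_right_cancel₀ hv0 (hζw.trans hξv.symm)
  have hcr : c^r = d^r := by
    rw [← hζξ] at hcd
    exact mul_right_cancel₀ hBz hcd
  have hu1 : (c/d)^r = 1 := by rw [div_pow, hcr, div_self (pow_ne_zero r hd0)]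
  have hu2 : (c/d)^(2^k-1) = 1 := by
    rw [div_pow, hz, hx, hζξ, div_self hxne]
  have hgcd : orderOf (c/d) ∣ 1 := by
    have h := Nat.dvd_gcd (orderOf_dvd_of_pow_eq_one hu1) (orderOf_dvd_of_pow_eq_one hu2)
    rwa [hrq] at h
  have hone : c/d = 1 := orderOf_eq_one_iff.mp (Nat.dvd_one.mp hgcd)
  exact (div_eq_one_iff_eq hd0).mp hone
end

section
/- Let k be an even positive integer and ℓ an odd positive integer, set q := 2^k and Q := 2^ℓ, and let B(X) := (X^Q + X + 1)/(X² + X + 1) ∈ F₂[X]. If r is a positive integer with gcd(r, q-1) = 1 and r ≡ Q - 1 (mod q+1), then X^r · B(X^{q-1}) is a permutation polynomial of F_{q²}. -/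
-- auxiliary lemmas
private lemma pow_mod_eq' {M : Type*} [Monoid M] {x : M} {n : ℕ} (hx : x ^ n = 1) (m : ℕ) :
    x ^ m = x ^ (m % n) := by
  conv_lhs => rw [← Nat.div_add_mod m n]
  rw [pow_add, pow_mul, hx, one_pow, one_mul]

private lemma pow_eq_pow_of_modEq' {M : Type*} [Monoid M] {x : M} {n a b : ℕ} (hx : x ^ n = 1)
    (h : a ≡ b [MOD n]) : x ^ a = x ^ b := by
  rw [pow_mod_eq' hx a, pow_mod_eq' hx b, h]

private lemma eq_one_of_pow_coprime' {M : Type*} [Monoid M] {x : M} {a b : ℕ}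
    (ha : x ^ a = 1) (hb : x ^ b = 1) (h : Nat.gcd a b = 1) : x = 1 := by
  have h1 : orderOf x ∣ a := orderOf_dvd_of_pow_eq_one ha
  have h2 : orderOf x ∣ b := orderOf_dvd_of_pow_eq_one hb
  have := Nat.dvd_gcd h1 h2
  rw [h, Nat.dvd_one] at this
  exact orderOf_eq_one_iff.mp this

private lemma key_coprime' (k ℓ : ℕ) (hl : 0 < ℓ) (hke : Even k) (hlo : Odd ℓ) :
    Nat.Coprime (2 ^ (2 * ℓ) - 1) (2 ^ k + 1) := by
  set g := Nat.gcd (2 ^ (2 * ℓ) - 1) (2 ^ k + 1) with hg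
  have hd1 : g ∣ 2 ^ (2 * ℓ) - 1 := Nat.gcd_dvd_left _ _
  have hd2 : g ∣ 2 ^ k + 1 := Nat.gcd_dvd_right _ _
  have h2l : (2 : ZMod g) ^ (2 * ℓ) = 1 := by
    have h0 : ((2 ^ (2 * ℓ) - 1 : ℕ) : ZMod g) = 0 :=
      (ZMod.natCast_eq_zero_iff _ _).mpr hd1
    have h1 : (1 : ℕ) ≤ 2 ^ (2 * ℓ) := Nat.one_le_two_pow
    rw [Nat.cast_sub h1] at h0
    push_cast at h0
    linear_combination h0
  have hk2 : (2 : ZMod g) ^ k = -1 := by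
    have h0 : ((2 ^ k + 1 : ℕ) : ZMod g) = 0 :=
      (ZMod.natCast_eq_zero_iff _ _).mpr hd2
    push_cast at h0
    linear_combination h0
  have he1 : orderOf (2 : ZMod g) ∣ 2 * ℓ := orderOf_dvd_of_pow_eq_one h2l
  have he2 : orderOf (2 : ZMod g) ∣ 2 * k := orderOf_dvd_of_pow_eq_one
    (by rw [mul_comm, pow_mul, hk2]; ring)
  have hdk : orderOf (2 : ZMod g) ∣ k := by
    have hgd : orderOf (2 : ZMod g) ∣ 2 * Nat.gcd ℓ k := by
      rw [← Nat.gcd_mul_left]; exact Nat.dvd_gcd he1 he2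
    refine hgd.trans ?_
    have hone : Nat.gcd ℓ k ∣ k := Nat.gcd_dvd_right _ _
    have hodd : Odd (Nat.gcd ℓ k) := by
      rcases Nat.even_or_odd (Nat.gcd ℓ k) with he | ho
      · exfalso
        have : (2 : ℕ) ∣ ℓ := dvd_trans he.two_dvd (Nat.gcd_dvd_left _ _)
        exact (Nat.not_even_iff_odd.mpr hlo) (even_iff_two_dvd.mpr this)
      · exact ho
    exact Nat.Coprime.mul_dvd_of_dvd_of_dvd (Nat.coprime_two_left.mpr hodd)
      hke.two_dvd hone
  have h2k1 : (2 : ZMod g) ^ k = 1 := by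
    obtain ⟨c, hc⟩ := hdk
    rw [hc, pow_mul, pow_orderOf_eq_one, one_pow]
  have hcast : ((2 : ℕ) : ZMod g) = 0 := by push_cast; linear_combination hk2 - h2k1
  have hg2 : g ∣ 2 := (ZMod.natCast_eq_zero_iff _ _).mp hcast
  have godd : ¬ (2 ∣ g) := by
    intro h2g
    have h2d : (2 : ℕ) ∣ 2 ^ (2 * ℓ) - 1 := h2g.trans hd1
    have hpow : (2 : ℕ) ∣ 2 ^ (2 * ℓ) := dvd_pow_self 2 (by omega)
    have h1 : (1:ℕ) ≤ 2 ^ (2*ℓ) := Nat.one_le_two_pow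
    omega
  rcases (Nat.prime_two.eq_one_or_self_of_dvd g hg2) with h | h
  · exact h
  · exact absurd (h ▸ dvd_refl g) godd

/-- Corollary 5.2, case (4.2): with `B(X) = (X^Q+X+1)/(X²+X+1)`, the polynomial
`X^r B(X^{q-1})` is a permutation polynomial of `F_{q²}`. -/
theorem stmt_12 (k ℓ : ℕ) (hk : 0 < k) (hl : 0 < ℓ) (hke : Even k) (hlo : Odd ℓ)
    (q Q : ℕ) (hq : q = 2 ^ k) (hQ : Q = 2 ^ ℓ)
    (F : Type) [Field F] [Fintype F] (hF : Fintype.card F = q ^ 2)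
    (B : Polynomial F)
    (hB : B * (Polynomial.X ^ 2 + Polynomial.X + 1) =
      Polynomial.X ^ Q + Polynomial.X + 1)
    (r : ℕ) (hr : 0 < r) (hrq : Nat.gcd r (q - 1) = 1)
    (hmod : r ≡ Q - 1 [MOD q + 1]) :
    Function.Bijective (fun c : F => c ^ r * B.eval (c ^ (q - 1))) := by
  classical
  -- numeric bounds
  have hq2 : 2 ≤ q := by
    rw [hq]
    calc 2 = 2 ^ 1 := rfl
    _ ≤ 2 ^ k := Nat.pow_le_pow_right (by norm_num) hk
  have hQ1 : 1 ≤ Q := by rw [hQ]; exact Nat.one_le_two_pow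
  -- characteristic 2
  have hp2 : ringChar F = 2 := by
    obtain ⟨n, hnp, hcard⟩ := FiniteField.card F (ringChar F)
    have hdvd : ringChar F ∣ 2 ^ (k * 2) := by
      have h1 : ringChar F ^ (n : ℕ) = 2 ^ (k * 2) := by
        rw [← hcard, hF, hq, ← pow_mul]
      rw [← h1]
      exact dvd_pow_self _ (by exact_mod_cast n.ne_zero)
    have := hnp.dvd_of_dvd_pow hdvd
    exact (Nat.prime_dvd_prime_iff_eq hnp Nat.prime_two).mp this
  haveI hchar : CharP F 2 := by rw [← hp2]; exact ringChar.charP F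
  haveI : Fact (Nat.Prime 2) := ⟨Nat.prime_two⟩
  have htwo : (2 : F) = 0 := by
    have := CharP.cast_eq_zero F 2
    exact_mod_cast this
  have frobq : ∀ x y : F, (x + y) ^ q = x ^ q + y ^ q := by
    intro x y; rw [hq]; exact add_pow_char_pow ..
  have frobQ : ∀ x y : F, (x + y) ^ Q = x ^ Q + y ^ Q := by
    intro x y; rw [hQ]; exact add_pow_char_pow ..
  -- cube root of unity
  have hq3 : q % 3 = 1 := by
    obtain ⟨m, hm⟩ := hke
    have h4 : q = 4 ^ m := by
      rw [hq, hm, pow_add, show (4:ℕ) = 2 * 2 from rfl, mul_pow]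
    rw [h4, Nat.pow_mod]
    norm_num
  have hQ3 : Q % 3 = 2 := by
    obtain ⟨m, hm⟩ := hlo
    have h4 : Q = 4 ^ m * 2 := by
      rw [hQ, hm, pow_add, pow_one, pow_mul]
      norm_num
    rw [h4, Nat.mul_mod, Nat.pow_mod]
    norm_num
  haveI : Fact (Nat.Prime 3) := ⟨by norm_num⟩
  have h3dvd : 3 ∣ Fintype.card Fˣ := by
    rw [Fintype.card_units, hF]
    have hsq : q ^ 2 % 3 = 1 := by rw [Nat.pow_mod, hq3]
    have hge : 1 ≤ q ^ 2 := Nat.one_le_pow _ _ (by omega)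
    omega
  obtain ⟨gu, hgu⟩ := exists_prime_orderOf_dvd_card 3 h3dvd
  set ω : F := ((gu : Fˣ) : F) with hωdef
  have hω3 : ω ^ 3 = 1 := by
    have h := pow_orderOf_eq_one gu
    rw [hgu] at h
    have := congrArg (Units.val) h
    simpa using this
  have hωne1 : ω ≠ 1 := by
    intro h
    have : gu = 1 := Units.ext h
    rw [this, orderOf_one] at hgu
    norm_num at hgu
  have hω : ω ^ 2 + ω + 1 = 0 := by
    have hfac : (ω - 1) * (ω ^ 2 + ω + 1) = 0 := by linear_combination hω3
    rcases mul_eq_zero.mp hfac with h | h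
    · exact absurd (by linear_combination h) hωne1
    · exact h
  have hω0 : ω ≠ 0 := by
    intro h; rw [h] at hω; simp at hω
  have hω2ne1 : ω ^ 2 ≠ 1 := by
    intro h
    have h0 : ω = 0 := by linear_combination hω - h - htwo
    exact hω0 h0
  have ωpow : ∀ n : ℕ, ω ^ n = ω ^ (n % 3) := pow_mod_eq' hω3
  have hωq : ω ^ q = ω := by rw [ωpow, hq3, pow_one]
  have hωQ : ω ^ Q = ω ^ 2 := by rw [ωpow, hQ3]
  have hω2q : (ω ^ 2) ^ q = ω ^ 2 := by
    rw [← pow_mul, ωpow, show (2 * q) % 3 = 2 by omega]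
  have hω2Q : (ω ^ 2) ^ Q = ω := by
    rw [← pow_mul, ωpow, show (2 * Q) % 3 = 1 by omega, pow_one]
  have hωq1 : ω ^ (q + 1) = ω ^ 2 := by rw [ωpow, show (q + 1) % 3 = 2 by omega]
  have hω2q1 : (ω ^ 2) ^ (q + 1) = ω := by
    rw [← pow_mul, ωpow, show (2 * (q + 1)) % 3 = 1 by omega, pow_one]
  -- coprimality facts transported
  have hcopQQ : Nat.gcd (Q * Q - 1) (q + 1) = 1 := by
    have h := key_coprime' k ℓ hl hke hlo
    have h1 : Q * Q = 2 ^ (2 * ℓ) := by rw [hQ, ← pow_add, two_mul]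
    rw [h1, hq]
    exact h
  have hdvdl : (2 ^ ℓ - 1 : ℕ) ∣ 2 ^ (2 * ℓ) - 1 := by
    have h := Nat.sub_dvd_pow_sub_pow (2 ^ ℓ) 1 2
    have h2 : ((2:ℕ) ^ ℓ) ^ 2 = 2 ^ (2 * ℓ) := by rw [← pow_mul, mul_comm]
    rw [h2, one_pow] at h
    exact h
  have hcopQq : Nat.gcd (Q - 1) (q + 1) = 1 := by
    rw [hq, hQ]
    exact (key_coprime' k ℓ hl hke hlo).coprime_dvd_left hdvdl
  -- evaluation identity
  have hBev : ∀ x : F, B.eval x * (x ^ 2 + x + 1) = x ^ Q + x + 1 := by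
    intro x
    have h := congrArg (Polynomial.eval x) hB
    simpa using h
  -- membership in μ_{q+1}
  have hcard1 : (q - 1) * (q + 1) = Fintype.card F - 1 := by
    rw [hF]
    rcases Nat.exists_eq_add_of_le hq2 with ⟨m, hm⟩
    subst hm
    have h1 : 2 + m - 1 = m + 1 := by omega
    rw [h1]
    have h2 : (2 + m) ^ 2 = (m + 1) * (m + 3) + 1 := by ring
    rw [h2, Nat.add_sub_cancel]
    ring
  have hμ : ∀ c : F, c ≠ 0 → (c ^ (q - 1)) ^ (q + 1) = 1 := by
    intro c hc
    rw [← pow_mul, hcard1]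
    exact FiniteField.pow_card_sub_one_eq_one c hc
  -- N(u) ≠ 0 on μ_{q+1}
  have hNne : ∀ u : F, u ^ (q + 1) = 1 → u ^ Q + u + 1 ≠ 0 := by
    intro u hu h0
    have hu0 : u ≠ 0 := by
      intro h; rw [h, zero_pow (by omega : q + 1 ≠ 0)] at hu; exact zero_ne_one hu
    have hQu : u ^ Q = u + 1 := by linear_combination h0 - (u + 1) * htwo
    have hQQ : u ^ (Q * Q) = u := by
      rw [pow_mul, hQu, frobQ u 1, one_pow, hQu]
      linear_combination htwo
    have hQQ1 : u ^ (Q * Q - 1) = 1 := by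
      have hge : 1 ≤ Q * Q := Nat.one_le_iff_ne_zero.mpr (by positivity)
      have h1 : u ^ (Q * Q - 1) * u = 1 * u := by
        rw [← pow_succ, show Q * Q - 1 + 1 = Q * Q from by omega, hQQ, one_mul]
      exact mul_right_cancel₀ hu0 h1
    have hu1 : u = 1 := eq_one_of_pow_coprime' hQQ1 hu hcopQQ
    rw [hu1, one_pow] at h0
    have : (1 : F) = 0 := by linear_combination h0 - htwo
    exact one_ne_zero this
  -- the key injectivity on μ_{q+1}
  have key : ∀ u v : F, u ^ (q + 1) = 1 → v ^ (q + 1) = 1 →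
      (u ^ (Q + 1) + u ^ Q + u) * (v ^ Q + v + 1)
        = (v ^ (Q + 1) + v ^ Q + v) * (u ^ Q + u + 1) → u = v := by
    intro u v hu hv h6
    have hNu0 : u ^ Q + u + 1 ≠ 0 := hNne u hu
    have hNv0 : v ^ Q + v + 1 ≠ 0 := hNne v hv
    have factω : ∀ x : F, x ^ (Q + 1) + x ^ Q + x + ω * (x ^ Q + x + 1)
        = (x ^ Q + ω ^ 2) * (x + ω ^ 2) := by
      intro x
      linear_combination (-(x ^ Q + x) - ω * (ω - 1)) * hω + ((ω + 1) * (x ^ Q + x)) * htwo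
    have factω2 : ∀ x : F, x ^ (Q + 1) + x ^ Q + x + ω ^ 2 * (x ^ Q + x + 1)
        = (x ^ Q + ω) * (x + ω) := by
      intro x
      linear_combination (x ^ Q + x) * hω + (-(ω * (x ^ Q + x))) * htwo
    have hE1 : (u ^ Q + ω ^ 2) * (u + ω ^ 2) * (v ^ Q + v + 1)
        = (v ^ Q + ω ^ 2) * (v + ω ^ 2) * (u ^ Q + u + 1) := by
      linear_combination h6 - (v ^ Q + v + 1) * factω u + (u ^ Q + u + 1) * factω v
    have hE2 : (u ^ Q + ω) * (u + ω) * (v ^ Q + v + 1)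
        = (v ^ Q + ω) * (v + ω) * (u ^ Q + u + 1) := by
      linear_combination h6 - (v ^ Q + v + 1) * factω2 u + (u ^ Q + u + 1) * factω2 v
    have hfuQ : (u + ω) ^ Q = u ^ Q + ω ^ 2 := by rw [frobQ, hωQ]
    have hfu2Q : (u + ω ^ 2) ^ Q = u ^ Q + ω := by rw [frobQ, hω2Q]
    have hfvQ : (v + ω) ^ Q = v ^ Q + ω ^ 2 := by rw [frobQ, hωQ]
    have hfv2Q : (v + ω ^ 2) ^ Q = v ^ Q + ω := by rw [frobQ, hω2Q]
    have hu0 : u ≠ 0 := by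
      intro h; rw [h, zero_pow (by omega : q + 1 ≠ 0)] at hu; exact zero_ne_one hu
    have hv0 : v ≠ 0 := by
      intro h; rw [h, zero_pow (by omega : q + 1 ≠ 0)] at hv; exact zero_ne_one hv
    have hA0 : u + ω ≠ 0 := by
      intro h
      have hue : u = ω := by linear_combination h - ω * htwo
      rw [hue, hωq1] at hu
      exact hω2ne1 hu
    have hA'0 : u + ω ^ 2 ≠ 0 := by
      intro h
      have hue : u = ω ^ 2 := by linear_combination h - (ω ^ 2) * htwo
      rw [hue, hω2q1] at hu
      exact hωne1 hu
    have hC0 : v + ω ≠ 0 := by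
      intro h
      have hue : v = ω := by linear_combination h - ω * htwo
      rw [hue, hωq1] at hv
      exact hω2ne1 hv
    have hC'0 : v + ω ^ 2 ≠ 0 := by
      intro h
      have hue : v = ω ^ 2 := by linear_combination h - (ω ^ 2) * htwo
      rw [hue, hω2q1] at hv
      exact hωne1 hv
    have hAQ0 : u ^ Q + ω ^ 2 ≠ 0 := by rw [← hfuQ]; exact pow_ne_zero _ hA0
    have hA'Q0 : u ^ Q + ω ≠ 0 := by rw [← hfu2Q]; exact pow_ne_zero _ hA'0
    have hCQ0 : v ^ Q + ω ^ 2 ≠ 0 := by rw [← hfvQ]; exact pow_ne_zero _ hC0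
    have hC'Q0 : v ^ Q + ω ≠ 0 := by rw [← hfv2Q]; exact pow_ne_zero _ hC'0
    have hE3 : (u ^ Q + ω ^ 2) * (u + ω ^ 2) * ((v ^ Q + ω) * (v + ω))
        = (v ^ Q + ω ^ 2) * (v + ω ^ 2) * ((u ^ Q + ω) * (u + ω)) := by
      have hNN : (u ^ Q + u + 1) * (v ^ Q + v + 1) ≠ 0 := mul_ne_zero hNu0 hNv0
      apply mul_right_cancel₀ hNN
      linear_combination ((v ^ Q + ω) * (v + ω) * (u ^ Q + u + 1)) * hE1
        - ((v ^ Q + ω ^ 2) * (v + ω ^ 2) * (u ^ Q + u + 1)) * hE2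
    -- norms of the Möbius images
    have hnorm : ∀ x : F, x ^ (q + 1) = 1 → x ≠ 0 →
        (x + ω) ^ (q + 1) = ω ^ 2 * (x + ω ^ 2) ^ (q + 1) := by
      intro x hx hx0
      have e1 : (x + ω) ^ (q + 1) = (x ^ q + ω) * (x + ω) := by
        rw [pow_succ, frobq, hωq]
      have e2 : (x + ω ^ 2) ^ (q + 1) = (x ^ q + ω ^ 2) * (x + ω ^ 2) := by
        rw [pow_succ, frobq, hω2q]
      have h1 : x * ((x ^ q + ω) * (x + ω)) = ω * ((x + ω) * (x + ω ^ 2)) := by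
        linear_combination (x + ω) * hx - ((ω - 1) * (x + ω)) * hω
      have h2 : x * ((x ^ q + ω ^ 2) * (x + ω ^ 2)) = ω ^ 2 * ((x + ω) * (x + ω ^ 2)) := by
        linear_combination (x + ω ^ 2) * hx - ((ω - 1) * (x + ω ^ 2)) * hω
      apply mul_left_cancel₀ hx0
      rw [e1, e2, h1]
      linear_combination -(ω ^ 2) * h2 - (ω * (x + ω) * (x + ω ^ 2)) * hω3
    have htnorm : ((u + ω) / (u + ω ^ 2)) ^ (q + 1) = ω ^ 2 := by
      rw [div_pow, hnorm u hu hu0, mul_div_assoc, div_self (pow_ne_zero _ hA'0), mul_one]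
    have hsnorm : ((v + ω) / (v + ω ^ 2)) ^ (q + 1) = ω ^ 2 := by
      rw [div_pow, hnorm v hv hv0, mul_div_assoc, div_self (pow_ne_zero _ hC'0), mul_one]
    have ht0 : (u + ω) / (u + ω ^ 2) ≠ 0 := div_ne_zero hA0 hA'0
    have hs0 : (v + ω) / (v + ω ^ 2) ≠ 0 := div_ne_zero hC0 hC'0
    have hω20 : ω ^ 2 ≠ 0 := pow_ne_zero _ hω0
    have hx1 : (((u + ω) / (u + ω ^ 2)) / ((v + ω) / (v + ω ^ 2))) ^ (q + 1) = 1 := by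
      rw [div_pow, htnorm, hsnorm, div_self hω20]
    have hts : ((u + ω) / (u + ω ^ 2)) ^ Q * ((v + ω) / (v + ω ^ 2))
        = ((v + ω) / (v + ω ^ 2)) ^ Q * ((u + ω) / (u + ω ^ 2)) := by
      rw [div_pow, div_pow, hfuQ, hfu2Q, hfvQ, hfv2Q, div_mul_div_comm, div_mul_div_comm]
      rw [div_eq_div_iff (mul_ne_zero hA'Q0 hC'0) (mul_ne_zero hC'Q0 hA'0)]
      linear_combination hE3
    have hxQ : (((u + ω) / (u + ω ^ 2)) / ((v + ω) / (v + ω ^ 2))) ^ Q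
        = ((u + ω) / (u + ω ^ 2)) / ((v + ω) / (v + ω ^ 2)) := by
      rw [div_pow]
      rw [div_eq_div_iff (pow_ne_zero _ hs0) hs0]
      linear_combination hts
    have hx0 : ((u + ω) / (u + ω ^ 2)) / ((v + ω) / (v + ω ^ 2)) ≠ 0 := div_ne_zero ht0 hs0
    have hxQ1 : (((u + ω) / (u + ω ^ 2)) / ((v + ω) / (v + ω ^ 2))) ^ (Q - 1) = 1 := by
      apply mul_right_cancel₀ hx0
      rw [← pow_succ, show Q - 1 + 1 = Q from by omega, hxQ, one_mul]
    have hxeq1 : ((u + ω) / (u + ω ^ 2)) / ((v + ω) / (v + ω ^ 2)) = 1 :=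
      eq_one_of_pow_coprime' hxQ1 hx1 hcopQq
    rw [div_eq_one_iff_eq hs0] at hxeq1
    rw [div_eq_div_iff hA'0 hC'0] at hxeq1
    -- hxeq1 : (u+ω)*(v+ω^2) = (v+ω)*(u+ω^2)
    have hωdne : ω ^ 2 - ω ≠ 0 := by
      intro h
      have h1 : (1 : F) = 0 := by linear_combination hω - h - ω * htwo
      exact one_ne_zero h1
    have h0 : (ω ^ 2 - ω) * (u - v) = 0 := by linear_combination hxeq1
    rcases mul_eq_zero.mp h0 with h | h
    · exact absurd h hωdne
    · exact sub_eq_zero.mp h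
  -- nonvanishing of B on μ_{q+1}
  have hBne : ∀ c : F, c ≠ 0 → B.eval (c ^ (q - 1)) ≠ 0 := by
    intro c hc h0
    have h := hBev (c ^ (q - 1))
    rw [h0, zero_mul] at h
    exact hNne _ (hμ c hc) h.symm
  -- the key Frobenius relation for B values
  have hR : ∀ c : F, c ≠ 0 →
      (B.eval (c ^ (q - 1))) ^ q * ((c ^ (q - 1)) ^ 2 + c ^ (q - 1) + 1) * (c ^ (q - 1)) ^ (Q + 1)
        = ((c ^ (q - 1)) ^ (Q + 1) + (c ^ (q - 1)) ^ Q + c ^ (q - 1)) * (c ^ (q - 1)) ^ 2 := by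
    intro c hc
    set u := c ^ (q - 1) with hudef
    have hu : u ^ (q + 1) = 1 := hμ c hc
    have huQ : u ^ ((q + 1) * Q) = 1 := by rw [pow_mul, hu, one_pow]
    have e1 : (B.eval u) ^ q * ((u ^ 2) ^ q + u ^ q + 1) = (u ^ Q) ^ q + u ^ q + 1 := by
      have h := congrArg (· ^ q) (hBev u)
      simp only [mul_pow] at h
      rw [frobq (u ^ 2 + u) 1, frobq (u ^ 2) u, one_pow] at h
      rw [frobq (u ^ Q + u) 1, frobq (u ^ Q) u, one_pow] at h
      exact h
    have e2 : u ^ (Q + 1) * ((u ^ Q) ^ q + u ^ q + 1) = u ^ (Q + 1) + u ^ Q + u := by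
      linear_combination u * huQ + u ^ Q * hu
    have e3 : u ^ 2 * ((u ^ 2) ^ q + u ^ q + 1) = u ^ 2 + u + 1 := by
      linear_combination (u ^ (q + 1) + 1 + u) * hu
    linear_combination (u ^ (Q + 1) * u ^ 2) * e1 + u ^ 2 * e2
      - (u ^ (Q + 1) * (B.eval u) ^ q) * e3
  -- injectivity
  have hinj : Function.Injective (fun c : F => c ^ r * B.eval (c ^ (q - 1))) := by
    intro a b hab'
    have hab : a ^ r * B.eval (a ^ (q - 1)) = b ^ r * B.eval (b ^ (q - 1)) := hab'
    by_cases ha : a = 0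
    · by_cases hb : b = 0
      · rw [ha, hb]
      · exfalso
        rw [ha, zero_pow hr.ne', zero_mul] at hab
        exact (mul_ne_zero (pow_ne_zero r hb) (hBne b hb)) hab.symm
    · by_cases hb : b = 0
      · exfalso
        rw [hb, zero_pow hr.ne', zero_mul] at hab
        exact (mul_ne_zero (pow_ne_zero r ha) (hBne a ha)) hab
      · -- both nonzero
        have hα : (a ^ (q - 1)) ^ (q + 1) = 1 := hμ a ha
        have hβ : (b ^ (q - 1)) ^ (q + 1) = 1 := hμ b hb
        have hBa0 : B.eval (a ^ (q - 1)) ≠ 0 := hBne a ha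
        have hBb0 : B.eval (b ^ (q - 1)) ≠ 0 := hBne b hb
        have hfq : a ^ (r * q) * (B.eval (a ^ (q - 1))) ^ q
            = b ^ (r * q) * (B.eval (b ^ (q - 1))) ^ q := by
          have h := congrArg (· ^ q) hab
          simp only [mul_pow, ← pow_mul] at h
          exact h
        have hexp : ∀ c : F, c ^ (r * q) = (c ^ (q - 1)) ^ r * c ^ r := by
          intro c
          rw [← pow_mul, ← pow_add]
          congr 1
          have h1 : q - 1 + 1 = q := by omega
          calc r * q = ((q - 1) + 1) * r := by rw [h1]; ring
          _ = (q - 1) * r + r := by ring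
        have h4' : ((a ^ (q - 1)) ^ r * (B.eval (a ^ (q - 1))) ^ q * B.eval (b ^ (q - 1)))
              * (a ^ r * b ^ r)
            = ((b ^ (q - 1)) ^ r * (B.eval (b ^ (q - 1))) ^ q * B.eval (a ^ (q - 1)))
              * (a ^ r * b ^ r) := by
          linear_combination (b ^ r * B.eval (b ^ (q - 1))) * hfq
            - (b ^ (r * q) * (B.eval (b ^ (q - 1))) ^ q) * hab
            - ((B.eval (a ^ (q - 1))) ^ q * B.eval (b ^ (q - 1)) * b ^ r) * (hexp a)
            + ((B.eval (b ^ (q - 1))) ^ q * B.eval (a ^ (q - 1)) * a ^ r) * (hexp b)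
        have h4 := mul_right_cancel₀
          (mul_ne_zero (pow_ne_zero r ha) (pow_ne_zero r hb)) h4'
        have hαr : (a ^ (q - 1)) ^ r * (a ^ (q - 1)) = (a ^ (q - 1)) ^ Q := by
          rw [pow_eq_pow_of_modEq' hα hmod, ← pow_succ,
            show Q - 1 + 1 = Q from by omega]
        have hβr : (b ^ (q - 1)) ^ r * (b ^ (q - 1)) = (b ^ (q - 1)) ^ Q := by
          rw [pow_eq_pow_of_modEq' hβ hmod, ← pow_succ,
            show Q - 1 + 1 = Q from by omega]
        have h5 : (a ^ (q - 1)) ^ Q * (B.eval (a ^ (q - 1))) ^ q * B.eval (b ^ (q - 1))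
              * (b ^ (q - 1))
            = (b ^ (q - 1)) ^ Q * (B.eval (b ^ (q - 1))) ^ q * B.eval (a ^ (q - 1))
              * (a ^ (q - 1)) := by
          linear_combination ((a ^ (q - 1)) * (b ^ (q - 1))) * h4
            - ((B.eval (a ^ (q - 1))) ^ q * B.eval (b ^ (q - 1)) * (b ^ (q - 1))) * hαr
            + ((B.eval (b ^ (q - 1))) ^ q * B.eval (a ^ (q - 1)) * (a ^ (q - 1))) * hβr
        -- stage 2 : substitute the Frobenius relation hR
        have hRa := hR a ha
        have hRb := hR b hb
        have T2 : ((a ^ (q - 1)) ^ (Q + 1) + (a ^ (q - 1)) ^ Q + a ^ (q - 1))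
              * (a ^ (q - 1)) ^ 2 * (B.eval (b ^ (q - 1))
              * ((b ^ (q - 1)) ^ 2 + b ^ (q - 1) + 1))
              * ((a ^ (q - 1)) ^ Q * (b ^ (q - 1)) ^ (Q + 2))
            = ((b ^ (q - 1)) ^ (Q + 1) + (b ^ (q - 1)) ^ Q + b ^ (q - 1))
              * (b ^ (q - 1)) ^ 2 * (B.eval (a ^ (q - 1))
              * ((a ^ (q - 1)) ^ 2 + a ^ (q - 1) + 1))
              * ((b ^ (q - 1)) ^ Q * (a ^ (q - 1)) ^ (Q + 2)) := by
          linear_combination (((a ^ (q - 1)) ^ 2 + a ^ (q - 1) + 1)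
              * ((b ^ (q - 1)) ^ 2 + b ^ (q - 1) + 1)
              * (a ^ (q - 1)) ^ (Q + 1) * (b ^ (q - 1)) ^ (Q + 1)) * h5
            - (B.eval (b ^ (q - 1)) * ((b ^ (q - 1)) ^ 2 + b ^ (q - 1) + 1)
              * (a ^ (q - 1)) ^ Q * (b ^ (q - 1)) ^ (Q + 2)) * hRa
            + (B.eval (a ^ (q - 1)) * ((a ^ (q - 1)) ^ 2 + a ^ (q - 1) + 1)
              * (b ^ (q - 1)) ^ Q * (a ^ (q - 1)) ^ (Q + 2)) * hRb
        -- stage 3 : substitute hBev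
        have h7 : (((a ^ (q - 1)) ^ (Q + 1) + (a ^ (q - 1)) ^ Q + a ^ (q - 1))
              * ((b ^ (q - 1)) ^ Q + b ^ (q - 1) + 1))
              * ((a ^ (q - 1)) ^ (Q + 2) * (b ^ (q - 1)) ^ (Q + 2))
            = (((b ^ (q - 1)) ^ (Q + 1) + (b ^ (q - 1)) ^ Q + b ^ (q - 1))
              * ((a ^ (q - 1)) ^ Q + a ^ (q - 1) + 1))
              * ((a ^ (q - 1)) ^ (Q + 2) * (b ^ (q - 1)) ^ (Q + 2)) := by
          linear_combination T2
            - (((a ^ (q - 1)) ^ (Q + 1) + (a ^ (q - 1)) ^ Q + a ^ (q - 1))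
              * (a ^ (q - 1)) ^ (Q + 2) * (b ^ (q - 1)) ^ (Q + 2)) * (hBev (b ^ (q - 1)))
            + (((b ^ (q - 1)) ^ (Q + 1) + (b ^ (q - 1)) ^ Q + b ^ (q - 1))
              * (a ^ (q - 1)) ^ (Q + 2) * (b ^ (q - 1)) ^ (Q + 2)) * (hBev (a ^ (q - 1)))
        have h6 := mul_right_cancel₀
          (mul_ne_zero (pow_ne_zero (Q + 2) (pow_ne_zero (q - 1) ha))
            (pow_ne_zero (Q + 2) (pow_ne_zero (q - 1) hb))) h7
        have haβ : a ^ (q - 1) = b ^ (q - 1) := key _ _ hα hβ h6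
        -- conclude a = b
        have har : a ^ r = b ^ r := by
          rw [← haβ] at hab
          exact mul_right_cancel₀ hBa0 hab
        have h1 : (a / b) ^ r = 1 := by
          rw [div_pow, har, div_self (pow_ne_zero _ hb)]
        have h2 : (a / b) ^ (q - 1) = 1 := by
          rw [div_pow, haβ, div_self (pow_ne_zero _ hb)]
        have := eq_one_of_pow_coprime' h1 h2 hrq
        exact (div_eq_one_iff_eq hb).mp this
  exact Finite.injective_iff_bijective.mp hinj
end
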